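/- Soundness and completeness of the Logic of Approximate Entailment on Products of Chains: for any theory T and any formula Φ of LAEPC, T proves Φ in the proof system of LAEPC if and only if T semantically entails Φ, i.e. every evaluation in every component-wise ordered similarity space that satisfies all members of T also satisfies Φ. -/

import Mathlib

/-- A finite t-norm: a finite subset `V` of the real unit interval containing `0` and `1`,
equipped with an associative, commutative, monotone operation with neutral element `1`. -/
structure FiniteTNorm where
  V : Set ℝ
  finite : V.Finite
  subset : V ⊆ Set.Icc (0 : ℝ) 1
  zero_mem : (0 : ℝ) ∈ V
  one_mem : (1 : ℝ) ∈ V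
  op : V → V → V
  op_assoc : ∀ a b c, op (op a b) c = op a (op b c)
  op_comm : ∀ a b, op a b = op b a
  op_one : ∀ a, op a ⟨1, one_mem⟩ = a
  op_mono : ∀ a b c d : V, (a : ℝ) ≤ (b : ℝ) → (c : ℝ) ≤ (d : ℝ) → (op a c : ℝ) ≤ (op b d : ℝ)

def FiniteTNorm.one (T : FiniteTNorm) : T.V := ⟨1, T.one_mem⟩

def FiniteTNorm.zero (T : FiniteTNorm) : T.V := ⟨0, T.zero_mem⟩

/-- A finite similarity space based on the finite t-norm `T`. -/
structure SimilaritySpace (T : FiniteTNorm) (W : Type) [Fintype W] [Nonempty W] where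
  S : W → W → T.V
  eq_one_iff : ∀ u v, S u v = T.one ↔ u = v
  symm : ∀ u v, S u v = S v u
  triangle : ∀ u v w, (T.op (S u v) (S v w) : ℝ) ≤ (S u w : ℝ)

/-- The `c`-neighbourhood `U_c(A)` of a set `A` of worlds. -/
def SimilaritySpace.nbhd {T : FiniteTNorm} {W : Type} [Fintype W] [Nonempty W]
    (sp : SimilaritySpace T W) (c : T.V) (A : Set W) : Set W :=
  {w | ∃ a ∈ A, (c : ℝ) ≤ (sp.S w a : ℝ)}

/-- A totally ordered similarity space: a finite similarity space together with a total
order compatible with the similarity. -/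
structure TOSimilaritySpace (T : FiniteTNorm) (W : Type) [Fintype W] [Nonempty W]
    [LinearOrder W] extends SimilaritySpace T W where
  compat : ∀ u v w : W, u ≤ v → v ≤ w → (S u w : ℝ) ≤ min (S u v : ℝ) (S v w : ℝ)

/-- The downward closure `◇≤ A`. -/
def dcl {W : Type} [LinearOrder W] (A : Set W) : Set W := {v | ∃ w ∈ A, v ≤ w}

/-- The upward closure `◇≥ A`. -/
def ucl {W : Type} [LinearOrder W] (A : Set W) : Set W := {v | ∃ w ∈ A, w ≤ v}

/-- The similarity on the product `W = ∏ i, W i` of totally ordered similarity spaces: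
`S(v,w) = min_i S_i(v_i, w_i)`. -/
noncomputable def prodS {T : FiniteTNorm} {M : ℕ} {W : Fin M → Type}
    [∀ i, Fintype (W i)] [∀ i, Nonempty (W i)] [∀ i, LinearOrder (W i)]
    (hM : 0 < M) (sps : ∀ i, TOSimilaritySpace T (W i))
    (v w : ∀ i, W i) : T.V :=
  haveI : Nonempty (Fin M) := ⟨⟨0, hM⟩⟩
  Finset.univ.inf' Finset.univ_nonempty fun i => (sps i).S (v i) (w i)

/-- The `c`-neighbourhood in a component-wise ordered similarity space. -/
def pNbhd {T : FiniteTNorm} {M : ℕ} {W : Fin M → Type}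
    [∀ i, Fintype (W i)] [∀ i, Nonempty (W i)] [∀ i, LinearOrder (W i)]
    (hM : 0 < M) (sps : ∀ i, TOSimilaritySpace T (W i))
    (c : T.V) (A : Set (∀ i, W i)) : Set (∀ i, W i) :=
  {w | ∃ a ∈ A, (c : ℝ) ≤ (prodS hM sps w a : ℝ)}

/-- `◇≤A` in a component-wise ordered similarity space. -/
def pDcl {M : ℕ} {W : Fin M → Type} [∀ i, LinearOrder (W i)]
    (A : Set (∀ i, W i)) : Set (∀ i, W i) :=
  {w | ∀ i, ∃ v ∈ A, w i ≤ v i}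

/-- `◇≥A` in a component-wise ordered similarity space. -/
def pUcl {M : ℕ} {W : Fin M → Type} [∀ i, LinearOrder (W i)]
    (A : Set (∀ i, W i)) : Set (∀ i, W i) :=
  {w | ∀ i, ∃ v ∈ A, v i ≤ w i}

/-- The cylindrical extension `πC` of a subset `C` of the `i`-th component. -/
def cyl {M : ℕ} {W : Fin M → Type} (i : Fin M) (C : Set (W i)) : Set (∀ j, W j) :=
  {w | w i ∈ C}

/-- The cylindrical extension `πA` of a subset `A` of the partial product over the
block of coordinates `I`. -/
def cylOn {M : ℕ} {W : Fin M → Type} (I : Finset (Fin M))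
    (A : Set (∀ i : {x // x ∈ I}, W i.1)) : Set (∀ i, W i) :=
  {w | (fun i : {x // x ∈ I} => w i.1) ∈ A}

/-! ## Syntax of the Logic of Approximate Entailment on Products of Chains `LAEPC` -/

/-- Basic expressions of `LAEPC`: for each sort `i : Fin M` there are `N i` sorted
variables, there are `K` unsorted variables, and expressions are built using the Boolean
operations and the two modal operators `◇≤` (`dle`) and `◇≥` (`dge`). -/
inductive PExp (M : ℕ) (N : Fin M → ℕ) (K : ℕ) : Type
  | svar (i : Fin M) (j : Fin (N i))
  | uvar (k : Fin K)
  | bot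
  | top
  | and (φ ψ : PExp M N K)
  | or (φ ψ : PExp M N K)
  | not (φ : PExp M N K)
  | dle (φ : PExp M N K)
  | dge (φ : PExp M N K)

/-- `φ.usesSort i` holds iff some variable of sort `i` occurs in `φ`. -/
def PExp.usesSort {M : ℕ} {N : Fin M → ℕ} {K : ℕ} (i : Fin M) : PExp M N K → Prop
  | .svar i' _ => i' = i
  | .uvar _ => False
  | .bot => False
  | .top => False
  | .and φ ψ => φ.usesSort i ∨ ψ.usesSort i
  | .or φ ψ => φ.usesSort i ∨ ψ.usesSort i
  | .not φ => φ.usesSort i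
  | .dle φ => φ.usesSort i
  | .dge φ => φ.usesSort i

/-- `φ.usesUnsorted` holds iff some unsorted variable occurs in `φ`. -/
def PExp.usesUnsorted {M : ℕ} {N : Fin M → ℕ} {K : ℕ} : PExp M N K → Prop
  | .svar _ _ => False
  | .uvar _ => True
  | .bot => False
  | .top => False
  | .and φ ψ => φ.usesUnsorted ∨ ψ.usesUnsorted
  | .or φ ψ => φ.usesUnsorted ∨ ψ.usesUnsorted
  | .not φ => φ.usesUnsorted
  | .dle φ => φ.usesUnsorted
  | .dge φ => φ.usesUnsorted

/-- `φ` belongs to sort `i` (is one-sorted of sort `i`): all its variables are sorted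
variables of sort `i`. -/
def BelongsTo {M : ℕ} {N : Fin M → ℕ} {K : ℕ} (i : Fin M) (φ : PExp M N K) : Prop :=
  ¬φ.usesUnsorted ∧ ∀ i', φ.usesSort i' → i' = i

/-- `φ` and `ψ` are disjoint-sorted: all their variables are sorted and no sort occurs in
both. -/
def DisjointSorted {M : ℕ} {N : Fin M → ℕ} {K : ℕ} (φ ψ : PExp M N K) : Prop :=
  ¬φ.usesUnsorted ∧ ¬ψ.usesUnsorted ∧ ∀ i, ¬(φ.usesSort i ∧ ψ.usesSort i)

/-- The literal on the sorted variable `p`, positive or negated according to `b`. -/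
def PExp.sliteral {M : ℕ} {N : Fin M → ℕ} {K : ℕ}
    (p : (i : Fin M) × Fin (N i)) (b : Bool) : PExp M N K :=
  if b then PExp.svar p.1 p.2 else PExp.not (PExp.svar p.1 p.2)

/-- The conjunction of a list of basic expressions. -/
def conjListP {M : ℕ} {N : Fin M → ℕ} {K : ℕ} : List (PExp M N K) → PExp M N K
  | [] => PExp.top
  | [φ] => φ
  | φ :: χ :: rest => PExp.and φ (conjListP (χ :: rest))

/-- A m.e.c.: a conjunction of literals in which each sorted variable occurs exactly
once. -/
def IsMecP {M : ℕ} {N : Fin M → ℕ} {K : ℕ} (φ : PExp M N K) : Prop :=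
  ∃ (l : List ((i : Fin M) × Fin (N i))) (f : (i : Fin M) × Fin (N i) → Bool),
    l.Nodup ∧ (∀ p, p ∈ l) ∧ φ = conjListP (l.map fun p => PExp.sliteral p (f p))

/-- A one-sorted m.e.c.: a conjunction of literals in which each variable of one sort `i`
occurs exactly once. -/
def IsOneSortedMecP {M : ℕ} {N : Fin M → ℕ} {K : ℕ} (φ : PExp M N K) : Prop :=
  ∃ (i : Fin M) (l : List (Fin (N i))) (f : Fin (N i) → Bool),
    l.Nodup ∧ (∀ j, j ∈ l) ∧
      φ = conjListP (l.map fun j => PExp.sliteral ⟨i, j⟩ (f j))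

/-- A diamond expression: a basic expression of the form `◇≤φ` or `◇≥φ`. -/
def IsDiamondP {M : ℕ} {N : Fin M → ℕ} {K : ℕ} : PExp M N K → Prop
  | .dle _ => True
  | .dge _ => True
  | _ => False

/-- A conjunction of diamond expressions. -/
def IsDiamondConjP {M : ℕ} {N : Fin M → ℕ} {K : ℕ} (ρ : PExp M N K) : Prop :=
  ∃ l : List (PExp M N K), l ≠ [] ∧ (∀ χ ∈ l, IsDiamondP χ) ∧ ρ = conjListP l

/-- Formulas of classical propositional logic over countably many variables. -/
inductive PropForm : Type
  | var (n : ℕ)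
  | bot
  | top
  | and (φ ψ : PropForm)
  | or (φ ψ : PropForm)
  | not (φ : PropForm)

/-- Boolean evaluation of a classical propositional formula. -/
def PropForm.beval (v : ℕ → Bool) : PropForm → Bool
  | .var n => v n
  | .bot => false
  | .top => true
  | .and φ ψ => φ.beval v && ψ.beval v
  | .or φ ψ => φ.beval v || ψ.beval v
  | .not φ => !φ.beval v

/-- Uniform replacement of the variables of a classical propositional formula by basic
expressions of `LAEPC`. -/
def PropForm.substP {M : ℕ} {N : Fin M → ℕ} {K : ℕ} (σ : ℕ → PExp M N K) :
    PropForm → PExp M N K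
  | .var n => σ n
  | .bot => .bot
  | .top => .top
  | .and φ ψ => .and (φ.substP σ) (ψ.substP σ)
  | .or φ ψ => .or (φ.substP σ) (ψ.substP σ)
  | .not φ => .not (φ.substP σ)

/-- Formulas: Boolean combinations of graded implications `φ ⤳_c ψ`. -/
inductive PFml (M : ℕ) (N : Fin M → ℕ) (K : ℕ) (V : Type) : Type
  | gi (φ : PExp M N K) (c : V) (ψ : PExp M N K)
  | and (Φ Ψ : PFml M N K V)
  | or (Φ Ψ : PFml M N K V)
  | not (Φ : PFml M N K V)

/-- The (definable) outer-level implication `Φ → Ψ := ¬Φ ∨ Ψ`. -/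
def PFml.imp {M : ℕ} {N : Fin M → ℕ} {K : ℕ} {V : Type} (Φ Ψ : PFml M N K V) :
    PFml M N K V :=
  PFml.or (PFml.not Φ) Ψ

/-- The (definable) outer-level equivalence `Φ ↔ Ψ`. -/
def PFml.iff {M : ℕ} {N : Fin M → ℕ} {K : ℕ} {V : Type} (Φ Ψ : PFml M N K V) :
    PFml M N K V :=
  PFml.and (Φ.imp Ψ) (Ψ.imp Φ)

/-- Boolean evaluation of a formula given truth values for the graded implications
occurring in it. -/
def PFml.peval {M : ℕ} {N : Fin M → ℕ} {K : ℕ} {V : Type}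
    (g : PExp M N K → V → PExp M N K → Bool) : PFml M N K V → Bool
  | .gi φ c ψ => g φ c ψ
  | .and Φ Ψ => Φ.peval g && Ψ.peval g
  | .or Φ Ψ => Φ.peval g || Ψ.peval g
  | .not Φ => !Φ.peval g

/-! ## The proof system of `LAEPC` -/

/-- Provability in `LAEPC` from a theory `Th`: axioms (A1'), (A2)–(A11), (A12)–(A14),
(A17), (A19) unrestricted, (A15), (A16), (A18) in their sort-restricted forms, and
(A20)–(A22), with modus ponens as the only rule. -/
inductive LAEPCProv {M : ℕ} {N : Fin M → ℕ} {K : ℕ} (T : FiniteTNorm)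
    (Th : Set (PFml M N K T.V)) : PFml M N K T.V → Prop
  | hyp {Φ} (h : Φ ∈ Th) : LAEPCProv T Th Φ
  | mp {Φ Ψ} (h₁ : LAEPCProv T Th Φ) (h₂ : LAEPCProv T Th (Φ.imp Ψ)) : LAEPCProv T Th Ψ
  | a1' {φ ψ : PExp M N K}
      (h : ∃ (φ' ψ' : PropForm) (σ : ℕ → PExp M N K),
        (∀ v, φ'.beval v = true → ψ'.beval v = true) ∧
          φ = φ'.substP σ ∧ ψ = ψ'.substP σ) :
      LAEPCProv T Th (.gi φ T.one ψ)
  | a2 (φ ψ : PExp M N K) :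
      LAEPCProv T Th ((PFml.gi φ T.one ψ).imp (.gi (φ.and ψ.not) T.one .bot))
  | a3 (φ ψ : PExp M N K) {c d : T.V} (h : (d : ℝ) ≤ (c : ℝ)) :
      LAEPCProv T Th ((PFml.gi φ c ψ).imp (.gi φ d ψ))
  | a4 (φ ψ : PExp M N K) :
      LAEPCProv T Th ((PFml.not (.gi ψ T.one .bot)).imp (.gi φ T.zero ψ))
  | a5 (φ : PExp M N K) (c : T.V) :
      LAEPCProv T Th ((PFml.gi φ c .bot).imp (.gi φ T.one .bot))
  | a6 {δ ε : PExp M N K} (c : T.V) (hδ : IsMecP δ) (hε : IsMecP ε) :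
      LAEPCProv T Th
        ((PFml.and (.not (.gi δ T.one .bot)) (.gi δ c ε)).imp (.gi ε c δ))
  | a7 (φ ψ χ : PExp M N K) (c : T.V) :
      LAEPCProv T Th ((PFml.and (.gi φ c χ) (.gi ψ c χ)).imp (.gi (φ.or ψ) c χ))
  | a8 {ε : PExp M N K} (φ ψ : PExp M N K) (c : T.V) (hε : IsMecP ε) :
      LAEPCProv T Th ((PFml.gi ε c (φ.or ψ)).imp (.or (.gi ε c φ) (.gi ε c ψ)))
  | a9 (φ ψ χ : PExp M N K) (c d : T.V) :
      LAEPCProv T Th ((PFml.and (.gi φ c ψ) (.gi ψ d χ)).imp (.gi φ (T.op c d) χ))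
  | a10 : LAEPCProv T Th (PFml.not (.gi .top T.one .bot))
  | a11 {Φ : PFml M N K T.V}
      (h : ∀ g : PExp M N K → T.V → PExp M N K → Bool, Φ.peval g = true) :
      LAEPCProv T Th Φ
  | a12a (φ : PExp M N K) : LAEPCProv T Th (.gi φ T.one φ.dle)
  | a12b (φ : PExp M N K) : LAEPCProv T Th (.gi φ T.one φ.dge)
  | a13a (φ : PExp M N K) : LAEPCProv T Th (.gi φ.dle.dle T.one φ.dle)
  | a13b (φ : PExp M N K) : LAEPCProv T Th (.gi φ.dge.dge T.one φ.dge)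
  | a14a : LAEPCProv T Th (.gi (PExp.bot.dle) T.one .bot)
  | a14b : LAEPCProv T Th (.gi (PExp.bot.dge) T.one .bot)
  | a15a {φ ψ : PExp M N K} (hs : ∃ i, BelongsTo i φ ∧ BelongsTo i ψ) :
      LAEPCProv T Th (.or (.gi φ.dle T.one ψ.dle) (.gi ψ.dle T.one φ.dle))
  | a15b {φ ψ : PExp M N K} (hs : ∃ i, BelongsTo i φ ∧ BelongsTo i ψ) :
      LAEPCProv T Th (.or (.gi φ.dge T.one ψ.dge) (.gi ψ.dge T.one φ.dge))
  | a16 {ε : PExp M N K} (hε : IsOneSortedMecP ε) :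
      LAEPCProv T Th (.gi (ε.dle.and ε.dge) T.one ε)
  | a17a (φ ψ : PExp M N K) (c : T.V) :
      LAEPCProv T Th ((PFml.gi φ c ψ).imp (.gi φ.dle c ψ.dle))
  | a17b (φ ψ : PExp M N K) (c : T.V) :
      LAEPCProv T Th ((PFml.gi φ c ψ).imp (.gi φ.dge c ψ.dge))
  | a18a {φ : PExp M N K} (ψ : PExp M N K) (hs : ∃ i, BelongsTo i φ) :
      LAEPCProv T Th
        ((PFml.gi (φ.and ψ.dle) T.one .bot).imp (.gi (φ.dge.and ψ.dle) T.one .bot))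
  | a18b {φ : PExp M N K} (ψ : PExp M N K) (hs : ∃ i, BelongsTo i φ) :
      LAEPCProv T Th
        ((PFml.gi (φ.and ψ.dge) T.one .bot).imp (.gi (φ.dle.and ψ.dge) T.one .bot))
  | a19 {ρ σ : PExp M N K} (φ : PExp M N K) (c : T.V)
      (hρ : IsDiamondConjP ρ) (hσ : IsDiamondConjP σ) :
      LAEPCProv T Th
        ((PFml.and (.and (.not (.gi (ρ.and σ) T.one .bot)) (.gi φ c ρ)) (.gi φ c σ)).imp
          (.gi φ c (ρ.and σ)))
  | a20 {φ ψ φ' ψ' : PExp M N K} (c : T.V) (hd : DisjointSorted (φ.and ψ) (φ'.and ψ')) :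
      LAEPCProv T Th
        ((PFml.not (.gi (φ.and φ') T.one .bot)).imp
          ((PFml.and (.gi φ c ψ) (.gi φ' c ψ')).iff (.gi (φ.and φ') c (ψ.and ψ'))))
  | a21a {χ ψ : PExp M N K} (φ : PExp M N K) (hd : DisjointSorted χ ψ) :
      LAEPCProv T Th
        ((PFml.gi ((φ.dge.and χ).and ψ) T.one .bot).imp
          (.or (.gi (φ.dge.and χ) T.one .bot) (.gi (φ.dge.and ψ) T.one .bot)))
  | a21b {χ ψ : PExp M N K} (φ : PExp M N K) (hd : DisjointSorted χ ψ) :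
      LAEPCProv T Th
        ((PFml.gi ((φ.dle.and χ).and ψ) T.one .bot).imp
          (.or (.gi (φ.dle.and χ) T.one .bot) (.gi (φ.dle.and ψ) T.one .bot)))
  | a22 {ε : PExp M N K} (k : Fin K) (hε : IsMecP ε) :
      LAEPCProv T Th (.or (.gi ε T.one (.uvar k)) (.gi ε T.one (.not (.uvar k))))

/-! ## Semantics of `LAEPC` -/

/-- An evaluation of the basic expressions of `LAEPC` in a component-wise ordered
similarity space: it commutes with the Boolean operations, interprets `◇≤` and `◇≥` by
the product diamonds, interprets each sorted variable of sort `i` by a cylindrical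
extension of a subset of `W i`, interprets each unsorted variable by a union of
intersections of the interpretations of sorted variables and their complements, and
separates any two distinct worlds by some variable. -/
structure LAEPCEval (M : ℕ) (N : Fin M → ℕ) (K : ℕ) (W : Fin M → Type)
    [∀ i, Fintype (W i)] [∀ i, Nonempty (W i)] [∀ i, LinearOrder (W i)] where
  e : PExp M N K → Set (∀ i, W i)
  map_bot : e .bot = ∅
  map_top : e .top = Set.univ
  map_and : ∀ φ ψ, e (φ.and ψ) = e φ ∩ e ψ
  map_or : ∀ φ ψ, e (φ.or ψ) = e φ ∪ e ψ
  map_not : ∀ φ, e φ.not = (e φ)ᶜ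
  map_dle : ∀ φ, e φ.dle = pDcl (e φ)
  map_dge : ∀ φ, e φ.dge = pUcl (e φ)
  svar_cyl : ∀ (i : Fin M) (j : Fin (N i)), ∃ A : Set (W i), e (.svar i j) = cyl i A
  uvar_alg : ∀ k : Fin K, ∃ G : Set ((i : Fin M) × Fin (N i) → Bool),
    e (.uvar k) = ⋃ g ∈ G, ⋂ p : (i : Fin M) × Fin (N i),
      (if g p then e (.svar p.1 p.2) else (e (.svar p.1 p.2))ᶜ)
  separating : ∀ v w : ∀ i, W i, v ≠ w →
    (∃ (i : Fin M) (j : Fin (N i)), Xor' (v ∈ e (.svar i j)) (w ∈ e (.svar i j))) ∨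
    (∃ k : Fin K, Xor' (v ∈ e (.uvar k)) (w ∈ e (.uvar k)))

/-- Satisfaction of a formula of `LAEPC` by an evaluation in a component-wise ordered
similarity space. -/
def LAEPCSat {T : FiniteTNorm} {M : ℕ} {N : Fin M → ℕ} {K : ℕ} {W : Fin M → Type}
    [∀ i, Fintype (W i)] [∀ i, Nonempty (W i)] [∀ i, LinearOrder (W i)]
    (hM : 0 < M) (sps : ∀ i, TOSimilaritySpace T (W i)) (ev : LAEPCEval M N K W) :
    PFml M N K T.V → Prop
  | .gi φ c ψ => ev.e φ ⊆ pNbhd hM sps c (ev.e ψ)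
  | .and Φ Ψ => LAEPCSat hM sps ev Φ ∧ LAEPCSat hM sps ev Ψ
  | .or Φ Ψ => LAEPCSat hM sps ev Φ ∨ LAEPCSat hM sps ev Ψ
  | .not Φ => ¬ LAEPCSat hM sps ev Φ

/-- Semantic entailment in `LAEPC`: every evaluation in every component-wise ordered
similarity space that satisfies all members of the theory also satisfies the formula. -/
def LAEPCEntails {M : ℕ} {N : Fin M → ℕ} {K : ℕ} (hM : 0 < M) (T : FiniteTNorm)
    (Th : Set (PFml M N K T.V)) (Φ : PFml M N K T.V) : Prop :=
  ∀ (W : Fin M → Type) [∀ i, Fintype (W i)] [∀ i, Nonempty (W i)]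
    [∀ i, LinearOrder (W i)],
    ∀ (sps : ∀ i, TOSimilaritySpace T (W i)) (ev : LAEPCEval M N K W),
      (∀ Ψ ∈ Th, LAEPCSat hM sps ev Ψ) → LAEPCSat hM sps ev Φ


/-! ## Auxiliary development for the proof -/

namespace LAEPCAux

open PExp PFml

variable {M : ℕ} {N : Fin M → ℕ} {K : ℕ}

noncomputable local instance : DecidableEq (PExp M N K) := Classical.decEq _

/-- Boolean evaluation of the Boolean skeleton of a basic expression, where variables
and diamond expressions count as atoms. -/
def evalB (v : PExp M N K → Bool) : PExp M N K → Bool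
  | .bot => false
  | .top => true
  | .and φ ψ => evalB v φ && evalB v ψ
  | .or φ ψ => evalB v φ || evalB v ψ
  | .not φ => !evalB v φ
  | .svar i j => v (.svar i j)
  | .uvar k => v (.uvar k)
  | .dle φ => v (.dle φ)
  | .dge φ => v (.dge φ)

/-- The atoms of the Boolean skeleton. -/
def atomsB : PExp M N K → List (PExp M N K)
  | .bot => []
  | .top => []
  | .and φ ψ => atomsB φ ++ atomsB ψ
  | .or φ ψ => atomsB φ ++ atomsB ψ
  | .not φ => atomsB φ
  | .svar i j => [.svar i j]
  | .uvar k => [.uvar k]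
  | .dle φ => [.dle φ]
  | .dge φ => [.dge φ]

/-- Abstraction of the Boolean skeleton into a classical propositional formula. -/
noncomputable def absB (L : List (PExp M N K)) : PExp M N K → PropForm
  | .bot => .bot
  | .top => .top
  | .and φ ψ => .and (absB L φ) (absB L ψ)
  | .or φ ψ => .or (absB L φ) (absB L ψ)
  | .not φ => .not (absB L φ)
  | .svar i j => .var (L.idxOf (.svar i j))
  | .uvar k => .var (L.idxOf (.uvar k))
  | .dle φ => .var (L.idxOf (.dle φ))
  | .dge φ => .var (L.idxOf (.dge φ))

lemma getD_indexOf {L : List (PExp M N K)} {a : PExp M N K} (h : a ∈ L) :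
    L.getD (L.idxOf a) .bot = a := by
  rw [List.getD_eq_getElem _ _ (List.idxOf_lt_length_iff.2 h)]
  exact List.getElem_idxOf _

lemma substP_absB {L : List (PExp M N K)} :
    ∀ {φ : PExp M N K}, atomsB φ ⊆ L →
      (absB L φ).substP (fun n => L.getD n .bot) = φ := by
  intro φ
  induction φ with
  | bot => intro _; rfl
  | top => intro _; rfl
  | and φ ψ ihφ ihψ =>
      intro h
      have h1 : atomsB φ ⊆ L := fun x hx => h (by simp [atomsB, hx])
      have h2 : atomsB ψ ⊆ L := fun x hx => h (by simp [atomsB, hx])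
      simp only [absB, PropForm.substP, ihφ h1, ihψ h2]
  | or φ ψ ihφ ihψ =>
      intro h
      have h1 : atomsB φ ⊆ L := fun x hx => h (by simp [atomsB, hx])
      have h2 : atomsB ψ ⊆ L := fun x hx => h (by simp [atomsB, hx])
      simp only [absB, PropForm.substP, ihφ h1, ihψ h2]
  | not φ ihφ =>
      intro h
      have h1 : atomsB φ ⊆ L := fun x hx => h (by simpa [atomsB] using hx)
      simp only [absB, PropForm.substP, ihφ h1]
  | svar i j => intro h; exact getD_indexOf (h (by simp [atomsB]))
  | uvar k => intro h; exact getD_indexOf (h (by simp [atomsB]))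
  | dle φ _ => intro h; exact getD_indexOf (h (by simp [atomsB]))
  | dge φ _ => intro h; exact getD_indexOf (h (by simp [atomsB]))

lemma beval_absB {L : List (PExp M N K)} (v : ℕ → Bool) :
    ∀ φ : PExp M N K, (absB L φ).beval v = evalB (fun a => v (L.idxOf a)) φ := by
  intro φ
  induction φ with
  | bot => rfl
  | top => rfl
  | and φ ψ ihφ ihψ => simp only [absB, PropForm.beval, evalB, ihφ, ihψ]
  | or φ ψ ihφ ihψ => simp only [absB, PropForm.beval, evalB, ihφ, ihψ]
  | not φ ihφ => simp only [absB, PropForm.beval, evalB, ihφ]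
  | svar i j => rfl
  | uvar k => rfl
  | dle φ _ => rfl
  | dge φ _ => rfl

variable {T : FiniteTNorm} {Th : Set (PFml M N K T.V)}

/-- The master instance of (A1'): Boolean-skeleton tautological implications are
provable with grade 1. -/
theorem taut1 {φ ψ : PExp M N K}
    (h : ∀ v : PExp M N K → Bool, evalB v φ = true → evalB v ψ = true) :
    LAEPCProv T Th (.gi φ T.one ψ) := by
  classical
  refine LAEPCProv.a1' ⟨absB (atomsB φ ++ atomsB ψ) φ, absB (atomsB φ ++ atomsB ψ) ψ,
    fun n => (atomsB φ ++ atomsB ψ).getD n .bot, ?_, ?_, ?_⟩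
  · intro v hv
    rw [beval_absB] at hv ⊢
    exact h _ hv
  · exact (substP_absB (by simp [List.subset_append_left])).symm
  · exact (substP_absB (by simp [List.subset_append_right])).symm

/-! ### Outer propositional reasoning -/

lemma peval_imp (g : PExp M N K → T.V → PExp M N K → Bool) (Φ Ψ : PFml M N K T.V) :
    (Φ.imp Ψ).peval g = (!Φ.peval g || Ψ.peval g) := rfl

theorem pl1 {Φ Ψ : PFml M N K T.V}
    (h : ∀ g, Φ.peval g = true → Ψ.peval g = true)
    (h1 : LAEPCProv T Th Φ) : LAEPCProv T Th Ψ := by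
  refine h1.mp (LAEPCProv.a11 fun g => ?_)
  rw [peval_imp]
  cases hΦ : Φ.peval g
  · rfl
  · simp [h g hΦ]

theorem pl2 {Φ₁ Φ₂ Ψ : PFml M N K T.V}
    (h : ∀ g, Φ₁.peval g = true → Φ₂.peval g = true → Ψ.peval g = true)
    (h1 : LAEPCProv T Th Φ₁) (h2 : LAEPCProv T Th Φ₂) : LAEPCProv T Th Ψ := by
  refine h2.mp (pl1 (Ψ := Φ₂.imp Ψ) (fun g hg => ?_) h1)
  rw [peval_imp]
  cases hΦ : Φ₂.peval g
  · rfl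
  · simp [h g hg hΦ]

theorem pl3 {Φ₁ Φ₂ Φ₃ Ψ : PFml M N K T.V}
    (h : ∀ g, Φ₁.peval g = true → Φ₂.peval g = true → Φ₃.peval g = true →
      Ψ.peval g = true)
    (h1 : LAEPCProv T Th Φ₁) (h2 : LAEPCProv T Th Φ₂) (h3 : LAEPCProv T Th Φ₃) :
    LAEPCProv T Th Ψ := by
  refine h3.mp (pl2 (Ψ := Φ₃.imp Ψ) (fun g hg1 hg2 => ?_) h1 h2)
  rw [peval_imp]
  cases hΦ : Φ₃.peval g
  · rfl
  · simp [h g hg1 hg2 hΦ]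

theorem pand {Φ Ψ : PFml M N K T.V} (h1 : LAEPCProv T Th Φ) (h2 : LAEPCProv T Th Ψ) :
    LAEPCProv T Th (Φ.and Ψ) :=
  pl2 (fun g p1 p2 => by simp [PFml.peval, p1, p2]) h1 h2

/-! ### Basic facts about the t-norm -/

lemma op_one_left (c : T.V) : T.op T.one c = c := by
  rw [T.op_comm]; exact T.op_one c

lemma vle_one (c : T.V) : (c : ℝ) ≤ ((T.one : T.V) : ℝ) := (T.subset c.2).2

lemma vzero_le (c : T.V) : ((T.zero : T.V) : ℝ) ≤ (c : ℝ) := (T.subset c.2).1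

/-! ### Derived rules about graded implications -/

theorem grefl (φ : PExp M N K) : LAEPCProv T Th (.gi φ T.one φ) :=
  taut1 fun _ h => h

theorem gtaut {φ ψ : PExp M N K}
    (h : ∀ v : PExp M N K → Bool, evalB v φ = true → evalB v ψ = true) :
    LAEPCProv T Th (.gi φ T.one ψ) := taut1 h

theorem gtrans1c {φ ψ χ : PExp M N K} {c : T.V}
    (h1 : LAEPCProv T Th (.gi φ T.one ψ)) (h2 : LAEPCProv T Th (.gi ψ c χ)) :
    LAEPCProv T Th (.gi φ c χ) := by
  have := LAEPCProv.a9 (T := T) (Th := Th) φ ψ χ T.one c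
  rw [op_one_left] at this
  exact (pand h1 h2).mp this

theorem gtransc1 {φ ψ χ : PExp M N K} {c : T.V}
    (h1 : LAEPCProv T Th (.gi φ c ψ)) (h2 : LAEPCProv T Th (.gi ψ T.one χ)) :
    LAEPCProv T Th (.gi φ c χ) := by
  have := LAEPCProv.a9 (T := T) (Th := Th) φ ψ χ c T.one
  have hco : T.op c T.one = c := T.op_one c
  rw [hco] at this
  exact (pand h1 h2).mp this

theorem gtrans11 {φ ψ χ : PExp M N K}
    (h1 : LAEPCProv T Th (.gi φ T.one ψ)) (h2 : LAEPCProv T Th (.gi ψ T.one χ)) :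
    LAEPCProv T Th (.gi φ T.one χ) := gtrans1c h1 h2

theorem gweak {φ ψ : PExp M N K} {c d : T.V} (hdc : (d : ℝ) ≤ (c : ℝ))
    (h : LAEPCProv T Th (.gi φ c ψ)) : LAEPCProv T Th (.gi φ d ψ)  :=
  h.mp (LAEPCProv.a3 φ ψ hdc)

theorem gorelim {φ ψ χ : PExp M N K} {c : T.V}
    (h1 : LAEPCProv T Th (.gi φ c χ)) (h2 : LAEPCProv T Th (.gi ψ c χ)) :
    LAEPCProv T Th (.gi (φ.or ψ) c χ) :=
  (pand h1 h2).mp (LAEPCProv.a7 φ ψ χ c)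

theorem gbotelim {φ ψ : PExp M N K} {c : T.V} (h : LAEPCProv T Th (.gi φ T.one .bot)) :
    LAEPCProv T Th (.gi φ c ψ) :=
  gweak (vle_one c) (gtrans11 h (gtaut fun v hv => by simp [evalB] at hv))

theorem gconj1 {φ ψ χ : PExp M N K}
    (h1 : LAEPCProv T Th (.gi φ T.one ψ)) (h2 : LAEPCProv T Th (.gi φ T.one χ)) :
    LAEPCProv T Th (.gi φ T.one (ψ.and χ)) := by
  have s1 : LAEPCProv T Th (.gi (φ.and ψ.not) T.one .bot) := h1.mp (LAEPCProv.a2 φ ψ)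
  have s2 : LAEPCProv T Th (.gi (φ.and χ.not) T.one .bot) := h2.mp (LAEPCProv.a2 φ χ)
  have s3 := gorelim s1 s2
  have s4 : LAEPCProv T Th (.gi (φ.and (ψ.and χ).not) T.one
      ((φ.and ψ.not).or (φ.and χ.not))) := gtaut fun v => by
    simp only [evalB]
    cases evalB v φ <;> cases evalB v ψ <;> cases evalB v χ <;> simp
  have s5 := gtrans11 s4 s3
  have s6 : LAEPCProv T Th (.gi φ T.one ((φ.and (ψ.and χ)).or (φ.and (ψ.and χ).not))) :=
    gtaut fun v => by
      simp only [evalB]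
      cases evalB v φ <;> cases evalB v ψ <;> cases evalB v χ <;> simp
  have s7 : LAEPCProv T Th (.gi (φ.and (ψ.and χ)) T.one (ψ.and χ)) :=
    gtaut fun v => by
      simp only [evalB]
      cases evalB v φ <;> cases evalB v ψ <;> cases evalB v χ <;> simp
  have s8 : LAEPCProv T Th (.gi (φ.and (ψ.and χ).not) T.one (ψ.and χ)) :=
    gtrans11 s5 (gtaut fun v hv => by simp [evalB] at hv)
  exact gtrans11 s6 (gorelim s7 s8)

theorem gnegintro {φ ψ : PExp M N K}
    (h : LAEPCProv T Th (.gi (φ.and ψ) T.one .bot)) :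
    LAEPCProv T Th (.gi φ T.one ψ.not) := by
  have s6 : LAEPCProv T Th (.gi φ T.one ((φ.and ψ).or (φ.and ψ.not))) :=
    gtaut fun v => by
      simp only [evalB]
      cases evalB v φ <;> cases evalB v ψ <;> simp
  have s7 : LAEPCProv T Th (.gi (φ.and ψ) T.one ψ.not) :=
    gtrans11 h (gtaut fun v hv => by simp [evalB] at hv)
  have s8 : LAEPCProv T Th (.gi (φ.and ψ.not) T.one ψ.not) :=
    gtaut fun v => by
      simp only [evalB]
      cases evalB v φ <;> cases evalB v ψ <;> simp
  exact gtrans11 s6 (gorelim s7 s8)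

theorem gincons {φ ψ : PExp M N K}
    (h : LAEPCProv T Th (.gi φ T.one ψ.not)) :
    LAEPCProv T Th (.gi (φ.and ψ) T.one .bot) := by
  have s1 : LAEPCProv T Th (.gi (φ.and ψ.not.not) T.one .bot) := h.mp (LAEPCProv.a2 _ _)
  refine gtrans11 ?_ s1
  exact gtaut fun v => by
    simp only [evalB]
    cases evalB v φ <;> cases evalB v ψ <;> simp

theorem gcontra {φ ψ : PExp M N K}
    (h : LAEPCProv T Th (.gi φ T.one ψ)) :
    LAEPCProv T Th (.gi ψ.not T.one φ.not) := by
  have s1 : LAEPCProv T Th (.gi (φ.and ψ.not) T.one .bot) := h.mp (LAEPCProv.a2 φ ψ)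
  have s2 : LAEPCProv T Th (.gi (ψ.not.and φ) T.one .bot) :=
    gtrans11 (gtaut fun v => by
      simp only [evalB]
      cases evalB v φ <;> cases evalB v ψ <;> simp) s1
  exact gnegintro s2

/-! ### Lists of conjunctions and disjunctions -/

def disjListP : List (PExp M N K) → PExp M N K
  | [] => .bot
  | [φ] => φ
  | φ :: χ :: rest => .or φ (disjListP (χ :: rest))

lemma conjListP_cons (φ : PExp M N K) {l : List (PExp M N K)} (h : l ≠ []) :
    conjListP (φ :: l) = .and φ (conjListP l) := by
  cases l with
  | nil => exact absurd rfl h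
  | cons a r => rfl

lemma disjListP_cons (φ : PExp M N K) {l : List (PExp M N K)} (h : l ≠ []) :
    disjListP (φ :: l) = .or φ (disjListP l) := by
  cases l with
  | nil => exact absurd rfl h
  | cons a r => rfl

lemma evalB_conjListP (v : PExp M N K → Bool) :
    ∀ l : List (PExp M N K), evalB v (conjListP l) = l.all (evalB v) := by
  intro l
  induction l with
  | nil => rfl
  | cons φ r ih =>
      cases r with
      | nil => simp [conjListP, List.all]
      | cons b s => rw [conjListP_cons _ (by simp)]; simp [evalB, ih]

lemma evalB_disjListP (v : PExp M N K → Bool) :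
    ∀ l : List (PExp M N K), evalB v (disjListP l) = l.any (evalB v) := by
  intro l
  induction l with
  | nil => rfl
  | cons φ r ih =>
      cases r with
      | nil => simp [disjListP, List.any]
      | cons b s => rw [disjListP_cons _ (by simp)]; simp [evalB, ih]

theorem gconj_mem {l : List (PExp M N K)} {φ : PExp M N K} (h : φ ∈ l) :
    LAEPCProv T Th (.gi (conjListP l) T.one φ) := by
  refine gtaut fun v hv => ?_
  rw [evalB_conjListP] at hv
  exact List.all_eq_true.1 hv φ h

theorem gconj_intro_list {l : List (PExp M N K)} {ψ : PExp M N K}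
    (h : ∀ φ ∈ l, LAEPCProv T Th (.gi ψ T.one φ)) :
    LAEPCProv T Th (.gi ψ T.one (conjListP l)) := by
  induction l with
  | nil => exact gtaut fun v _ => rfl
  | cons φ r ih =>
      cases r with
      | nil => exact h φ (by simp)
      | cons b s =>
          rw [conjListP_cons _ (by simp)]
          exact gconj1 (h φ (by simp)) (ih fun χ hχ => h χ (by simp [hχ]))

theorem gdisj_mem {l : List (PExp M N K)} {φ : PExp M N K} (h : φ ∈ l) :
    LAEPCProv T Th (.gi φ T.one (disjListP l)) := by
  refine gtaut fun v hv => ?_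
  rw [evalB_disjListP]
  exact List.any_eq_true.2 ⟨φ, h, hv⟩

theorem gdisj_elim_list {l : List (PExp M N K)} {χ : PExp M N K} {c : T.V}
    (h : ∀ φ ∈ l, LAEPCProv T Th (.gi φ c χ)) :
    LAEPCProv T Th (.gi (disjListP l) c χ) := by
  induction l with
  | nil => exact gbotelim (grefl _)
  | cons φ r ih =>
      cases r with
      | nil => exact h φ (by simp)
      | cons b s =>
          rw [disjListP_cons _ (by simp)]
          exact gorelim (h φ (by simp)) (ih fun ψ hψ => h ψ (by simp [hψ]))

end LAEPCAux

namespace LAEPCAux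

open PExp PFml

variable {M : ℕ} {N : Fin M → ℕ} {K : ℕ}

/-! ### M.e.c. infrastructure -/

/-- The list of all sorted variables. -/
noncomputable def allPairs (M : ℕ) (N : Fin M → ℕ) : List ((i : Fin M) × Fin (N i)) :=
  (Finset.univ : Finset ((i : Fin M) × Fin (N i))).toList

lemma mem_allPairs (p : (i : Fin M) × Fin (N i)) : p ∈ allPairs M N := by
  simp [allPairs, Finset.mem_toList]

lemma nodup_allPairs : (allPairs M N).Nodup := Finset.nodup_toList _

/-- The list of all variables of sort `i`. -/
noncomputable def sortList (N : Fin M → ℕ) (i : Fin M) : List (Fin (N i)) :=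
  (Finset.univ : Finset (Fin (N i))).toList

lemma mem_sortList {i : Fin M} (j : Fin (N i)) : j ∈ sortList N i := by
  simp [sortList, Finset.mem_toList]

/-- A pattern: a truth-value assignment to all sorted variables. -/
abbrev Patt (M : ℕ) (N : Fin M → ℕ) := ((i : Fin M) × Fin (N i)) → Bool

/-- The m.e.c. with pattern `g`. -/
noncomputable def mecOf (K : ℕ) (g : Patt M N) : PExp M N K :=
  conjListP ((allPairs M N).map fun p => PExp.sliteral p (g p))

lemma isMecP_mecOf (g : Patt M N) : IsMecP (mecOf K g) :=
  ⟨allPairs M N, g, nodup_allPairs, mem_allPairs, rfl⟩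

/-- The one-sorted m.e.c. of sort `i` with pattern `f`. -/
noncomputable def osMec (K : ℕ) (i : Fin M) (f : Fin (N i) → Bool) : PExp M N K :=
  conjListP ((sortList N i).map fun j => PExp.sliteral ⟨i, j⟩ (f j))

lemma isOneSortedMecP_osMec (i : Fin M) (f : Fin (N i) → Bool) :
    IsOneSortedMecP (osMec K i f) :=
  ⟨i, sortList N i, f, Finset.nodup_toList _, mem_sortList, rfl⟩

lemma evalB_sliteral (v : PExp M N K → Bool) (p : (i : Fin M) × Fin (N i)) (b : Bool) :
    evalB v (PExp.sliteral p b) = true ↔ v (.svar p.1 p.2) = b := by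
  cases b <;> simp [PExp.sliteral, evalB]

lemma evalB_mecOf (v : PExp M N K → Bool) (g : Patt M N) :
    evalB v (mecOf K g) = true ↔ ∀ p, v (.svar p.1 p.2) = g p := by
  rw [mecOf, evalB_conjListP, List.all_eq_true]
  constructor
  · intro h p
    exact (evalB_sliteral v p (g p)).1
      (h _ (List.mem_map_of_mem (mem_allPairs p)))
  · rintro h x hx
    obtain ⟨p, -, rfl⟩ := List.mem_map.1 hx
    exact (evalB_sliteral v p (g p)).2 (h p)

lemma evalB_osMec (v : PExp M N K → Bool) (i : Fin M) (f : Fin (N i) → Bool) :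
    evalB v (osMec K i f) = true ↔ ∀ j, v (.svar i j) = f j := by
  rw [osMec, evalB_conjListP, List.all_eq_true]
  constructor
  · intro h j
    exact (evalB_sliteral v ⟨i, j⟩ (f j)).1
      (h _ (List.mem_map_of_mem (mem_sortList j)))
  · rintro h x hx
    obtain ⟨j, -, rfl⟩ := List.mem_map.1 hx
    exact (evalB_sliteral v ⟨i, j⟩ (f j)).2 (h j)

variable {T : FiniteTNorm} {Th : Set (PFml M N K T.V)}

/-- A m.e.c. entails its sort-`i` part. -/
theorem mec_proj (g : Patt M N) (i : Fin M) :
    LAEPCProv T Th (.gi (mecOf K g) T.one (osMec K i fun j => g ⟨i, j⟩)) :=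
  gtaut fun v hv => (evalB_osMec v i _).2 fun j => (evalB_mecOf v g).1 hv ⟨i, j⟩

/-- Distinct m.e.c.s are incompatible. -/
theorem mec_clash {g g' : Patt M N} (h : g ≠ g') :
    LAEPCProv T Th (.gi ((mecOf K g).and (mecOf K g')) T.one .bot) :=
  gtaut fun v hv => by
    simp only [evalB, Bool.and_eq_true] at hv
    exact absurd (funext fun p => ((evalB_mecOf v g).1 hv.1 p).symm.trans
      ((evalB_mecOf v g').1 hv.2 p)) h

/-- Distinct one-sorted m.e.c.s of the same sort are incompatible. -/
theorem osMec_clash {i : Fin M} {f f' : Fin (N i) → Bool} (h : f ≠ f') :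
    LAEPCProv T Th (.gi ((osMec K i f).and (osMec K i f')) T.one .bot) :=
  gtaut fun v hv => by
    simp only [evalB, Bool.and_eq_true] at hv
    exact absurd (funext fun j => ((evalB_osMec v i f).1 hv.1 j).symm.trans
      ((evalB_osMec v i f').1 hv.2 j)) h

/-- The list of all patterns. -/
noncomputable def allPatts (M : ℕ) (N : Fin M → ℕ) : List (Patt M N) :=
  (Finset.univ : Finset (Patt M N)).toList

lemma mem_allPatts (g : Patt M N) : g ∈ allPatts M N := by
  simp [allPatts, Finset.mem_toList]

/-- Everything is covered by the m.e.c.s. -/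
theorem top_to_mecs :
    LAEPCProv T Th (.gi (.top : PExp M N K) T.one
      (disjListP ((allPatts M N).map (mecOf K)))) :=
  gtaut fun v _ => by
    rw [evalB_disjListP, List.any_eq_true]
    exact ⟨mecOf K (fun p => v (.svar p.1 p.2)),
      List.mem_map_of_mem (mem_allPatts _),
      (evalB_mecOf v _).2 fun p => rfl⟩

/-- The list of all one-sorted patterns of sort `i`. -/
noncomputable def allOsPatts (N : Fin M → ℕ) (i : Fin M) : List (Fin (N i) → Bool) :=
  (Finset.univ : Finset (Fin (N i) → Bool)).toList

lemma mem_allOsPatts {i : Fin M} (f : Fin (N i) → Bool) : f ∈ allOsPatts N i := by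
  simp [allOsPatts, Finset.mem_toList]

theorem top_to_osMecs (i : Fin M) :
    LAEPCProv T Th (.gi (.top : PExp M N K) T.one
      (disjListP ((allOsPatts N i).map (osMec K i)))) :=
  gtaut fun v _ => by
    rw [evalB_disjListP, List.any_eq_true]
    exact ⟨osMec K i (fun j => v (.svar i j)),
      List.mem_map_of_mem (mem_allOsPatts _),
      (evalB_osMec v i _).2 fun j => rfl⟩

/-! ### Sort bookkeeping -/

/-- All variables of `φ` are sorted, with sorts in `I`. -/
def SIn (I : Set (Fin M)) (φ : PExp M N K) : Prop :=
  ¬φ.usesUnsorted ∧ ∀ i', φ.usesSort i' → i' ∈ I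

lemma SIn.mono {I J : Set (Fin M)} {φ : PExp M N K} (h : SIn I φ) (hIJ : I ⊆ J) :
    SIn J φ := ⟨h.1, fun i' hi' => hIJ (h.2 i' hi')⟩

lemma SIn_bot {I : Set (Fin M)} : SIn I (.bot : PExp M N K) :=
  ⟨fun h => h, fun _ h => h.elim⟩

lemma SIn_top {I : Set (Fin M)} : SIn I (.top : PExp M N K) :=
  ⟨fun h => h, fun _ h => h.elim⟩

lemma SIn_and {I : Set (Fin M)} {φ ψ : PExp M N K} (h1 : SIn I φ) (h2 : SIn I ψ) :
    SIn I (φ.and ψ) := by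
  refine ⟨fun h => ?_, fun i' h => ?_⟩
  · rcases h with h | h
    exacts [h1.1 h, h2.1 h]
  · rcases h with h | h
    exacts [h1.2 _ h, h2.2 _ h]

lemma SIn_or {I : Set (Fin M)} {φ ψ : PExp M N K} (h1 : SIn I φ) (h2 : SIn I ψ) :
    SIn I (φ.or ψ) := by
  refine ⟨fun h => ?_, fun i' h => ?_⟩
  · rcases h with h | h
    exacts [h1.1 h, h2.1 h]
  · rcases h with h | h
    exacts [h1.2 _ h, h2.2 _ h]

lemma SIn_not {I : Set (Fin M)} {φ : PExp M N K} (h1 : SIn I φ) : SIn I φ.not := h1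

lemma SIn_dle {I : Set (Fin M)} {φ : PExp M N K} (h1 : SIn I φ) : SIn I φ.dle := h1

lemma SIn_dge {I : Set (Fin M)} {φ : PExp M N K} (h1 : SIn I φ) : SIn I φ.dge := h1

lemma SIn_conjListP {I : Set (Fin M)} {l : List (PExp M N K)}
    (h : ∀ φ ∈ l, SIn I φ) : SIn I (conjListP l) := by
  induction l with
  | nil => exact SIn_top
  | cons φ r ih =>
      cases r with
      | nil => exact h φ (by simp)
      | cons b s =>
          rw [conjListP_cons _ (by simp)]
          exact SIn_and (h φ (by simp)) (ih fun χ hχ => h χ (by simp [hχ]))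

lemma SIn_sliteral {p : (i : Fin M) × Fin (N i)} {b : Bool} :
    SIn {p.1} (PExp.sliteral (K := K) p b) := by
  cases b <;>
    exact ⟨fun h => h, fun i' h => by
      simp only [PExp.sliteral] at h
      simp [h.symm]⟩

lemma SIn_osMec {i : Fin M} {f : Fin (N i) → Bool} : SIn {i} (osMec K i f) := by
  refine SIn_conjListP fun φ hφ => ?_
  obtain ⟨j, -, rfl⟩ := List.mem_map.1 hφ
  exact SIn_sliteral

lemma belongsTo_of_SIn {i : Fin M} {φ : PExp M N K} (h : SIn {i} φ) : BelongsTo i φ :=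
  ⟨h.1, fun i' h' => h.2 i' h'⟩

lemma belongsTo_osMec {i : Fin M} {f : Fin (N i) → Bool} : BelongsTo i (osMec K i f) :=
  belongsTo_of_SIn SIn_osMec

lemma disjointSorted_of_SIn {I J : Set (Fin M)} {φ ψ : PExp M N K}
    (h1 : SIn I φ) (h2 : SIn J ψ) (hIJ : ∀ i, i ∈ I → i ∉ J) : DisjointSorted φ ψ :=
  ⟨h1.1, h2.1, fun i h => hIJ i (h1.2 i h.1) (h2.2 i h.2)⟩

end LAEPCAux

namespace LAEPCAux

set_option linter.unusedSectionVars false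
set_option linter.unusedVariables false

open PExp PFml Classical

variable {M : ℕ} {N : Fin M → ℕ} {K : ℕ} {T : FiniteTNorm}
variable {W : Fin M → Type} [∀ i, Fintype (W i)] [∀ i, Nonempty (W i)]
  [∀ i, LinearOrder (W i)]
variable (hM : 0 < M) (sps : ∀ i, TOSimilaritySpace T (W i))

/-! ### Basic facts about the product similarity -/

lemma le_prodS_iff {c : T.V} {v w : ∀ i, W i} :
    (c : ℝ) ≤ (prodS hM sps v w : ℝ) ↔
      ∀ i, (c : ℝ) ≤ ((sps i).S (v i) (w i) : ℝ) := by
  haveI : Nonempty (Fin M) := ⟨⟨0, hM⟩⟩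
  have h := Finset.le_inf'_iff (s := (Finset.univ : Finset (Fin M)))
    Finset.univ_nonempty (fun i => (sps i).S (v i) (w i)) (a := c)
  simp only [Finset.mem_univ, true_implies] at h
  constructor
  · intro hc i
    exact Subtype.coe_le_coe.2 (h.1 (Subtype.coe_le_coe.1 hc) i)
  · intro hc
    exact Subtype.coe_le_coe.2 (h.2 fun i => Subtype.coe_le_coe.1 (hc i))

lemma prodS_self (w : ∀ i, W i) : prodS hM sps w w = T.one := by
  haveI : Nonempty (Fin M) := ⟨⟨0, hM⟩⟩
  have : (fun i => (sps i).S (w i) (w i)) = fun _ => T.one :=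
    funext fun i => ((sps i).eq_one_iff _ _).2 rfl
  rw [prodS, this]
  exact Finset.inf'_const _ _

lemma mem_pNbhd {c : T.V} {A : Set (∀ i, W i)} {w : ∀ i, W i} :
    w ∈ pNbhd hM sps c A ↔ ∃ a ∈ A, (c : ℝ) ≤ (prodS hM sps w a : ℝ) := Iff.rfl

lemma subset_pNbhd {c : T.V} (A : Set (∀ i, W i)) : A ⊆ pNbhd hM sps c A := by
  intro w hw
  exact ⟨w, hw, by rw [prodS_self]; exact vle_one c⟩

lemma pNbhd_one (A : Set (∀ i, W i)) : pNbhd hM sps T.one A = A := by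
  refine Set.Subset.antisymm ?_ (subset_pNbhd hM sps A)
  rintro w ⟨a, ha, h⟩
  have hw : w = a := by
    funext i
    have h1 := (le_prodS_iff hM sps).1 h i
    have h2 : ((sps i).S (w i) (a i) : ℝ) ≤ 1 := vle_one (T := T) _
    have : (sps i).S (w i) (a i) = T.one := Subtype.ext (le_antisymm h2 h1)
    exact ((sps i).eq_one_iff _ _).1 this
  rwa [hw]

lemma pNbhd_empty {c : T.V} : pNbhd hM sps c (∅ : Set (∀ i, W i)) = ∅ := by
  ext w; simp [pNbhd]

lemma pNbhd_mono {c : T.V} {A B : Set (∀ i, W i)} (h : A ⊆ B) :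
    pNbhd hM sps c A ⊆ pNbhd hM sps c B := by
  rintro w ⟨a, ha, hc⟩; exact ⟨a, h ha, hc⟩

lemma pNbhd_anti {c d : T.V} (h : (d : ℝ) ≤ (c : ℝ)) (A : Set (∀ i, W i)) :
    pNbhd hM sps c A ⊆ pNbhd hM sps d A := by
  rintro w ⟨a, ha, hc⟩; exact ⟨a, ha, le_trans h hc⟩

lemma pNbhd_union {c : T.V} (A B : Set (∀ i, W i)) :
    pNbhd hM sps c (A ∪ B) = pNbhd hM sps c A ∪ pNbhd hM sps c B := by
  ext w
  constructor
  · rintro ⟨a, ha | ha, hc⟩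
    · exact Or.inl ⟨a, ha, hc⟩
    · exact Or.inr ⟨a, ha, hc⟩
  · rintro (⟨a, ha, hc⟩ | ⟨a, ha, hc⟩)
    · exact ⟨a, Or.inl ha, hc⟩
    · exact ⟨a, Or.inr ha, hc⟩

lemma pNbhd_comp {c d : T.V} (A : Set (∀ i, W i)) :
    pNbhd hM sps c (pNbhd hM sps d A) ⊆ pNbhd hM sps (T.op c d) A := by
  rintro w ⟨a, ⟨b, hb, hd⟩, hc⟩
  refine ⟨b, hb, (le_prodS_iff hM sps).2 fun i => ?_⟩
  have h1 := (le_prodS_iff hM sps).1 hc i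
  have h2 := (le_prodS_iff hM sps).1 hd i
  have h3 := (sps i).triangle (w i) (a i) (b i)
  exact le_trans (T.op_mono _ _ _ _ h1 h2) h3

lemma pNbhd_zero {A : Set (∀ i, W i)} (h : A.Nonempty) :
    pNbhd hM sps T.zero A = Set.univ := by
  obtain ⟨a, ha⟩ := h
  refine Set.eq_univ_of_forall fun w => ⟨a, ha, (le_prodS_iff hM sps).2 fun i => ?_⟩
  exact vzero_le (T := T) _

lemma pDcl_empty (hM : 0 < M) : pDcl (∅ : Set (∀ i, W i)) = ∅ := by
  ext w
  simp only [pDcl, Set.mem_setOf_eq, Set.mem_empty_iff_false, iff_false]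
  intro h
  obtain ⟨v, hv, -⟩ := h ⟨0, hM⟩
  exact hv

lemma pUcl_empty (hM : 0 < M) : pUcl (∅ : Set (∀ i, W i)) = ∅ := by
  ext w
  simp only [pUcl, Set.mem_setOf_eq, Set.mem_empty_iff_false, iff_false]
  intro h
  obtain ⟨v, hv, -⟩ := h ⟨0, hM⟩
  exact hv

lemma subset_pDcl (A : Set (∀ i, W i)) : A ⊆ pDcl A :=
  fun w hw => fun i => ⟨w, hw, le_refl _⟩

lemma subset_pUcl (A : Set (∀ i, W i)) : A ⊆ pUcl A :=
  fun w hw => fun i => ⟨w, hw, le_refl _⟩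

lemma pDcl_idem (A : Set (∀ i, W i)) : pDcl (pDcl A) ⊆ pDcl A := by
  intro w hw i
  obtain ⟨v, hv, hle⟩ := hw i
  obtain ⟨u, hu, hle'⟩ := hv i
  exact ⟨u, hu, le_trans hle hle'⟩

lemma pUcl_idem (A : Set (∀ i, W i)) : pUcl (pUcl A) ⊆ pUcl A := by
  intro w hw i
  obtain ⟨v, hv, hle⟩ := hw i
  obtain ⟨u, hu, hle'⟩ := hv i
  exact ⟨u, hu, le_trans hle' hle⟩

/-! ### Evaluations: basic lemmas -/

variable (ev : LAEPCEval M N K W)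

lemma e_conjListP (l : List (PExp M N K)) (w : ∀ i, W i) :
    w ∈ ev.e (conjListP l) ↔ ∀ φ ∈ l, w ∈ ev.e φ := by
  induction l with
  | nil => simp [conjListP, ev.map_top]
  | cons φ r ih =>
      cases r with
      | nil => simp [conjListP]
      | cons b s =>
          rw [conjListP_cons _ (by simp), ev.map_and]
          simp only [Set.mem_inter_iff, ih, List.mem_cons]
          constructor
          · rintro ⟨h1, h2⟩ χ (rfl | hχ)
            exacts [h1, h2 χ hχ]
          · intro h
            exact ⟨h φ (Or.inl rfl), fun χ hχ => h χ (Or.inr hχ)⟩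

lemma e_disjListP (l : List (PExp M N K)) (w : ∀ i, W i) :
    w ∈ ev.e (disjListP l) ↔ ∃ φ ∈ l, w ∈ ev.e φ := by
  induction l with
  | nil => simp [disjListP, ev.map_bot]
  | cons φ r ih =>
      cases r with
      | nil => simp [disjListP]
      | cons b s =>
          rw [disjListP_cons _ (by simp), ev.map_or]
          simp only [Set.mem_union, ih, List.mem_cons]
          constructor
          · rintro (h1 | ⟨χ, hχ, h2⟩)
            exacts [⟨φ, Or.inl rfl, h1⟩, ⟨χ, Or.inr hχ, h2⟩]
          · rintro ⟨χ, (rfl | hχ), h2⟩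
            exacts [Or.inl h2, Or.inr ⟨χ, hχ, h2⟩]

lemma mem_e_sliteral {w : ∀ i, W i} (p : (i : Fin M) × Fin (N i)) (b : Bool) :
    w ∈ ev.e (PExp.sliteral p b) ↔ ((w ∈ ev.e (.svar p.1 p.2)) ↔ b = true) := by
  cases b <;> simp [PExp.sliteral, ev.map_not]

/-- Membership in the evaluation of any m.e.c. is equivalent to having a fixed
pattern of sorted-variable memberships. -/
lemma mec_pattern {ε : PExp M N K} (hε : IsMecP ε) :
    ∃ f : Patt M N, ∀ w : ∀ i, W i,
      w ∈ ev.e ε ↔ ∀ p, ((w ∈ ev.e (.svar p.1 p.2)) ↔ f p = true) := by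
  obtain ⟨l, f, -, hcompl, rfl⟩ := hε
  refine ⟨f, fun w => ?_⟩
  rw [e_conjListP]
  constructor
  · intro h p
    have := h _ (List.mem_map_of_mem (hcompl p))
    exact (mem_e_sliteral ev p (f p)).1 this
  · intro h χ hχ
    obtain ⟨p, -, rfl⟩ := List.mem_map.1 hχ
    exact (mem_e_sliteral ev p (f p)).2 (h p)

/-- Membership in the evaluation of an unsorted variable only depends on the pattern
of sorted-variable memberships. -/
lemma uvar_pattern {v w : ∀ i, W i}
    (h : ∀ p : (i : Fin M) × Fin (N i),
      (v ∈ ev.e (.svar p.1 p.2)) ↔ (w ∈ ev.e (.svar p.1 p.2))) (k : Fin K) :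
    (v ∈ ev.e (.uvar k)) ↔ (w ∈ ev.e (.uvar k)) := by
  obtain ⟨G, hG⟩ := ev.uvar_alg k
  rw [hG]
  simp only [Set.mem_iUnion, Set.mem_iInter]
  constructor <;> rintro ⟨g, hg, hmem⟩ <;> refine ⟨g, hg, fun p => ?_⟩
  · have := hmem p
    cases hgp : g p <;> simp only [hgp, if_true, if_false, Bool.false_eq_true] at this ⊢
    · exact fun hc => this ((h p).2 hc)
    · exact (h p).1 this
  · have := hmem p
    cases hgp : g p <;> simp only [hgp, if_true, if_false, Bool.false_eq_true] at this ⊢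
    · exact fun hc => this ((h p).1 hc)
    · exact (h p).2 this

/-- Two worlds with the same sorted-variable pattern are equal. -/
lemma eq_of_same_pattern {v w : ∀ i, W i}
    (h : ∀ p : (i : Fin M) × Fin (N i),
      (v ∈ ev.e (.svar p.1 p.2)) ↔ (w ∈ ev.e (.svar p.1 p.2))) : v = w := by
  by_contra hne
  rcases ev.separating v w hne with ⟨i, j, hx⟩ | ⟨k, hx⟩
  · rcases hx with ⟨h1, h2⟩ | ⟨h1, h2⟩
    · exact h2 ((h ⟨i, j⟩).1 h1)
    · exact h2 ((h ⟨i, j⟩).2 h1)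
  · have := uvar_pattern ev h k
    rcases hx with ⟨h1, h2⟩ | ⟨h1, h2⟩
    · exact h2 (this.1 h1)
    · exact h2 (this.2 h1)

/-- The evaluation of a m.e.c. is a subsingleton. -/
lemma mec_subsingleton {ε : PExp M N K} (hε : IsMecP ε) {v w : ∀ i, W i}
    (hv : v ∈ ev.e ε) (hw : w ∈ ev.e ε) : v = w := by
  obtain ⟨f, hf⟩ := mec_pattern ev hε
  refine eq_of_same_pattern ev fun p => ?_
  rw [(hf v).1 hv p, (hf w).1 hw p]

/-! ### Invariance under coordinates -/

/-- `X` only depends on the coordinates in `I`. -/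
def Inv (I : Set (Fin M)) (X : Set (∀ i, W i)) : Prop :=
  ∀ v w : ∀ i, W i, (∀ i ∈ I, v i = w i) → (v ∈ X ↔ w ∈ X)

lemma Inv.compl {I : Set (Fin M)} {X : Set (∀ i, W i)} (h : Inv I X) : Inv I Xᶜ :=
  fun v w hvw => by simp [Set.mem_compl_iff, h v w hvw]

lemma Inv.inter {I : Set (Fin M)} {X Y : Set (∀ i, W i)} (h1 : Inv I X) (h2 : Inv I Y) :
    Inv I (X ∩ Y) := fun v w hvw => by
  simp [Set.mem_inter_iff, h1 v w hvw, h2 v w hvw]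

lemma Inv.union {I : Set (Fin M)} {X Y : Set (∀ i, W i)} (h1 : Inv I X) (h2 : Inv I Y) :
    Inv I (X ∪ Y) := fun v w hvw => by
  simp [Set.mem_union, h1 v w hvw, h2 v w hvw]

lemma Inv.mono {I J : Set (Fin M)} {X : Set (∀ i, W i)} (h : Inv I X) (hIJ : I ⊆ J) :
    Inv J X := fun v w hvw => h v w fun i hi => hvw i (hIJ hi)

lemma Inv.pdcl {I : Set (Fin M)} {X : Set (∀ i, W i)} (h : Inv I X) : Inv I (_root_.pDcl X) := by
  classical
  have key : ∀ v w : ∀ i, W i, (∀ i ∈ I, v i = w i) → v ∈ pDcl X → w ∈ pDcl X := by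
    intro v w hvw hv l
    by_cases hl : l ∈ I
    · obtain ⟨x, hx, hle⟩ := hv l
      exact ⟨x, hx, (hvw l hl) ▸ hle⟩
    · obtain ⟨x, hx, -⟩ := hv l
      refine ⟨Function.update x l (w l), ?_, ?_⟩
      · exact (h _ _ fun i hi => (Function.update_of_ne (by rintro rfl; exact hl hi) _ _).symm).1 hx
      · rw [Function.update_self]
  exact fun v w hvw => ⟨key v w hvw, key w v fun i hi => (hvw i hi).symm⟩

lemma Inv.pucl {I : Set (Fin M)} {X : Set (∀ i, W i)} (h : Inv I X) : Inv I (_root_.pUcl X) := by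
  classical
  have key : ∀ v w : ∀ i, W i, (∀ i ∈ I, v i = w i) → v ∈ pUcl X → w ∈ pUcl X := by
    intro v w hvw hv l
    by_cases hl : l ∈ I
    · obtain ⟨x, hx, hle⟩ := hv l
      exact ⟨x, hx, (hvw l hl) ▸ hle⟩
    · obtain ⟨x, hx, -⟩ := hv l
      refine ⟨Function.update x l (w l), ?_, ?_⟩
      · exact (h _ _ fun i hi => (Function.update_of_ne (by rintro rfl; exact hl hi) _ _).symm).1 hx
      · rw [Function.update_self]
  exact fun v w hvw => ⟨key v w hvw, key w v fun i hi => (hvw i hi).symm⟩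

/-- The evaluation of an expression with sorts in `I` only depends on the
`I`-coordinates. -/
lemma inv_e {I : Set (Fin M)} : ∀ {φ : PExp M N K}, SIn I φ → Inv I (ev.e φ) := by
  intro φ
  induction φ with
  | svar i j =>
      intro hS
      obtain ⟨A, hA⟩ := ev.svar_cyl i j
      have hi : i ∈ I := hS.2 i (by simp [PExp.usesSort])
      intro v w hvw
      rw [hA]
      simp only [cyl, Set.mem_setOf_eq, hvw i hi]
  | uvar k => intro hS; exact absurd (by trivial) hS.1
  | bot => intro _; rw [ev.map_bot]; exact fun v w _ => Iff.rfl
  | top => intro _; rw [ev.map_top]; exact fun v w _ => Iff.rfl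
  | and φ ψ ih1 ih2 =>
      intro hS
      rw [ev.map_and]
      exact (ih1 ⟨fun h => hS.1 (Or.inl h), fun i h => hS.2 i (Or.inl h)⟩).inter
        (ih2 ⟨fun h => hS.1 (Or.inr h), fun i h => hS.2 i (Or.inr h)⟩)
  | or φ ψ ih1 ih2 =>
      intro hS
      rw [ev.map_or]
      exact (ih1 ⟨fun h => hS.1 (Or.inl h), fun i h => hS.2 i (Or.inl h)⟩).union
        (ih2 ⟨fun h => hS.1 (Or.inr h), fun i h => hS.2 i (Or.inr h)⟩)
  | not φ ih =>
      intro hS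
      rw [ev.map_not]
      exact (ih hS).compl
  | dle φ ih =>
      intro hS
      rw [ev.map_dle]
      exact (ih hS).pdcl
  | dge φ ih =>
      intro hS
      rw [ev.map_dge]
      exact (ih hS).pucl

lemma sIn_of_belongsTo {i : Fin M} {φ : PExp M N K} (h : BelongsTo i φ) :
    SIn {i} φ := ⟨h.1, fun i' h' => h.2 i' h'⟩

/-- For an `{i}`-invariant nonempty set, `pDcl` membership reduces to coordinate `i`. -/
lemma mem_pDcl_inv {i : Fin M} {X : Set (∀ i, W i)} (hX : Inv {i} X)
    {w : ∀ i, W i} :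
    w ∈ pDcl X ↔ ∃ x ∈ X, w i ≤ x i := by
  classical
  constructor
  · intro h
    exact h i
  · rintro ⟨x, hx, hle⟩ l
    rcases eq_or_ne l i with rfl | hne
    · exact ⟨x, hx, hle⟩
    · refine ⟨Function.update x l (w l), ?_, ?_⟩
      · exact (hX _ _ fun m hm => by
          rcases hm with rfl
          exact (Function.update_of_ne (fun he => hne he.symm) _ _).symm).1 hx
      · rw [Function.update_self]

lemma mem_pUcl_inv {i : Fin M} {X : Set (∀ i, W i)} (hX : Inv {i} X)
    {w : ∀ i, W i} :
    w ∈ pUcl X ↔ ∃ x ∈ X, x i ≤ w i := by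
  classical
  constructor
  · intro h
    exact h i
  · rintro ⟨x, hx, hle⟩ l
    rcases eq_or_ne l i with rfl | hne
    · exact ⟨x, hx, hle⟩
    · refine ⟨Function.update x l (w l), ?_, ?_⟩
      · exact (hX _ _ fun m hm => by
          rcases hm with rfl
          exact (Function.update_of_ne (fun he => hne he.symm) _ _).symm).1 hx
      · rw [Function.update_self]

end LAEPCAux

namespace LAEPCAux

open PExp PFml

variable {M : ℕ} {N : Fin M → ℕ} {K : ℕ} {T : FiniteTNorm}
variable {W : Fin M → Type} [∀ i, Fintype (W i)] [∀ i, Nonempty (W i)]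
  [∀ i, LinearOrder (W i)]
variable (hM : 0 < M) (sps : ∀ i, TOSimilaritySpace T (W i)) (ev : LAEPCEval M N K W)

lemma sat_gi {φ ψ : PExp M N K} {c : T.V} :
    LAEPCSat hM sps ev (.gi φ c ψ) ↔ ev.e φ ⊆ pNbhd hM sps c (ev.e ψ) := Iff.rfl

lemma sat_and {Φ Ψ : PFml M N K T.V} :
    LAEPCSat hM sps ev (Φ.and Ψ) ↔ LAEPCSat hM sps ev Φ ∧ LAEPCSat hM sps ev Ψ := Iff.rfl

lemma sat_or {Φ Ψ : PFml M N K T.V} :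
    LAEPCSat hM sps ev (Φ.or Ψ) ↔ LAEPCSat hM sps ev Φ ∨ LAEPCSat hM sps ev Ψ := Iff.rfl

lemma sat_not {Φ : PFml M N K T.V} :
    LAEPCSat hM sps ev Φ.not ↔ ¬ LAEPCSat hM sps ev Φ := Iff.rfl

lemma sat_imp {Φ Ψ : PFml M N K T.V} :
    LAEPCSat hM sps ev (Φ.imp Ψ) ↔ (LAEPCSat hM sps ev Φ → LAEPCSat hM sps ev Ψ) := by
  rw [PFml.imp, sat_or, sat_not]
  tauto

lemma sat_gi1bot {α : PExp M N K} :
    LAEPCSat hM sps ev (.gi α T.one .bot) ↔ ev.e α = ∅ := by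
  rw [sat_gi, ev.map_bot, pNbhd_empty, Set.subset_empty_iff]

/-! ### Soundness of the individual axioms -/

open Classical in
lemma mem_e_substP (σ : ℕ → PExp M N K) (w : ∀ i, W i) :
    ∀ χ : PropForm, w ∈ ev.e (χ.substP σ) ↔
      χ.beval (fun n => if w ∈ ev.e (σ n) then true else false) = true := by
  classical
  intro χ
  induction χ with
  | var n => simp only [PropForm.substP, PropForm.beval]; split <;> simp_all
  | bot => simp [PropForm.substP, PropForm.beval, ev.map_bot]
  | top => simp [PropForm.substP, PropForm.beval, ev.map_top]
  | and α β ih1 ih2 =>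
      simp only [PropForm.substP, PropForm.beval, ev.map_and, Set.mem_inter_iff,
        Bool.and_eq_true, ih1, ih2]
  | or α β ih1 ih2 =>
      simp only [PropForm.substP, PropForm.beval, ev.map_or, Set.mem_union,
        Bool.or_eq_true, ih1, ih2]
  | not α ih =>
      simp only [PropForm.substP, PropForm.beval, ev.map_not, Set.mem_compl_iff,
        Bool.not_eq_true', ih]
      constructor
      · intro h; cases hx : PropForm.beval _ α
        · rfl
        · exact absurd hx h
      · intro h hc; rw [hc] at h; cases h

theorem sound_a1' {φ ψ : PExp M N K}
    (h : ∃ (φ' ψ' : PropForm) (σ : ℕ → PExp M N K),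
      (∀ v, φ'.beval v = true → ψ'.beval v = true) ∧
        φ = φ'.substP σ ∧ ψ = ψ'.substP σ) :
    LAEPCSat hM sps ev (.gi φ T.one ψ) := by
  obtain ⟨φ', ψ', σ, himp, rfl, rfl⟩ := h
  rw [sat_gi, pNbhd_one]
  intro w hw
  rw [mem_e_substP] at hw ⊢
  exact himp _ hw

theorem sound_a11 {Φ : PFml M N K T.V}
    (h : ∀ g : PExp M N K → T.V → PExp M N K → Bool, Φ.peval g = true) :
    LAEPCSat hM sps ev Φ := by
  classical
  set g : PExp M N K → T.V → PExp M N K → Bool := fun φ c ψ =>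
    if LAEPCSat hM sps ev (.gi φ c ψ) then true else false with hg
  have key : ∀ Ψ : PFml M N K T.V, LAEPCSat hM sps ev Ψ ↔ Ψ.peval g = true := by
    intro Ψ
    induction Ψ with
    | gi φ c ψ => simp only [PFml.peval, hg]; split <;> simp_all
    | and Φ₁ Φ₂ ih1 ih2 => simp [sat_and, PFml.peval, ih1, ih2]
    | or Φ₁ Φ₂ ih1 ih2 => simp [sat_or, PFml.peval, ih1, ih2]
    | not Φ₁ ih =>
        simp only [sat_not, PFml.peval, ih, Bool.not_eq_true']
        constructor
        · intro hh; cases hx : PFml.peval g Φ₁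
          · rfl
          · exact absurd hx hh
        · intro hh hc; rw [hc] at hh; cases hh
  exact (key Φ).2 (h g)

theorem sound_a6 {δ ε : PExp M N K} (c : T.V) (hδ : IsMecP δ) (hε : IsMecP ε)
    (h1 : ¬ LAEPCSat hM sps ev (.gi δ T.one .bot))
    (h2 : LAEPCSat hM sps ev (.gi δ c ε)) :
    LAEPCSat hM sps ev (.gi ε c δ) := by
  rw [sat_gi1bot] at h1
  obtain ⟨d, hd⟩ := Set.nonempty_iff_ne_empty.2 h1
  obtain ⟨b, hb, hS⟩ := h2 hd
  intro w hw
  have hwb : w = b := mec_subsingleton ev hε hw hb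
  refine ⟨d, hd, ?_⟩
  have hsymm : prodS hM sps b d = prodS hM sps d b := by
    haveI : Nonempty (Fin M) := ⟨⟨0, hM⟩⟩
    rw [prodS, prodS]
    congr 1
    funext i
    exact (sps i).symm _ _
  rw [hwb, hsymm]
  exact hS

theorem sound_a8 {ε : PExp M N K} (φ ψ : PExp M N K) (c : T.V) (hε : IsMecP ε)
    (h : LAEPCSat hM sps ev (.gi ε c (φ.or ψ))) :
    LAEPCSat hM sps ev ((PFml.gi ε c φ).or (.gi ε c ψ)) := by
  rcases Set.eq_empty_or_nonempty (ev.e ε) with he | ⟨d, hd⟩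
  · exact Or.inl (by rw [sat_gi, he]; exact Set.empty_subset _)
  · have := h hd
    rw [ev.map_or, pNbhd_union] at this
    rcases this with hcase | hcase
    · exact Or.inl (fun w hw => (mec_subsingleton ev hε hw hd) ▸ hcase)
    · exact Or.inr (fun w hw => (mec_subsingleton ev hε hw hd) ▸ hcase)

theorem sound_a22 {ε : PExp M N K} (k : Fin K) (hε : IsMecP ε) :
    LAEPCSat hM sps ev ((PFml.gi ε T.one (.uvar k)).or (.gi ε T.one (.not (.uvar k)))) := by
  rcases Set.eq_empty_or_nonempty (ev.e ε) with he | ⟨d, hd⟩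
  · exact Or.inl (by rw [sat_gi, he]; exact Set.empty_subset _)
  · by_cases hdu : d ∈ ev.e (.uvar k)
    · refine Or.inl ?_
      rw [sat_gi, pNbhd_one]
      intro w hw
      rw [mec_subsingleton ev hε hw hd]
      exact hdu
    · refine Or.inr ?_
      rw [sat_gi, pNbhd_one, ev.map_not]
      intro w hw
      rw [mec_subsingleton ev hε hw hd]
      exact hdu

theorem sound_a15a {φ ψ : PExp M N K} (hs : ∃ i, BelongsTo i φ ∧ BelongsTo i ψ) :
    LAEPCSat hM sps ev ((PFml.gi φ.dle T.one ψ.dle).or (.gi ψ.dle T.one φ.dle)) := by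
  obtain ⟨i, h1, h2⟩ := hs
  have hX : Inv {i} (ev.e φ) := inv_e ev (sIn_of_belongsTo h1)
  have hY : Inv {i} (ev.e ψ) := inv_e ev (sIn_of_belongsTo h2)
  by_cases hc : pDcl (ev.e φ) ⊆ pDcl (ev.e ψ)
  · exact Or.inl (by rw [sat_gi, pNbhd_one, ev.map_dle, ev.map_dle]; exact hc)
  · refine Or.inr ?_
    rw [sat_gi, pNbhd_one, ev.map_dle, ev.map_dle]
    obtain ⟨w, hwX, hwY⟩ := Set.not_subset.1 hc
    intro u huY
    obtain ⟨y, hy, huy⟩ := (mem_pDcl_inv hY).1 huY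
    obtain ⟨x, hx, hwx⟩ := (mem_pDcl_inv hX).1 hwX
    have hyw : y i ≤ w i := by
      by_contra hcon
      exact hwY ((mem_pDcl_inv hY).2 ⟨y, hy, le_of_not_ge hcon⟩)
    exact (mem_pDcl_inv hX).2 ⟨x, hx, le_trans huy (le_trans hyw hwx)⟩

theorem sound_a15b {φ ψ : PExp M N K} (hs : ∃ i, BelongsTo i φ ∧ BelongsTo i ψ) :
    LAEPCSat hM sps ev ((PFml.gi φ.dge T.one ψ.dge).or (.gi ψ.dge T.one φ.dge)) := by
  obtain ⟨i, h1, h2⟩ := hs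
  have hX : Inv {i} (ev.e φ) := inv_e ev (sIn_of_belongsTo h1)
  have hY : Inv {i} (ev.e ψ) := inv_e ev (sIn_of_belongsTo h2)
  by_cases hc : pUcl (ev.e φ) ⊆ pUcl (ev.e ψ)
  · exact Or.inl (by rw [sat_gi, pNbhd_one, ev.map_dge, ev.map_dge]; exact hc)
  · refine Or.inr ?_
    rw [sat_gi, pNbhd_one, ev.map_dge, ev.map_dge]
    obtain ⟨w, hwX, hwY⟩ := Set.not_subset.1 hc
    intro u huY
    obtain ⟨y, hy, huy⟩ := (mem_pUcl_inv hY).1 huY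
    obtain ⟨x, hx, hwx⟩ := (mem_pUcl_inv hX).1 hwX
    have hyw : w i ≤ y i := by
      by_contra hcon
      exact hwY ((mem_pUcl_inv hY).2 ⟨y, hy, le_of_not_ge hcon⟩)
    exact (mem_pUcl_inv hX).2 ⟨x, hx, le_trans hwx (le_trans hyw huy)⟩

/-- Pattern characterization of one-sorted m.e.c.s. -/
lemma osmec_pattern {ε : PExp M N K} (hε : IsOneSortedMecP ε) :
    ∃ (i : Fin M) (f : Fin (N i) → Bool), SIn {i} ε ∧ ∀ w : ∀ i, W i,
      w ∈ ev.e ε ↔ ∀ j, ((w ∈ ev.e (.svar i j)) ↔ f j = true) := by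
  obtain ⟨i, l, f, -, hcompl, rfl⟩ := hε
  refine ⟨i, f, ?_, fun w => ?_⟩
  · refine SIn_conjListP fun χ hχ => ?_
    obtain ⟨j, -, rfl⟩ := List.mem_map.1 hχ
    exact SIn_sliteral
  · rw [e_conjListP]
    constructor
    · intro h j
      exact (mem_e_sliteral ev ⟨i, j⟩ (f j)).1 (h _ (List.mem_map_of_mem (hcompl j)))
    · intro h χ hχ
      obtain ⟨j, -, rfl⟩ := List.mem_map.1 hχ
      exact (mem_e_sliteral ev ⟨i, j⟩ (f j)).2 (h j)

/-- Two members of the evaluation of a one-sorted m.e.c. agree at its sort. -/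
lemma osmec_comp_subsingleton {ε : PExp M N K} {i : Fin M} {f : Fin (N i) → Bool}
    (hS : SIn {i} ε)
    (hpat : ∀ w : ∀ i, W i, w ∈ ev.e ε ↔ ∀ j, ((w ∈ ev.e (.svar i j)) ↔ f j = true))
    {u w : ∀ i, W i} (hu : u ∈ ev.e ε) (hw : w ∈ ev.e ε) : u i = w i := by
  classical
  set w' := Function.update u i (w i) with hw'
  have hw'mem : w' ∈ ev.e ε := by
    refine (inv_e ev hS w' w ?_).2 hw
    rintro m rfl
    rw [hw', Function.update_self]
  have : u = w' := by
    refine eq_of_same_pattern ev fun p => ?_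
    rcases eq_or_ne p.1 i with hpi | hpi
    · rcases p with ⟨p1, p2⟩
      dsimp at hpi
      subst hpi
      rw [(hpat u).1 hu p2, (hpat w').1 hw'mem p2]
    · have hinv : Inv {p.1} (ev.e (.svar p.1 p.2)) :=
        inv_e ev ⟨fun h => h, fun i' h' => by
          simp only [PExp.usesSort] at h'
          simp [h'.symm]⟩
      refine hinv u w' ?_
      rintro m rfl
      rw [hw', Function.update_of_ne hpi]
  rw [this, hw', Function.update_self]

theorem sound_a16 {ε : PExp M N K} (hε : IsOneSortedMecP ε) :
    LAEPCSat hM sps ev (.gi (ε.dle.and ε.dge) T.one ε) := by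
  obtain ⟨i, f, hS, hpat⟩ := osmec_pattern ev hε
  rw [sat_gi, pNbhd_one, ev.map_and, ev.map_dle, ev.map_dge]
  rintro w ⟨hwD, hwU⟩
  have hXinv : Inv {i} (ev.e ε) := inv_e ev hS
  obtain ⟨x1, hx1, hle1⟩ := (mem_pDcl_inv hXinv).1 hwD
  obtain ⟨x2, hx2, hle2⟩ := (mem_pUcl_inv hXinv).1 hwU
  have heq : x2 i = x1 i := osmec_comp_subsingleton ev hS hpat hx2 hx1
  have : w i = x1 i := le_antisymm hle1 (heq ▸ hle2)
  refine (hXinv w x1 ?_).2 hx1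
  rintro m rfl
  exact this

theorem sound_a17a {φ ψ : PExp M N K} {c : T.V}
    (h : LAEPCSat hM sps ev (.gi φ c ψ)) :
    LAEPCSat hM sps ev (.gi φ.dle c ψ.dle) := by
  classical
  rw [sat_gi] at h
  rw [sat_gi, ev.map_dle, ev.map_dle]
  intro w hw
  choose v hv hle using hw
  choose b hb hS using fun i => h (hv i)
  refine ⟨fun j => if (b j) j ≤ w j then (b j) j else w j, ?_, ?_⟩
  · intro j
    refine ⟨b j, hb j, ?_⟩
    dsimp only
    by_cases hc : (b j) j ≤ w j
    · rw [if_pos hc]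
    · rw [if_neg hc]; exact le_of_not_ge hc
  · refine (le_prodS_iff hM sps).2 fun j => ?_
    by_cases hc : (b j) j ≤ w j
    · rw [if_pos hc]
      have h1 : (c : ℝ) ≤ ((sps j).S (v j j) ((b j) j) : ℝ) :=
        (le_prodS_iff hM sps).1 (hS j) j
      have h2 := (sps j).compat ((b j) j) (w j) (v j j) hc (hle j)
      have h3 : ((sps j).S ((b j) j) (v j j) : ℝ) ≤ ((sps j).S ((b j) j) (w j) : ℝ) :=
        le_trans h2 (min_le_left _ _)
      have h4 : (sps j).S (v j j) ((b j) j) = (sps j).S ((b j) j) (v j j) :=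
        (sps j).symm _ _
      have h5 : (sps j).S (w j) ((b j) j) = (sps j).S ((b j) j) (w j) :=
        (sps j).symm _ _
      rw [h5]
      rw [h4] at h1
      exact le_trans h1 h3
    · rw [if_neg hc, ((sps j).eq_one_iff (w j) (w j)).2 rfl]
      exact vle_one c

theorem sound_a17b {φ ψ : PExp M N K} {c : T.V}
    (h : LAEPCSat hM sps ev (.gi φ c ψ)) :
    LAEPCSat hM sps ev (.gi φ.dge c ψ.dge) := by
  classical
  rw [sat_gi] at h
  rw [sat_gi, ev.map_dge, ev.map_dge]
  intro w hw
  choose v hv hle using hw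
  choose b hb hS using fun i => h (hv i)
  refine ⟨fun j => if w j ≤ (b j) j then (b j) j else w j, ?_, ?_⟩
  · intro j
    refine ⟨b j, hb j, ?_⟩
    dsimp only
    by_cases hc : w j ≤ (b j) j
    · rw [if_pos hc]
    · rw [if_neg hc]; exact le_of_not_ge hc
  · refine (le_prodS_iff hM sps).2 fun j => ?_
    by_cases hc : w j ≤ (b j) j
    · rw [if_pos hc]
      have h1 : (c : ℝ) ≤ ((sps j).S (v j j) ((b j) j) : ℝ) :=
        (le_prodS_iff hM sps).1 (hS j) j
      have h2 := (sps j).compat (v j j) (w j) ((b j) j) (hle j) hc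
      have h3 : ((sps j).S (v j j) ((b j) j) : ℝ) ≤ ((sps j).S (w j) ((b j) j) : ℝ) :=
        le_trans h2 (min_le_right _ _)
      exact le_trans h1 h3
    · rw [if_neg hc, ((sps j).eq_one_iff (w j) (w j)).2 rfl]
      exact vle_one c

theorem sound_a18a {φ : PExp M N K} (ψ : PExp M N K) (hs : ∃ i, BelongsTo i φ)
    (h : LAEPCSat hM sps ev (.gi (φ.and ψ.dle) T.one .bot)) :
    LAEPCSat hM sps ev (.gi (φ.dge.and ψ.dle) T.one .bot) := by
  classical
  obtain ⟨i, hb⟩ := hs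
  have hXinv : Inv {i} (ev.e φ) := inv_e ev (sIn_of_belongsTo hb)
  rw [sat_gi1bot, ev.map_and, ev.map_dle] at h
  rw [sat_gi1bot, ev.map_and, ev.map_dge, ev.map_dle]
  rw [Set.eq_empty_iff_forall_notMem] at h ⊢
  rintro w ⟨hwU, hwD⟩
  obtain ⟨x, hx, hxle⟩ := (mem_pUcl_inv hXinv).1 hwU
  set w' := Function.update w i (x i) with hw'
  refine h w' ⟨?_, ?_⟩
  · refine (hXinv w' x ?_).2 hx
    rintro m rfl
    rw [hw', Function.update_self]
  · intro l
    obtain ⟨y, hy, hle⟩ := hwD l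
    rcases eq_or_ne l i with rfl | hne
    · exact ⟨y, hy, by rw [hw', Function.update_self]; exact le_trans hxle hle⟩
    · exact ⟨y, hy, by rw [hw', Function.update_of_ne hne]; exact hle⟩

theorem sound_a18b {φ : PExp M N K} (ψ : PExp M N K) (hs : ∃ i, BelongsTo i φ)
    (h : LAEPCSat hM sps ev (.gi (φ.and ψ.dge) T.one .bot)) :
    LAEPCSat hM sps ev (.gi (φ.dle.and ψ.dge) T.one .bot) := by
  classical
  obtain ⟨i, hb⟩ := hs
  have hXinv : Inv {i} (ev.e φ) := inv_e ev (sIn_of_belongsTo hb)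
  rw [sat_gi1bot, ev.map_and, ev.map_dge] at h
  rw [sat_gi1bot, ev.map_and, ev.map_dle, ev.map_dge]
  rw [Set.eq_empty_iff_forall_notMem] at h ⊢
  rintro w ⟨hwD, hwU⟩
  obtain ⟨x, hx, hxle⟩ := (mem_pDcl_inv hXinv).1 hwD
  set w' := Function.update w i (x i) with hw'
  refine h w' ⟨?_, ?_⟩
  · refine (hXinv w' x ?_).2 hx
    rintro m rfl
    rw [hw', Function.update_self]
  · intro l
    obtain ⟨y, hy, hle⟩ := hwU l
    rcases eq_or_ne l i with rfl | hne
    · exact ⟨y, hy, by rw [hw', Function.update_self]; exact le_trans hle hxle⟩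
    · exact ⟨y, hy, by rw [hw', Function.update_of_ne hne]; exact hle⟩

end LAEPCAux

namespace LAEPCAux

open PExp PFml

variable {M : ℕ} {N : Fin M → ℕ} {K : ℕ} {T : FiniteTNorm}
variable {W : Fin M → Type} [∀ i, Fintype (W i)] [∀ i, Nonempty (W i)]
  [∀ i, LinearOrder (W i)]
variable (hM : 0 < M) (sps : ∀ i, TOSimilaritySpace T (W i)) (ev : LAEPCEval M N K W)

/-! ### Soundness of (A19) -/

lemma diamond_mix {χ : PExp M N K} (hdi : IsDiamondP χ) (u : ∀ i, W i)
    (h : ∀ i, ∃ z ∈ ev.e χ, u i = z i) : u ∈ ev.e χ := by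
  cases χ with
  | dle φ =>
      rw [ev.map_dle] at h ⊢
      intro i
      obtain ⟨z, hz, hui⟩ := h i
      obtain ⟨x, hx, hle⟩ := hz i
      exact ⟨x, hx, hui ▸ hle⟩
  | dge φ =>
      rw [ev.map_dge] at h ⊢
      intro i
      obtain ⟨z, hz, hui⟩ := h i
      obtain ⟨x, hx, hle⟩ := hz i
      exact ⟨x, hx, hui ▸ hle⟩
  | svar i j => exact hdi.elim
  | uvar k => exact hdi.elim
  | bot => exact hdi.elim
  | top => exact hdi.elim
  | and φ ψ => exact hdi.elim
  | or φ ψ => exact hdi.elim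
  | not φ => exact hdi.elim

lemma diamond_conv {χ : PExp M N K} (hdi : IsDiamondP χ) {a b t : ∀ i, W i}
    (ha : a ∈ ev.e χ) (hb : b ∈ ev.e χ)
    (ht : ∀ i, (a i ≤ t i ∧ t i ≤ b i) ∨ (b i ≤ t i ∧ t i ≤ a i)) : t ∈ ev.e χ := by
  cases χ with
  | dle φ =>
      rw [ev.map_dle] at ha hb ⊢
      intro i
      rcases ht i with ⟨-, hle⟩ | ⟨-, hle⟩
      · obtain ⟨x, hx, hbx⟩ := hb i
        exact ⟨x, hx, le_trans hle hbx⟩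
      · obtain ⟨x, hx, hax⟩ := ha i
        exact ⟨x, hx, le_trans hle hax⟩
  | dge φ =>
      rw [ev.map_dge] at ha hb ⊢
      intro i
      rcases ht i with ⟨hge, -⟩ | ⟨hge, -⟩
      · obtain ⟨x, hx, hax⟩ := ha i
        exact ⟨x, hx, le_trans hax hge⟩
      · obtain ⟨x, hx, hbx⟩ := hb i
        exact ⟨x, hx, le_trans hbx hge⟩
  | svar i j => exact hdi.elim
  | uvar k => exact hdi.elim
  | bot => exact hdi.elim
  | top => exact hdi.elim
  | and φ ψ => exact hdi.elim
  | or φ ψ => exact hdi.elim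
  | not φ => exact hdi.elim

lemma diamondConj_conv {ρ : PExp M N K} (hρ : IsDiamondConjP ρ) {a b t : ∀ i, W i}
    (ha : a ∈ ev.e ρ) (hb : b ∈ ev.e ρ)
    (ht : ∀ i, (a i ≤ t i ∧ t i ≤ b i) ∨ (b i ≤ t i ∧ t i ≤ a i)) : t ∈ ev.e ρ := by
  obtain ⟨l, -, hdi, rfl⟩ := hρ
  rw [e_conjListP] at ha hb ⊢
  intro χ hχ
  exact diamond_conv ev (hdi χ hχ) (ha χ hχ) (hb χ hχ) ht

/-- The key one-coordinate fact: a point between two points that are `c`-close to `w`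
is `c`-close to `w`. -/
lemma between_close {i : Fin M} {c : T.V} {a b t w : W i}
    (hat : a ≤ t) (htb : t ≤ b)
    (hwa : (c : ℝ) ≤ ((sps i).S w a : ℝ)) (hwb : (c : ℝ) ≤ ((sps i).S w b : ℝ)) :
    (c : ℝ) ≤ ((sps i).S w t : ℝ) := by
  rcases le_total w t with hwt | htw
  · have h2 := (sps i).compat w t b hwt htb
    exact le_trans hwb (le_trans h2 (min_le_left _ _))
  · have h2 := (sps i).compat a t w hat htw
    have h3 : ((sps i).S a w : ℝ) ≤ ((sps i).S t w : ℝ) :=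
      le_trans h2 (min_le_right _ _)
    have h4 : (sps i).S w a = (sps i).S a w := (sps i).symm _ _
    have h5 : (sps i).S w t = (sps i).S t w := (sps i).symm _ _
    rw [h5]
    rw [h4] at hwa
    exact le_trans hwa h3

lemma median_pick {i : Fin M} {c : T.V} (w r s x : W i)
    (hr : (c : ℝ) ≤ ((sps i).S w r : ℝ)) (hs : (c : ℝ) ≤ ((sps i).S w s : ℝ)) :
    ∃ t : W i, ((r ≤ t ∧ t ≤ x) ∨ (x ≤ t ∧ t ≤ r)) ∧
      ((s ≤ t ∧ t ≤ x) ∨ (x ≤ t ∧ t ≤ s)) ∧ (c : ℝ) ≤ ((sps i).S w t : ℝ) := by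
  rcases le_total r s with hrs | hsr
  · rcases le_total x r with hxr | hrx
    · exact ⟨r, Or.inr ⟨hxr, le_refl r⟩, Or.inr ⟨hxr, hrs⟩, hr⟩
    · rcases le_total x s with hxs | hsx
      · exact ⟨x, Or.inl ⟨hrx, le_refl x⟩, Or.inr ⟨le_refl x, hxs⟩,
          between_close sps hrx hxs hr hs⟩
      · exact ⟨s, Or.inl ⟨hrs, hsx⟩, Or.inl ⟨le_refl s, hsx⟩, hs⟩
  · rcases le_total x s with hxs | hsx
    · exact ⟨s, Or.inr ⟨hxs, hsr⟩, Or.inr ⟨hxs, le_refl s⟩, hs⟩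
    · rcases le_total x r with hxr | hrx
      · exact ⟨x, Or.inr ⟨le_refl x, hxr⟩, Or.inl ⟨hsx, le_refl x⟩,
          between_close sps hsx hxr hs hr⟩
      · exact ⟨r, Or.inl ⟨le_refl r, hrx⟩, Or.inl ⟨hsr, hrx⟩, hr⟩

theorem sound_a19 {ρ σ : PExp M N K} (φ : PExp M N K) (c : T.V)
    (hρ : IsDiamondConjP ρ) (hσ : IsDiamondConjP σ)
    (h0 : ¬ LAEPCSat hM sps ev (.gi (ρ.and σ) T.one .bot))
    (h1 : LAEPCSat hM sps ev (.gi φ c ρ)) (h2 : LAEPCSat hM sps ev (.gi φ c σ)) :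
    LAEPCSat hM sps ev (.gi φ c (ρ.and σ)) := by
  classical
  rw [sat_gi1bot] at h0
  obtain ⟨x, hx⟩ := Set.nonempty_iff_ne_empty.2 h0
  rw [ev.map_and] at hx
  rw [sat_gi]
  intro w hw
  obtain ⟨r, hr, hSr⟩ := h1 hw
  obtain ⟨s, hs, hSs⟩ := h2 hw
  have pick : ∀ i, ∃ t : W i,
      ((r i ≤ t ∧ t ≤ x i) ∨ (x i ≤ t ∧ t ≤ r i)) ∧
      ((s i ≤ t ∧ t ≤ x i) ∨ (x i ≤ t ∧ t ≤ s i)) ∧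
      (c : ℝ) ≤ ((sps i).S (w i) t : ℝ) := fun i =>
    median_pick sps (w i) (r i) (s i) (x i)
      ((le_prodS_iff hM sps).1 hSr i) ((le_prodS_iff hM sps).1 hSs i)
  choose t htρ htσ htS using pick
  refine ⟨t, ?_, (le_prodS_iff hM sps).2 htS⟩
  rw [ev.map_and]
  exact ⟨diamondConj_conv ev hρ hr hx.1 htρ, diamondConj_conv ev hσ hs hx.2 htσ⟩

/-! ### Soundness of (A20) and (A21) -/

theorem sound_a20 {φ ψ φ' ψ' : PExp M N K} (c : T.V)
    (hd : DisjointSorted (φ.and ψ) (φ'.and ψ'))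
    (hne : ¬ LAEPCSat hM sps ev (.gi (φ.and φ') T.one .bot)) :
    (LAEPCSat hM sps ev ((PFml.gi φ c ψ).and (.gi φ' c ψ')) ↔
      LAEPCSat hM sps ev (.gi (φ.and φ') c (ψ.and ψ'))) := by
  classical
  set I : Set (Fin M) := {i | (φ.and ψ).usesSort i} with hI
  have hφ : Inv I (ev.e φ) := inv_e ev ⟨fun h => hd.1 (Or.inl h), fun i h => Or.inl h⟩
  have hψ : Inv I (ev.e ψ) := inv_e ev ⟨fun h => hd.1 (Or.inr h), fun i h => Or.inr h⟩
  have hφ' : Inv Iᶜ (ev.e φ') :=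
    inv_e ev ⟨fun h => hd.2.1 (Or.inl h), fun i h hIc => hd.2.2 i ⟨hIc, Or.inl h⟩⟩
  have hψ' : Inv Iᶜ (ev.e ψ') :=
    inv_e ev ⟨fun h => hd.2.1 (Or.inr h), fun i h hIc => hd.2.2 i ⟨hIc, Or.inr h⟩⟩
  rw [sat_gi1bot, ev.map_and] at hne
  obtain ⟨z, hzφ, hzφ'⟩ := Set.nonempty_iff_ne_empty.2 hne
  constructor
  · rintro ⟨hA, hB⟩ w hw
    rw [ev.map_and] at hw
    obtain ⟨b, hb, hSb⟩ := hA hw.1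
    obtain ⟨b', hb', hSb'⟩ := hB hw.2
    refine ⟨I.piecewise b b', ?_, ?_⟩
    · rw [ev.map_and]
      constructor
      · exact (hψ _ b fun i hi => Set.piecewise_eq_of_mem _ _ _ hi).2 hb
      · exact (hψ' _ b' fun i hi => Set.piecewise_eq_of_notMem _ _ _ hi).2 hb'
    · refine (le_prodS_iff hM sps).2 fun i => ?_
      by_cases hi : i ∈ I
      · rw [Set.piecewise_eq_of_mem _ _ _ hi]
        exact (le_prodS_iff hM sps).1 hSb i
      · rw [Set.piecewise_eq_of_notMem _ _ _ hi]
        exact (le_prodS_iff hM sps).1 hSb' i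
  · intro hC
    constructor
    · intro w hw
      have hw' : I.piecewise w z ∈ ev.e (φ.and φ') := by
        rw [ev.map_and]
        constructor
        · exact (hφ _ w fun i hi => Set.piecewise_eq_of_mem _ _ _ hi).2 hw
        · exact (hφ' _ z fun i hi => Set.piecewise_eq_of_notMem _ _ _ hi).2 hzφ'
      obtain ⟨u, hu, hSu⟩ := hC hw'
      rw [ev.map_and] at hu
      refine ⟨I.piecewise u w, ?_, ?_⟩
      · exact (hψ _ u fun i hi => Set.piecewise_eq_of_mem _ _ _ hi).2 hu.1
      · refine (le_prodS_iff hM sps).2 fun i => ?_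
        by_cases hi : i ∈ I
        · rw [Set.piecewise_eq_of_mem _ _ _ hi]
          have := (le_prodS_iff hM sps).1 hSu i
          rwa [Set.piecewise_eq_of_mem _ _ _ hi] at this
        · rw [Set.piecewise_eq_of_notMem _ _ _ hi,
            ((sps i).eq_one_iff (w i) (w i)).2 rfl]
          exact vle_one c
    · intro w hw
      have hw' : I.piecewise z w ∈ ev.e (φ.and φ') := by
        rw [ev.map_and]
        constructor
        · exact (hφ _ z fun i hi => Set.piecewise_eq_of_mem _ _ _ hi).2 hzφ
        · exact (hφ' _ w fun i hi => Set.piecewise_eq_of_notMem _ _ _ hi).2 hw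
      obtain ⟨u, hu, hSu⟩ := hC hw'
      rw [ev.map_and] at hu
      refine ⟨I.piecewise w u, ?_, ?_⟩
      · exact (hψ' _ u fun i hi => Set.piecewise_eq_of_notMem _ _ _ hi).2 hu.2
      · refine (le_prodS_iff hM sps).2 fun i => ?_
        by_cases hi : i ∈ I
        · rw [Set.piecewise_eq_of_mem _ _ _ hi,
            ((sps i).eq_one_iff (w i) (w i)).2 rfl]
          exact vle_one c
        · rw [Set.piecewise_eq_of_notMem _ _ _ hi]
          have := (le_prodS_iff hM sps).1 hSu i
          rwa [Set.piecewise_eq_of_notMem _ _ _ hi] at this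

theorem sound_a21a {χ ψ : PExp M N K} (φ : PExp M N K) (hd : DisjointSorted χ ψ)
    (h : LAEPCSat hM sps ev (.gi ((φ.dge.and χ).and ψ) T.one .bot)) :
    LAEPCSat hM sps ev ((PFml.gi (φ.dge.and χ) T.one .bot).or
      (.gi (φ.dge.and ψ) T.one .bot)) := by
  classical
  set I : Set (Fin M) := {i | χ.usesSort i} with hI
  have hχ : Inv I (ev.e χ) := inv_e ev ⟨hd.1, fun i hh => hh⟩
  have hψ : Inv Iᶜ (ev.e ψ) := inv_e ev ⟨hd.2.1, fun i hh hIc => hd.2.2 i ⟨hIc, hh⟩⟩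
  rw [sat_gi1bot, ev.map_and, ev.map_and, ev.map_dge] at h
  by_cases h1 : LAEPCSat hM sps ev (.gi (φ.dge.and χ) T.one .bot)
  · exact Or.inl h1
  · refine Or.inr ?_
    rw [sat_gi1bot, ev.map_and, ev.map_dge] at h1 ⊢
    obtain ⟨u, huU, huχ⟩ := Set.nonempty_iff_ne_empty.2 h1
    rw [Set.eq_empty_iff_forall_notMem] at h ⊢
    rintro w ⟨hwU, hwψ⟩
    refine h (I.piecewise u w) ⟨⟨?_, ?_⟩, ?_⟩
    · intro l
      by_cases hl : l ∈ I
      · obtain ⟨x, hx, hle⟩ := huU l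
        exact ⟨x, hx, by rw [Set.piecewise_eq_of_mem _ _ _ hl]; exact hle⟩
      · obtain ⟨x, hx, hle⟩ := hwU l
        exact ⟨x, hx, by rw [Set.piecewise_eq_of_notMem _ _ _ hl]; exact hle⟩
    · exact (hχ _ u fun i hi => Set.piecewise_eq_of_mem _ _ _ hi).2 huχ
    · exact (hψ _ w fun i hi => Set.piecewise_eq_of_notMem _ _ _ hi).2 hwψ

theorem sound_a21b {χ ψ : PExp M N K} (φ : PExp M N K) (hd : DisjointSorted χ ψ)
    (h : LAEPCSat hM sps ev (.gi ((φ.dle.and χ).and ψ) T.one .bot)) :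
    LAEPCSat hM sps ev ((PFml.gi (φ.dle.and χ) T.one .bot).or
      (.gi (φ.dle.and ψ) T.one .bot)) := by
  classical
  set I : Set (Fin M) := {i | χ.usesSort i} with hI
  have hχ : Inv I (ev.e χ) := inv_e ev ⟨hd.1, fun i hh => hh⟩
  have hψ : Inv Iᶜ (ev.e ψ) := inv_e ev ⟨hd.2.1, fun i hh hIc => hd.2.2 i ⟨hIc, hh⟩⟩
  rw [sat_gi1bot, ev.map_and, ev.map_and, ev.map_dle] at h
  by_cases h1 : LAEPCSat hM sps ev (.gi (φ.dle.and χ) T.one .bot)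
  · exact Or.inl h1
  · refine Or.inr ?_
    rw [sat_gi1bot, ev.map_and, ev.map_dle] at h1 ⊢
    obtain ⟨u, huU, huχ⟩ := Set.nonempty_iff_ne_empty.2 h1
    rw [Set.eq_empty_iff_forall_notMem] at h ⊢
    rintro w ⟨hwU, hwψ⟩
    refine h (I.piecewise u w) ⟨⟨?_, ?_⟩, ?_⟩
    · intro l
      by_cases hl : l ∈ I
      · obtain ⟨x, hx, hle⟩ := huU l
        exact ⟨x, hx, by rw [Set.piecewise_eq_of_mem _ _ _ hl]; exact hle⟩
      · obtain ⟨x, hx, hle⟩ := hwU l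
        exact ⟨x, hx, by rw [Set.piecewise_eq_of_notMem _ _ _ hl]; exact hle⟩
    · exact (hχ _ u fun i hi => Set.piecewise_eq_of_mem _ _ _ hi).2 huχ
    · exact (hψ _ w fun i hi => Set.piecewise_eq_of_notMem _ _ _ hi).2 hwψ

/-! ### The soundness theorem -/

theorem soundness {Th : Set (PFml M N K T.V)} {Φ : PFml M N K T.V}
    (hprov : LAEPCProv T Th Φ) (hTh : ∀ Ψ ∈ Th, LAEPCSat hM sps ev Ψ) :
    LAEPCSat hM sps ev Φ := by
  induction hprov with
  | hyp h => exact hTh _ h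
  | mp h1 h2 ih1 ih2 => exact (sat_imp hM sps ev).1 ih2 ih1
  | a1' h => exact sound_a1' hM sps ev h
  | a2 φ ψ =>
      rw [sat_imp]
      intro h
      rw [sat_gi, pNbhd_one] at h
      rw [sat_gi1bot, ev.map_and, ev.map_not, Set.eq_empty_iff_forall_notMem]
      rintro w ⟨h1, h2⟩
      exact h2 (h h1)
  | a3 φ ψ hdc =>
      rw [sat_imp]
      intro h
      exact fun w hw => pNbhd_anti hM sps hdc _ (h hw)
  | a4 φ ψ =>
      rw [sat_imp]
      intro h
      rw [sat_not, sat_gi1bot] at h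
      rw [sat_gi, pNbhd_zero hM sps (Set.nonempty_iff_ne_empty.2 h)]
      exact Set.subset_univ _
  | a5 φ c =>
      rw [sat_imp]
      intro h
      rw [sat_gi, ev.map_bot, pNbhd_empty] at h
      rw [sat_gi1bot]
      exact Set.subset_empty_iff.1 h
  | a6 c hδ hε =>
      rw [sat_imp]
      intro h
      exact sound_a6 hM sps ev c hδ hε h.1 h.2
  | a7 φ ψ χ c =>
      rw [sat_imp]
      intro h
      rw [sat_gi, ev.map_or]
      exact Set.union_subset h.1 h.2
  | a8 φ ψ c hε =>
      rw [sat_imp]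
      intro h
      exact sound_a8 hM sps ev φ ψ c hε h
  | a9 φ ψ χ c d =>
      rw [sat_imp]
      intro h
      intro w hw
      exact pNbhd_comp hM sps _ (pNbhd_mono hM sps h.2 (h.1 hw))
  | a10 =>
      rw [sat_not, sat_gi1bot, ev.map_top]
      intro hc
      have x : ∀ i, W i := fun i => Classical.arbitrary _
      exact Set.notMem_empty x (hc ▸ Set.mem_univ x)
  | a11 h => exact sound_a11 hM sps ev h
  | a12a φ =>
      rw [sat_gi, pNbhd_one, ev.map_dle]
      exact subset_pDcl _
  | a12b φ =>
      rw [sat_gi, pNbhd_one, ev.map_dge]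
      exact subset_pUcl _
  | a13a φ =>
      rw [sat_gi, pNbhd_one, ev.map_dle, ev.map_dle]
      exact pDcl_idem _
  | a13b φ =>
      rw [sat_gi, pNbhd_one, ev.map_dge, ev.map_dge]
      exact pUcl_idem _
  | a14a =>
      rw [sat_gi1bot, ev.map_dle, ev.map_bot]
      exact pDcl_empty hM
  | a14b =>
      rw [sat_gi1bot, ev.map_dge, ev.map_bot]
      exact pUcl_empty hM
  | a15a hs => exact sound_a15a hM sps ev hs
  | a15b hs => exact sound_a15b hM sps ev hs
  | a16 hε => exact sound_a16 hM sps ev hε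
  | a17a φ ψ c =>
      rw [sat_imp]
      exact sound_a17a hM sps ev
  | a17b φ ψ c =>
      rw [sat_imp]
      exact sound_a17b hM sps ev
  | a18a ψ hs =>
      rw [sat_imp]
      exact sound_a18a hM sps ev ψ hs
  | a18b ψ hs =>
      rw [sat_imp]
      exact sound_a18b hM sps ev ψ hs
  | a19 φ c hρ hσ =>
      rw [sat_imp]
      intro h
      exact sound_a19 hM sps ev φ c hρ hσ h.1.1 h.1.2 h.2
  | a20 c hd =>
      rw [sat_imp]
      intro h
      have hiff := sound_a20 hM sps ev c hd h
      exact ⟨(sat_imp hM sps ev).2 hiff.1, (sat_imp hM sps ev).2 hiff.2⟩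
  | a21a φ hd =>
      rw [sat_imp]
      exact sound_a21a hM sps ev φ hd
  | a21b φ hd =>
      rw [sat_imp]
      exact sound_a21b hM sps ev φ hd
  | a22 k hε => exact sound_a22 hM sps ev k hε

end LAEPCAux

namespace LAEPCAux

open PExp PFml

variable {M : ℕ} {N : Fin M → ℕ} {K : ℕ} {T : FiniteTNorm}

/-! ### Structural facts about provability -/

theorem prov_mono {Th Th' : Set (PFml M N K T.V)} (hsub : Th ⊆ Th')
    {Φ : PFml M N K T.V} (h : LAEPCProv T Th Φ) : LAEPCProv T Th' Φ := by
  induction h with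
  | hyp h => exact .hyp (hsub h)
  | mp h1 h2 ih1 ih2 => exact ih1.mp ih2
  | a1' h => exact .a1' h
  | a2 φ ψ => exact .a2 φ ψ
  | a3 φ ψ hdc => exact .a3 φ ψ hdc
  | a4 φ ψ => exact .a4 φ ψ
  | a5 φ c => exact .a5 φ c
  | a6 c hδ hε => exact .a6 c hδ hε
  | a7 φ ψ χ c => exact .a7 φ ψ χ c
  | a8 φ ψ c hε => exact .a8 φ ψ c hε
  | a9 φ ψ χ c d => exact .a9 φ ψ χ c d
  | a10 => exact .a10
  | a11 h => exact .a11 h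
  | a12a φ => exact .a12a φ
  | a12b φ => exact .a12b φ
  | a13a φ => exact .a13a φ
  | a13b φ => exact .a13b φ
  | a14a => exact .a14a
  | a14b => exact .a14b
  | a15a hs => exact .a15a hs
  | a15b hs => exact .a15b hs
  | a16 hε => exact .a16 hε
  | a17a φ ψ c => exact .a17a φ ψ c
  | a17b φ ψ c => exact .a17b φ ψ c
  | a18a ψ hs => exact .a18a ψ hs
  | a18b ψ hs => exact .a18b ψ hs
  | a19 φ c hρ hσ => exact .a19 φ c hρ hσ
  | a20 c hd => exact .a20 c hd
  | a21a φ hd => exact .a21a φ hd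
  | a21b φ hd => exact .a21b φ hd
  | a22 k hε => exact .a22 k hε

theorem prov_finite {Th : Set (PFml M N K T.V)} {Φ : PFml M N K T.V}
    (h : LAEPCProv T Th Φ) :
    ∃ s : Set (PFml M N K T.V), s ⊆ Th ∧ s.Finite ∧ LAEPCProv T s Φ := by
  induction h with
  | hyp h => exact ⟨{_}, by simpa using h, Set.finite_singleton _, .hyp rfl⟩
  | mp h1 h2 ih1 ih2 =>
      obtain ⟨s1, hs1, hf1, hp1⟩ := ih1
      obtain ⟨s2, hs2, hf2, hp2⟩ := ih2
      exact ⟨s1 ∪ s2, Set.union_subset hs1 hs2, hf1.union hf2,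
        (prov_mono Set.subset_union_left hp1).mp
          (prov_mono Set.subset_union_right hp2)⟩
  | a1' h => exact ⟨∅, Set.empty_subset _, Set.finite_empty, .a1' h⟩
  | a2 φ ψ => exact ⟨∅, Set.empty_subset _, Set.finite_empty, .a2 φ ψ⟩
  | a3 φ ψ hdc => exact ⟨∅, Set.empty_subset _, Set.finite_empty, .a3 φ ψ hdc⟩
  | a4 φ ψ => exact ⟨∅, Set.empty_subset _, Set.finite_empty, .a4 φ ψ⟩
  | a5 φ c => exact ⟨∅, Set.empty_subset _, Set.finite_empty, .a5 φ c⟩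
  | a6 c hδ hε => exact ⟨∅, Set.empty_subset _, Set.finite_empty, .a6 c hδ hε⟩
  | a7 φ ψ χ c => exact ⟨∅, Set.empty_subset _, Set.finite_empty, .a7 φ ψ χ c⟩
  | a8 φ ψ c hε => exact ⟨∅, Set.empty_subset _, Set.finite_empty, .a8 φ ψ c hε⟩
  | a9 φ ψ χ c d => exact ⟨∅, Set.empty_subset _, Set.finite_empty, .a9 φ ψ χ c d⟩
  | a10 => exact ⟨∅, Set.empty_subset _, Set.finite_empty, .a10⟩
  | a11 h => exact ⟨∅, Set.empty_subset _, Set.finite_empty, .a11 h⟩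
  | a12a φ => exact ⟨∅, Set.empty_subset _, Set.finite_empty, .a12a φ⟩
  | a12b φ => exact ⟨∅, Set.empty_subset _, Set.finite_empty, .a12b φ⟩
  | a13a φ => exact ⟨∅, Set.empty_subset _, Set.finite_empty, .a13a φ⟩
  | a13b φ => exact ⟨∅, Set.empty_subset _, Set.finite_empty, .a13b φ⟩
  | a14a => exact ⟨∅, Set.empty_subset _, Set.finite_empty, .a14a⟩
  | a14b => exact ⟨∅, Set.empty_subset _, Set.finite_empty, .a14b⟩
  | a15a hs => exact ⟨∅, Set.empty_subset _, Set.finite_empty, .a15a hs⟩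
  | a15b hs => exact ⟨∅, Set.empty_subset _, Set.finite_empty, .a15b hs⟩
  | a16 hε => exact ⟨∅, Set.empty_subset _, Set.finite_empty, .a16 hε⟩
  | a17a φ ψ c => exact ⟨∅, Set.empty_subset _, Set.finite_empty, .a17a φ ψ c⟩
  | a17b φ ψ c => exact ⟨∅, Set.empty_subset _, Set.finite_empty, .a17b φ ψ c⟩
  | a18a ψ hs => exact ⟨∅, Set.empty_subset _, Set.finite_empty, .a18a ψ hs⟩
  | a18b ψ hs => exact ⟨∅, Set.empty_subset _, Set.finite_empty, .a18b ψ hs⟩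
  | a19 φ c hρ hσ => exact ⟨∅, Set.empty_subset _, Set.finite_empty, .a19 φ c hρ hσ⟩
  | a20 c hd => exact ⟨∅, Set.empty_subset _, Set.finite_empty, .a20 c hd⟩
  | a21a φ hd => exact ⟨∅, Set.empty_subset _, Set.finite_empty, .a21a φ hd⟩
  | a21b φ hd => exact ⟨∅, Set.empty_subset _, Set.finite_empty, .a21b φ hd⟩
  | a22 k hε => exact ⟨∅, Set.empty_subset _, Set.finite_empty, .a22 k hε⟩

theorem imp_intro {Th : Set (PFml M N K T.V)} {Ψ X : PFml M N K T.V}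
    (h : LAEPCProv T Th X) : LAEPCProv T Th (Ψ.imp X) :=
  pl1 (fun g hg => by rw [peval_imp]; simp [hg]) h

theorem imp_self' {Th : Set (PFml M N K T.V)} (Ψ : PFml M N K T.V) :
    LAEPCProv T Th (Ψ.imp Ψ) :=
  LAEPCProv.a11 fun g => by rw [peval_imp]; cases Ψ.peval g <;> rfl

theorem deduction {Th : Set (PFml M N K T.V)} {Ψ X : PFml M N K T.V}
    (h : LAEPCProv T (insert Ψ Th) X) : LAEPCProv T Th (Ψ.imp X) := by
  induction h with
  | hyp h =>
      rcases h with rfl | h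
      · exact imp_self' _
      · exact imp_intro (.hyp h)
  | @mp Φ₁ Φ₂ h1 h2 ih1 ih2 =>
      refine pl2 (fun g hg1 hg2 => ?_) ih1 ih2
      rw [peval_imp] at hg1 hg2 ⊢
      rw [peval_imp] at hg2
      revert hg1 hg2
      cases Ψ.peval g <;> cases Φ₁.peval g <;> cases Φ₂.peval g <;> simp
  | a1' h => exact imp_intro (.a1' h)
  | a2 φ ψ => exact imp_intro (.a2 φ ψ)
  | a3 φ ψ hdc => exact imp_intro (.a3 φ ψ hdc)
  | a4 φ ψ => exact imp_intro (.a4 φ ψ)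
  | a5 φ c => exact imp_intro (.a5 φ c)
  | a6 c hδ hε => exact imp_intro (.a6 c hδ hε)
  | a7 φ ψ χ c => exact imp_intro (.a7 φ ψ χ c)
  | a8 φ ψ c hε => exact imp_intro (.a8 φ ψ c hε)
  | a9 φ ψ χ c d => exact imp_intro (.a9 φ ψ χ c d)
  | a10 => exact imp_intro .a10
  | a11 h => exact imp_intro (.a11 h)
  | a12a φ => exact imp_intro (.a12a φ)
  | a12b φ => exact imp_intro (.a12b φ)
  | a13a φ => exact imp_intro (.a13a φ)
  | a13b φ => exact imp_intro (.a13b φ)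
  | a14a => exact imp_intro .a14a
  | a14b => exact imp_intro .a14b
  | a15a hs => exact imp_intro (.a15a hs)
  | a15b hs => exact imp_intro (.a15b hs)
  | a16 hε => exact imp_intro (.a16 hε)
  | a17a φ ψ c => exact imp_intro (.a17a φ ψ c)
  | a17b φ ψ c => exact imp_intro (.a17b φ ψ c)
  | a18a ψ' hs => exact imp_intro (.a18a ψ' hs)
  | a18b ψ' hs => exact imp_intro (.a18b ψ' hs)
  | a19 φ c hρ hσ => exact imp_intro (.a19 φ c hρ hσ)
  | a20 c hd => exact imp_intro (.a20 c hd)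
  | a21a φ hd => exact imp_intro (.a21a φ hd)
  | a21b φ hd => exact imp_intro (.a21b φ hd)
  | a22 k hε => exact imp_intro (.a22 k hε)

/-- The falsum formula. -/
def FF (M : ℕ) (N : Fin M → ℕ) (K : ℕ) (T : FiniteTNorm) : PFml M N K T.V :=
  .gi .top T.one .bot

theorem absurd_rule {Th : Set (PFml M N K T.V)} {Φ : PFml M N K T.V}
    (h : LAEPCProv T Th (FF M N K T)) : LAEPCProv T Th Φ :=
  pl2 (fun g h1 h2 => by
    simp only [FF, PFml.peval, Bool.not_eq_true'] at h1 h2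
    rw [h1] at h2; cases h2) h (LAEPCProv.a10 (Th := Th))

/-- Lindenbaum: every consistent theory extends to a negation-complete consistent
theory. -/
theorem lindenbaum {Th : Set (PFml M N K T.V)} (hcon : ¬ LAEPCProv T Th (FF M N K T)) :
    ∃ Δ : Set (PFml M N K T.V), Th ⊆ Δ ∧ ¬ LAEPCProv T Δ (FF M N K T) ∧
      ∀ Ψ, ¬ LAEPCProv T Δ Ψ → LAEPCProv T Δ Ψ.not := by
  set S : Set (Set (PFml M N K T.V)) := {Δ | ¬ LAEPCProv T Δ (FF M N K T)} with hS
  have hzorn := zorn_subset_nonempty S ?_ Th hcon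
  · obtain ⟨Δ, hsub, hmax⟩ := hzorn
    refine ⟨Δ, hsub, hmax.1, fun Ψ hΨ => ?_⟩
    by_cases hc : LAEPCProv T (insert Ψ.not Δ) (FF M N K T)
    · have hded := deduction hc
      -- from (¬Ψ → F) and ¬F conclude Ψ
      have : LAEPCProv T Δ Ψ := by
        refine pl2 (fun g h1 h2 => ?_) hded (LAEPCProv.a10 (Th := Δ))
        rw [peval_imp] at h1
        simp only [FF, PFml.peval, Bool.not_eq_true'] at h1 h2 ⊢
        revert h1
        cases hx : Ψ.peval g
        · simp only [hx, Bool.not_false, Bool.true_or]  -- h1 : peval F = true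
          intro h1
          rw [h2] at h1; cases h1
        · intro _; rfl
      exact absurd this hΨ
    · exact .hyp (hmax.2 hc (Set.subset_insert _ _) (Set.mem_insert _ _))
  · intro c hcS hchain hcne
    refine ⟨⋃₀ c, ?_, fun s hs => Set.subset_sUnion_of_mem hs⟩
    intro hprov
    obtain ⟨s, hssub, hsfin, hsprov⟩ := prov_finite hprov
    -- find a member of the chain containing s
    obtain ⟨t0, ht0⟩ := hcne
    have key : ∀ L : List (PFml M N K T.V), (∀ x ∈ L, x ∈ ⋃₀ c) →
        ∃ t ∈ c, ∀ x ∈ L, x ∈ t := by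
      intro L
      induction L with
      | nil => exact fun _ => ⟨t0, ht0, by simp⟩
      | cons a L ih =>
          intro h
          obtain ⟨t, htc, hts⟩ := ih fun x hx => h x (by simp [hx])
          obtain ⟨u, huc, hau⟩ := h a (by simp)
          rcases hchain.total htc huc with hh | hh
          · exact ⟨u, huc, by
              intro x hx
              rcases List.mem_cons.1 hx with rfl | hx
              · exact hau
              · exact hh (hts x hx)⟩
          · exact ⟨t, htc, by
              intro x hx
              rcases List.mem_cons.1 hx with rfl | hx
              · exact hh hau
              · exact hts x hx⟩
    obtain ⟨t, htc, hts⟩ := key hsfin.toFinset.toList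
      (fun x hx => hssub (by rwa [Finset.mem_toList, Set.Finite.mem_toFinset] at hx))
    have hsub' : s ⊆ t := fun x hx => hts x
      (by rw [Finset.mem_toList, Set.Finite.mem_toFinset]; exact hx)
    exact hcS htc (prov_mono hsub' hsprov)

/-! ### API for a maximal consistent theory -/

section MaxTheory

variable (Δ : Set (PFml M N K T.V))

/-- Consistency of a basic expression over `Δ`. -/
def ECon (α : PExp M N K) : Prop := ¬ LAEPCProv T Δ (.gi α T.one .bot)

variable {Δ}

theorem tv_not_iff (hcon : ¬ LAEPCProv T Δ (FF M N K T))
    (hneg : ∀ Ψ, ¬ LAEPCProv T Δ Ψ → LAEPCProv T Δ Ψ.not) {Ψ : PFml M N K T.V} :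
    LAEPCProv T Δ Ψ.not ↔ ¬ LAEPCProv T Δ Ψ := by
  constructor
  · intro h1 h2
    refine hcon (pl2 (fun g p1 p2 => ?_) h1 h2)
    simp only [PFml.peval, Bool.not_eq_true'] at p1
    rw [p1] at p2; cases p2
  · exact hneg Ψ

theorem tv_or_iff (hneg : ∀ Ψ, ¬ LAEPCProv T Δ Ψ → LAEPCProv T Δ Ψ.not)
    {Φ Ψ : PFml M N K T.V} :
    LAEPCProv T Δ (Φ.or Ψ) ↔ LAEPCProv T Δ Φ ∨ LAEPCProv T Δ Ψ := by
  constructor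
  · intro h
    by_cases hΦ : LAEPCProv T Δ Φ
    · exact Or.inl hΦ
    · refine Or.inr (pl2 (fun g p1 p2 => ?_) h (hneg Φ hΦ))
      simp only [PFml.peval, Bool.or_eq_true, Bool.not_eq_true'] at p1 p2 ⊢
      rcases p1 with p1 | p1
      · rw [p2] at p1; cases p1
      · exact p1
  · rintro (h | h)
    · exact pl1 (fun g p => by simp [PFml.peval, p]) h
    · exact pl1 (fun g p => by simp [PFml.peval, p]) h

theorem tv_and_iff {Φ Ψ : PFml M N K T.V} :
    LAEPCProv T Δ (Φ.and Ψ) ↔ LAEPCProv T Δ Φ ∧ LAEPCProv T Δ Ψ := by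
  constructor
  · intro h
    constructor
    · exact pl1 (fun g p => by simp only [PFml.peval, Bool.and_eq_true] at p; exact p.1) h
    · exact pl1 (fun g p => by simp only [PFml.peval, Bool.and_eq_true] at p; exact p.2) h
  · rintro ⟨h1, h2⟩
    exact pand h1 h2

/-- Extract a propositional iff from a provable `iff` formula. -/
theorem tv_iff_elim {Φ Ψ : PFml M N K T.V} (h : LAEPCProv T Δ (Φ.iff Ψ)) :
    (LAEPCProv T Δ Φ ↔ LAEPCProv T Δ Ψ) := by
  rw [PFml.iff] at h
  have h1 := (tv_and_iff.1 h).1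
  have h2 := (tv_and_iff.1 h).2
  exact ⟨fun hΦ => hΦ.mp h1, fun hΨ => hΨ.mp h2⟩

theorem econ_mono {α β : PExp M N K}
    (h : LAEPCProv T Δ (.gi α T.one β)) (hα : ECon Δ α) : ECon Δ β :=
  fun hc => hα (gtrans11 h hc)

theorem econ_top (hcon : ¬ LAEPCProv T Δ (FF M N K T)) : ECon Δ (.top : PExp M N K) :=
  hcon

/-- m.e.c.s decide every basic expression. -/
theorem mec_dec (hneg : ∀ Ψ, ¬ LAEPCProv T Δ Ψ → LAEPCProv T Δ Ψ.not)
    {ε : PExp M N K} (hε : IsMecP ε) (φ : PExp M N K) :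
    LAEPCProv T Δ (.gi ε T.one φ) ∨ LAEPCProv T Δ (.gi ε T.one φ.not) := by
  have h0 : LAEPCProv T Δ (.gi ε T.one (φ.or φ.not)) :=
    gtaut fun v _ => by
      simp only [evalB]
      cases evalB v φ <;> rfl
  exact (tv_or_iff hneg).1 (h0.mp (.a8 φ φ.not T.one hε))

theorem mec_dec_of_con (hneg : ∀ Ψ, ¬ LAEPCProv T Δ Ψ → LAEPCProv T Δ Ψ.not)
    {ε φ : PExp M N K} (hε : IsMecP ε)
    (hc : ECon Δ (ε.and φ)) : LAEPCProv T Δ (.gi ε T.one φ) := by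
  rcases mec_dec hneg hε φ with h | h
  · exact h
  · exact absurd (gincons h) hc

theorem prov_imp_con {ε φ : PExp M N K} (hε : ECon Δ ε)
    (h : LAEPCProv T Δ (.gi ε T.one φ)) : ECon Δ (ε.and φ) :=
  econ_mono (gconj1 (grefl ε) h) hε

/-- a m.e.c. entailing `c`-splits a disjunction list. -/
theorem gdisj_split (hneg : ∀ Ψ, ¬ LAEPCProv T Δ Ψ → LAEPCProv T Δ Ψ.not)
    {ε : PExp M N K} (hε : IsMecP ε) (hc : ECon Δ ε) {c : T.V} :
    ∀ {l : List (PExp M N K)}, LAEPCProv T Δ (.gi ε c (disjListP l)) →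
      ∃ χ ∈ l, LAEPCProv T Δ (.gi ε c χ) := by
  intro l
  induction l with
  | nil =>
      intro h
      exact absurd (h.mp (.a5 ε c)) hc
  | cons φ r ih =>
      intro h
      cases r with
      | nil => exact ⟨φ, by simp, h⟩
      | cons b s =>
          rw [disjListP_cons _ (by simp)] at h
          rcases (tv_or_iff hneg).1 (h.mp (.a8 _ _ c hε)) with h1 | h1
          · exact ⟨φ, by simp, h1⟩
          · obtain ⟨χ, hχ, hp⟩ := ih h1
            exact ⟨χ, by simp [hχ], hp⟩

end MaxTheory

end LAEPCAux

namespace LAEPCAux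

open PExp PFml

variable {M : ℕ} {N : Fin M → ℕ} {K : ℕ} {T : FiniteTNorm}
variable {Δ : Set (PFml M N K T.V)}

/-! ### Canonical-model syntactic lemmas -/

/-- The sort-`i` part of a pattern. -/
def gof (g : Patt M N) (i : Fin M) : Fin (N i) → Bool := fun j => g ⟨i, j⟩

/-- Pattern built from per-sort patterns. -/
def pfun (w : ∀ j : Fin M, Fin (N j) → Bool) : Patt M N := fun p => w p.1 p.2

lemma gof_pfun (w : ∀ j : Fin M, Fin (N j) → Bool) (i : Fin M) : gof (pfun w) i = w i :=
  rfl

/-- The conjunction of the one-sorted parts of a pattern along a list of sorts. -/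
noncomputable def sortConj (g : Patt M N) (l : List (Fin M)) : PExp M N K :=
  conjListP (l.map fun i => osMec K i (gof g i))

lemma evalB_sortConj (v : PExp M N K → Bool) (g : Patt M N) (l : List (Fin M)) :
    evalB v (sortConj g l) = true ↔ ∀ i ∈ l, ∀ j, v (.svar i j) = g ⟨i, j⟩ := by
  rw [sortConj, evalB_conjListP, List.all_eq_true]
  constructor
  · intro h i hi j
    exact (evalB_osMec v i (gof g i)).1 (h _ (List.mem_map_of_mem hi)) j
  · rintro h χ hχ
    obtain ⟨i, hi, rfl⟩ := List.mem_map.1 hχ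
    exact (evalB_osMec v i (gof g i)).2 (h i hi)

noncomputable def sortsL (M : ℕ) : List (Fin M) := (Finset.univ : Finset (Fin M)).toList

lemma mem_sortsL (i : Fin M) : i ∈ sortsL M := by simp [sortsL, Finset.mem_toList]

lemma nodup_sortsL : (sortsL M).Nodup := Finset.nodup_toList _

theorem mec_to_sortConj (g : Patt M N) :
    LAEPCProv T Δ (.gi (mecOf K g) T.one (sortConj g (sortsL M))) :=
  gtaut fun v hv => (evalB_sortConj v g _).2 fun i _ j => (evalB_mecOf v g).1 hv ⟨i, j⟩

theorem sortConj_to_mec (g : Patt M N) :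
    LAEPCProv T Δ (.gi (sortConj g (sortsL M)) T.one (mecOf K g)) :=
  gtaut fun v hv => (evalB_mecOf v g).2 fun p => by
    have := (evalB_sortConj v g _).1 hv p.1 (mem_sortsL p.1) p.2
    rwa [Sigma.eta] at this

lemma SIn_sortConj (g : Patt M N) (l : List (Fin M)) :
    SIn {i' | i' ∈ l} (sortConj g l : PExp M N K) := by
  refine SIn_conjListP fun χ hχ => ?_
  obtain ⟨i, hi, rfl⟩ := List.mem_map.1 hχ
  exact SIn_osMec.mono (by simpa using hi)

/-- Disjoint-sorted merging of consistency, via (A21a) with `φ := ⊤`. -/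
theorem econ_merge (hneg : ∀ Ψ, ¬ LAEPCProv T Δ Ψ → LAEPCProv T Δ Ψ.not)
    {χ ψ : PExp M N K} (hd : DisjointSorted χ ψ)
    (hχ : ECon Δ χ) (hψ : ECon Δ ψ) : ECon Δ (χ.and ψ) := by
  intro hP
  have key : LAEPCProv T Δ (.gi (((PExp.top.dge).and χ).and ψ) T.one .bot) := by
    refine gtrans11 (gtaut fun v => ?_) hP
    simp only [evalB]
    cases v (PExp.dge .top) <;> cases evalB v χ <;> cases evalB v ψ <;> simp
  rcases (tv_or_iff hneg).1 (key.mp (.a21a .top hd)) with h | h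
  · refine hχ (gtrans11 ?_ h)
    exact gconj1 (gtrans11 (gtaut (ψ := (.top : PExp M N K)) fun v _ => rfl)
      (.a12b .top)) (grefl χ)
  · refine hψ (gtrans11 ?_ h)
    exact gconj1 (gtrans11 (gtaut (ψ := (.top : PExp M N K)) fun v _ => rfl)
      (.a12b .top)) (grefl ψ)

theorem econ_sortConj_list (hcon : ¬ LAEPCProv T Δ (FF M N K T))
    (hneg : ∀ Ψ, ¬ LAEPCProv T Δ Ψ → LAEPCProv T Δ Ψ.not) (g : Patt M N) :
    ∀ l : List (Fin M), l.Nodup →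
      (∀ i ∈ l, ECon Δ (osMec K i (gof g i))) → ECon Δ (sortConj g l) := by
  intro l
  induction l with
  | nil => intro _ _; exact econ_top hcon
  | cons i l ih =>
      intro hnd h
      cases l with
      | nil => exact h i (by simp)
      | cons b s =>
          rw [sortConj, List.map_cons, conjListP_cons _ (by simp)]
          have hdisj : DisjointSorted (osMec K i (gof g i) : PExp M N K)
              (sortConj g (b :: s)) := by
            refine disjointSorted_of_SIn SIn_osMec (SIn_sortConj g (b :: s)) ?_
            rintro x rfl
            exact (List.nodup_cons.1 hnd).1
          exact econ_merge hneg hdisj (h i (by simp))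
            (ih (List.nodup_cons.1 hnd).2 fun i' hi' => h i' (by simp [hi']))

theorem econ_mec_of_parts (hcon : ¬ LAEPCProv T Δ (FF M N K T))
    (hneg : ∀ Ψ, ¬ LAEPCProv T Δ Ψ → LAEPCProv T Δ Ψ.not) (g : Patt M N)
    (h : ∀ i, ECon Δ (osMec K i (gof g i))) : ECon Δ (mecOf K g) :=
  econ_mono (sortConj_to_mec g)
    (econ_sortConj_list hcon hneg g (sortsL M) nodup_sortsL fun i _ => h i)

theorem econ_parts_of_mec {g : Patt M N} (h : ECon Δ (mecOf K g)) (i : Fin M) :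
    ECon Δ (osMec K i (gof g i)) :=
  econ_mono (mec_proj g i) h

/-! ### The canonical order on one-sorted m.e.c.s -/

section SortOrder

variable {i : Fin M}

theorem dle_total (hneg : ∀ Ψ, ¬ LAEPCProv T Δ Ψ → LAEPCProv T Δ Ψ.not)
    (f f' : Fin (N i) → Bool) :
    LAEPCProv T Δ (.gi (osMec K i f).dle T.one (osMec K i f').dle) ∨
      LAEPCProv T Δ (.gi (osMec K i f').dle T.one (osMec K i f).dle) :=
  (tv_or_iff hneg).1 (.a15a ⟨i, belongsTo_osMec, belongsTo_osMec⟩)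

theorem dge_total (hneg : ∀ Ψ, ¬ LAEPCProv T Δ Ψ → LAEPCProv T Δ Ψ.not)
    (f f' : Fin (N i) → Bool) :
    LAEPCProv T Δ (.gi (osMec K i f).dge T.one (osMec K i f').dge) ∨
      LAEPCProv T Δ (.gi (osMec K i f').dge T.one (osMec K i f).dge) :=
  (tv_or_iff hneg).1 (.a15b ⟨i, belongsTo_osMec, belongsTo_osMec⟩)

theorem eps_eq_of_1 {f f' : Fin (N i) → Bool} (hf : ECon Δ (osMec K i f))
    (h : LAEPCProv T Δ (.gi (osMec K i f) T.one (osMec K i f'))) : f = f' := by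
  by_contra hne
  exact hf (gtrans11 (gconj1 (grefl _) h) (osMec_clash hne))

theorem eps_to_eps_of_dlege {f f' : Fin (N i) → Bool}
    (h1 : LAEPCProv T Δ (.gi (osMec K i f).dle T.one (osMec K i f').dle))
    (h2 : LAEPCProv T Δ (.gi (osMec K i f).dge T.one (osMec K i f').dge)) :
    LAEPCProv T Δ (.gi (osMec K i f) T.one (osMec K i f')) :=
  gtrans11 (gconj1 (gtrans11 (.a12a _) h1) (gtrans11 (.a12b _) h2))
    (.a16 (isOneSortedMecP_osMec i f'))

/-- (OT): `◇≤`-comparison implies the reverse `◇≥`-comparison. -/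
theorem dle_to_dge (hneg : ∀ Ψ, ¬ LAEPCProv T Δ Ψ → LAEPCProv T Δ Ψ.not)
    {f f' : Fin (N i) → Bool} (hf : ECon Δ (osMec K i f))
    (h : LAEPCProv T Δ (.gi (osMec K i f).dle T.one (osMec K i f').dle)) :
    LAEPCProv T Δ (.gi (osMec K i f').dge T.one (osMec K i f).dge) := by
  rcases dge_total hneg f' f with h2 | h2
  · exact h2
  · have := eps_eq_of_1 hf (eps_to_eps_of_dlege h h2)
    rw [this]
    exact grefl _

theorem dge_to_dle (hneg : ∀ Ψ, ¬ LAEPCProv T Δ Ψ → LAEPCProv T Δ Ψ.not)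
    {f f' : Fin (N i) → Bool} (hf' : ECon Δ (osMec K i f'))
    (h : LAEPCProv T Δ (.gi (osMec K i f').dge T.one (osMec K i f).dge)) :
    LAEPCProv T Δ (.gi (osMec K i f).dle T.one (osMec K i f').dle) := by
  rcases dle_total hneg f f' with h2 | h2
  · exact h2
  · have := eps_eq_of_1 hf' (eps_to_eps_of_dlege h2 h)
    rw [this]
    exact grefl _

/-- A one-sorted m.e.c. meeting a consistent conjunction is consistent. -/
theorem econ_of_con_dle {f' : Fin (N i) → Bool} {α : PExp M N K}
    (hc : ECon Δ (α.and (osMec K i f').dle)) : ECon Δ (osMec K i f') := by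
  intro hP
  have hdle : LAEPCProv T Δ (.gi (osMec K i f').dle T.one .bot) :=
    gtrans11 (hP.mp (.a17a _ _ T.one)) .a14a
  refine hc (gtrans11 (gtaut fun v => ?_) hdle)
  simp only [evalB]
  cases evalB v α <;> cases v ((osMec K i f').dle) <;> simp

theorem econ_of_con_dge {f' : Fin (N i) → Bool} {α : PExp M N K}
    (hc : ECon Δ (α.and (osMec K i f').dge)) : ECon Δ (osMec K i f') := by
  intro hP
  have hdge : LAEPCProv T Δ (.gi (osMec K i f').dge T.one .bot) :=
    gtrans11 (hP.mp (.a17b _ _ T.one)) .a14b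
  refine hc (gtrans11 (gtaut fun v => ?_) hdge)
  simp only [evalB]
  cases evalB v α <;> cases v ((osMec K i f').dge) <;> simp

/-- (OL1): consistency with a `◇≤` implies the order. -/
theorem con_to_dle (hneg : ∀ Ψ, ¬ LAEPCProv T Δ Ψ → LAEPCProv T Δ Ψ.not)
    {f f' : Fin (N i) → Bool} (hf : ECon Δ (osMec K i f))
    (hc : ECon Δ ((osMec K i f).and (osMec K i f').dle)) :
    LAEPCProv T Δ (.gi (osMec K i f).dle T.one (osMec K i f').dle) := by
  have hf' : ECon Δ (osMec K i f') := econ_of_con_dle hc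
  rcases dle_total hneg f f' with h | h
  · exact h
  · rcases dge_total hneg f f' with h2 | h2
    · by_cases hfe : f = f'
      · rw [hfe]; exact grefl _
      · exfalso
        set γ : PExp M N K := (osMec K i f).and (osMec K i f').dle with hγ
        have hγf : LAEPCProv T Δ (.gi γ T.one (osMec K i f)) :=
          gtaut fun v => by
            simp only [hγ, evalB]
            cases evalB v (osMec K i f) <;> simp
        have hγdle : LAEPCProv T Δ (.gi γ T.one (osMec K i f').dle) :=
          gtaut fun v => by
            simp only [hγ, evalB]
            cases evalB v (osMec K i f) <;> cases v ((osMec K i f').dle) <;> simp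
        have hγdge : LAEPCProv T Δ (.gi γ T.one (osMec K i f').dge) :=
          gtrans11 hγf (gtrans11 (.a12b _) h2)
        have hγf' : LAEPCProv T Δ (.gi γ T.one (osMec K i f')) :=
          gtrans11 (gconj1 hγdle hγdge) (.a16 (isOneSortedMecP_osMec i f'))
        exact hc (gtrans11 (gconj1 hγf hγf') (osMec_clash hfe))
    · have := eps_eq_of_1 hf' (eps_to_eps_of_dlege h h2)
      rw [← this]
      exact grefl _

/-- (OL1, dual): consistency with a `◇≥` implies the reverse order. -/
theorem con_to_dge (hneg : ∀ Ψ, ¬ LAEPCProv T Δ Ψ → LAEPCProv T Δ Ψ.not)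
    {f f' : Fin (N i) → Bool} (hf : ECon Δ (osMec K i f))
    (hc : ECon Δ ((osMec K i f).and (osMec K i f').dge)) :
    LAEPCProv T Δ (.gi (osMec K i f).dge T.one (osMec K i f').dge) := by
  have hf' : ECon Δ (osMec K i f') := econ_of_con_dge hc
  rcases dge_total hneg f f' with h | h
  · exact h
  · rcases dle_total hneg f f' with h2 | h2
    · by_cases hfe : f = f'
      · rw [hfe]; exact grefl _
      · exfalso
        set γ : PExp M N K := (osMec K i f).and (osMec K i f').dge with hγ
        have hγf : LAEPCProv T Δ (.gi γ T.one (osMec K i f)) :=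
          gtaut fun v => by
            simp only [hγ, evalB]
            cases evalB v (osMec K i f) <;> simp
        have hγdge : LAEPCProv T Δ (.gi γ T.one (osMec K i f').dge) :=
          gtaut fun v => by
            simp only [hγ, evalB]
            cases evalB v (osMec K i f) <;> cases v ((osMec K i f').dge) <;> simp
        have hγdle : LAEPCProv T Δ (.gi γ T.one (osMec K i f').dle) :=
          gtrans11 hγf (gtrans11 (.a12a _) h2)
        have hγf' : LAEPCProv T Δ (.gi γ T.one (osMec K i f')) :=
          gtrans11 (gconj1 hγdle hγdge) (.a16 (isOneSortedMecP_osMec i f'))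
        exact hc (gtrans11 (gconj1 hγf hγf') (osMec_clash hfe))
    · have := eps_eq_of_1 hf' (eps_to_eps_of_dlege h2 h)
      rw [← this]
      exact grefl _

theorem dle_to_con {f f' : Fin (N i) → Bool} (hf : ECon Δ (osMec K i f))
    (h : LAEPCProv T Δ (.gi (osMec K i f).dle T.one (osMec K i f').dle)) :
    ECon Δ ((osMec K i f).and (osMec K i f').dle) :=
  prov_imp_con hf (gtrans11 (.a12a _) h)

theorem dge_to_con {f f' : Fin (N i) → Bool} (hf : ECon Δ (osMec K i f))
    (h : LAEPCProv T Δ (.gi (osMec K i f).dge T.one (osMec K i f').dge)) :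
    ECon Δ ((osMec K i f).and (osMec K i f').dge) :=
  prov_imp_con hf (gtrans11 (.a12b _) h)

/-- A maximal element of a list of one-sorted patterns w.r.t. the `◇≤`-order. -/
theorem dle_max (hneg : ∀ Ψ, ¬ LAEPCProv T Δ Ψ → LAEPCProv T Δ Ψ.not) :
    ∀ l : List (Fin (N i) → Bool), l ≠ [] →
      ∃ fm ∈ l, ∀ f ∈ l,
        LAEPCProv T Δ (.gi (osMec K i f).dle T.one (osMec K i fm).dle) := by
  intro l
  induction l with
  | nil => intro h; exact absurd rfl h
  | cons f l ih =>
      intro _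
      cases l with
      | nil =>
          refine ⟨f, by simp, ?_⟩
          intro f' hf'
          rcases List.mem_singleton.1 hf' with rfl
          exact grefl _
      | cons b s =>
          obtain ⟨fm, hfm, hmax⟩ := ih (by simp)
          rcases dle_total hneg f fm with h | h
          · refine ⟨fm, by simp [hfm], ?_⟩
            intro f' hf'
            rcases List.mem_cons.1 hf' with rfl | hf'
            · exact h
            · exact hmax f' hf'
          · refine ⟨f, by simp, ?_⟩
            intro f' hf'
            rcases List.mem_cons.1 hf' with rfl | hf'
            · exact grefl _
            · exact gtrans11 (hmax f' hf') h

theorem dge_max (hneg : ∀ Ψ, ¬ LAEPCProv T Δ Ψ → LAEPCProv T Δ Ψ.not) :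
    ∀ l : List (Fin (N i) → Bool), l ≠ [] →
      ∃ fm ∈ l, ∀ f ∈ l,
        LAEPCProv T Δ (.gi (osMec K i f).dge T.one (osMec K i fm).dge) := by
  intro l
  induction l with
  | nil => intro h; exact absurd rfl h
  | cons f l ih =>
      intro _
      cases l with
      | nil =>
          refine ⟨f, by simp, ?_⟩
          intro f' hf'
          rcases List.mem_singleton.1 hf' with rfl
          exact grefl _
      | cons b s =>
          obtain ⟨fm, hfm, hmax⟩ := ih (by simp)
          rcases dge_total hneg f fm with h | h
          · refine ⟨fm, by simp [hfm], ?_⟩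
            intro f' hf'
            rcases List.mem_cons.1 hf' with rfl | hf'
            · exact h
            · exact hmax f' hf'
          · refine ⟨f, by simp, ?_⟩
            intro f' hf'
            rcases List.mem_cons.1 hf' with rfl | hf'
            · exact grefl _
            · exact gtrans11 (hmax f' hf') h

/-- There is a consistent one-sorted m.e.c. of each sort. -/
theorem exists_con_osMec (hcon : ¬ LAEPCProv T Δ (FF M N K T)) (i : Fin M) :
    ∃ f : Fin (N i) → Bool, ECon Δ (osMec K i f) := by
  by_contra hno
  push_neg at hno
  simp only [ECon, not_not] at hno
  refine hcon (gtrans11 (top_to_osMecs i) (gdisj_elim_list fun χ hχ => ?_))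
  obtain ⟨f, -, rfl⟩ := List.mem_map.1 hχ
  exact hno f

end SortOrder

/-! ### The 18a/18b/21a/21b consistency transfers -/

theorem a18a_con {i : Fin M} {f : Fin (N i) → Bool} {ψ : PExp M N K}
    (h : ECon Δ (((osMec K i f).dge).and ψ.dle)) : ECon Δ ((osMec K i f).and ψ.dle) :=
  fun hP => h (hP.mp (.a18a ψ ⟨i, belongsTo_osMec⟩))

theorem a18b_con {i : Fin M} {f : Fin (N i) → Bool} {ψ : PExp M N K}
    (h : ECon Δ (((osMec K i f).dle).and ψ.dge)) : ECon Δ ((osMec K i f).and ψ.dge) :=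
  fun hP => h (hP.mp (.a18b ψ ⟨i, belongsTo_osMec⟩))

theorem a21b_con (hneg : ∀ Ψ, ¬ LAEPCProv T Δ Ψ → LAEPCProv T Δ Ψ.not)
    {φ χ ψ : PExp M N K} (hd : DisjointSorted χ ψ)
    (h1 : ECon Δ (φ.dle.and χ)) (h2 : ECon Δ (φ.dle.and ψ)) :
    ECon Δ ((φ.dle.and χ).and ψ) := by
  intro hP
  rcases (tv_or_iff hneg).1 (hP.mp (.a21b φ hd)) with h | h
  · exact h1 h
  · exact h2 h

theorem a21a_con (hneg : ∀ Ψ, ¬ LAEPCProv T Δ Ψ → LAEPCProv T Δ Ψ.not)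
    {φ χ ψ : PExp M N K} (hd : DisjointSorted χ ψ)
    (h1 : ECon Δ (φ.dge.and χ)) (h2 : ECon Δ (φ.dge.and ψ)) :
    ECon Δ ((φ.dge.and χ).and ψ) := by
  intro hP
  rcases (tv_or_iff hneg).1 (hP.mp (.a21a φ hd)) with h | h
  · exact h1 h
  · exact h2 h

/-- Componentwise consistency with `◇≤ψ` merges into full consistency. -/
theorem con_mec_dle (hM : 0 < M)
    (hneg : ∀ Ψ, ¬ LAEPCProv T Δ Ψ → LAEPCProv T Δ Ψ.not) (g : Patt M N)
    (ψ : PExp M N K) (h : ∀ i, ECon Δ ((osMec K i (gof g i)).and ψ.dle)) :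
    ECon Δ ((mecOf K g).and ψ.dle) := by
  have aux : ∀ l : List (Fin M), l.Nodup → ECon Δ (ψ.dle.and (sortConj g l)) := by
    intro l
    induction l with
    | nil =>
        intro _
        refine econ_mono (gtaut fun v => ?_) (h ⟨0, hM⟩)
        simp only [evalB, sortConj, List.map_nil, conjListP]
        cases v (ψ.dle) <;> cases evalB v (osMec K ⟨0, hM⟩ (gof g ⟨0, hM⟩)) <;> simp
    | cons i l ih =>
        intro hnd
        have h1 : ECon Δ (ψ.dle.and (osMec K i (gof g i))) := by
          refine econ_mono (gtaut fun v => ?_) (h i)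
          simp only [evalB]
          cases v (ψ.dle) <;> cases evalB v (osMec K i (gof g i)) <;> simp
        have h2 := ih (List.nodup_cons.1 hnd).2
        have hdisj : DisjointSorted (osMec K i (gof g i) : PExp M N K) (sortConj g l) := by
          refine disjointSorted_of_SIn SIn_osMec (SIn_sortConj g l) ?_
          rintro x rfl
          exact (List.nodup_cons.1 hnd).1
        have h3 := a21b_con hneg hdisj h1 h2
        refine econ_mono (gtaut fun v hv => ?_) h3
        simp only [evalB, Bool.and_eq_true] at hv ⊢
        obtain ⟨⟨hψ', hi'⟩, hl'⟩ := hv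
        refine ⟨hψ', ?_⟩
        refine (evalB_sortConj v g (i :: l)).2 fun i' hi'' j => ?_
        rcases List.mem_cons.1 hi'' with rfl | hi''
        · exact (evalB_osMec v i' (gof g i')).1 hi' j
        · exact (evalB_sortConj v g l).1 hl' i' hi'' j
  refine econ_mono (gtaut fun v hv => ?_) (aux (sortsL M) nodup_sortsL)
  simp only [evalB, Bool.and_eq_true] at hv ⊢
  refine ⟨(evalB_mecOf v g).2 fun p => ?_, hv.1⟩
  have := (evalB_sortConj v g (sortsL M)).1 hv.2 p.1 (mem_sortsL p.1) p.2
  rwa [Sigma.eta] at this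

theorem con_mec_dge (hM : 0 < M)
    (hneg : ∀ Ψ, ¬ LAEPCProv T Δ Ψ → LAEPCProv T Δ Ψ.not) (g : Patt M N)
    (ψ : PExp M N K) (h : ∀ i, ECon Δ ((osMec K i (gof g i)).and ψ.dge)) :
    ECon Δ ((mecOf K g).and ψ.dge) := by
  have aux : ∀ l : List (Fin M), l.Nodup → ECon Δ (ψ.dge.and (sortConj g l)) := by
    intro l
    induction l with
    | nil =>
        intro _
        refine econ_mono (gtaut fun v => ?_) (h ⟨0, hM⟩)
        simp only [evalB, sortConj, List.map_nil, conjListP]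
        cases v (ψ.dge) <;> cases evalB v (osMec K ⟨0, hM⟩ (gof g ⟨0, hM⟩)) <;> simp
    | cons i l ih =>
        intro hnd
        have h1 : ECon Δ (ψ.dge.and (osMec K i (gof g i))) := by
          refine econ_mono (gtaut fun v => ?_) (h i)
          simp only [evalB]
          cases v (ψ.dge) <;> cases evalB v (osMec K i (gof g i)) <;> simp
        have h2 := ih (List.nodup_cons.1 hnd).2
        have hdisj : DisjointSorted (osMec K i (gof g i) : PExp M N K) (sortConj g l) := by
          refine disjointSorted_of_SIn SIn_osMec (SIn_sortConj g l) ?_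
          rintro x rfl
          exact (List.nodup_cons.1 hnd).1
        have h3 := a21a_con hneg hdisj h1 h2
        refine econ_mono (gtaut fun v hv => ?_) h3
        simp only [evalB, Bool.and_eq_true] at hv ⊢
        obtain ⟨⟨hψ', hi'⟩, hl'⟩ := hv
        refine ⟨hψ', ?_⟩
        refine (evalB_sortConj v g (i :: l)).2 fun i' hi'' j => ?_
        rcases List.mem_cons.1 hi'' with rfl | hi''
        · exact (evalB_osMec v i' (gof g i')).1 hi' j
        · exact (evalB_sortConj v g l).1 hl' i' hi'' j
  refine econ_mono (gtaut fun v hv => ?_) (aux (sortsL M) nodup_sortsL)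
  simp only [evalB, Bool.and_eq_true] at hv ⊢
  refine ⟨(evalB_mecOf v g).2 fun p => ?_, hv.1⟩
  have := (evalB_sortConj v g (sortsL M)).1 hv.2 p.1 (mem_sortsL p.1) p.2
  rwa [Sigma.eta] at this

/-! ### Normal form: every basic expression is a disjunction of good m.e.c.s -/

open Classical in
/-- The list of consistent patterns whose m.e.c. entails `φ`. -/
noncomputable def good (Δ : Set (PFml M N K T.V)) (φ : PExp M N K) : List (Patt M N) :=
  ((Finset.univ : Finset (Patt M N)).filter fun g =>
    LAEPCProv T Δ (.gi (mecOf K g) T.one φ) ∧ ECon Δ (mecOf K g)).toList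

open Classical in
lemma mem_good {φ : PExp M N K} {g : Patt M N} :
    g ∈ good Δ φ ↔ LAEPCProv T Δ (.gi (mecOf K g) T.one φ) ∧ ECon Δ (mecOf K g) := by
  simp [good, Finset.mem_toList, Finset.mem_filter]

theorem nfl1 (hneg : ∀ Ψ, ¬ LAEPCProv T Δ Ψ → LAEPCProv T Δ Ψ.not)
    (φ : PExp M N K) :
    LAEPCProv T Δ (.gi φ T.one (disjListP ((good Δ φ).map (mecOf K)))) := by
  have step1 : LAEPCProv T Δ (.gi φ T.one
      (disjListP ((allPatts M N).map fun g => (mecOf K g).and φ))) := by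
    refine gtaut fun v hv => ?_
    rw [evalB_disjListP, List.any_eq_true]
    refine ⟨(mecOf K (fun p => v (.svar p.1 p.2))).and φ,
      List.mem_map_of_mem (mem_allPatts _), ?_⟩
    simp only [evalB, Bool.and_eq_true]
    exact ⟨(evalB_mecOf v _).2 fun p => rfl, hv⟩
  refine gtrans11 step1 (gdisj_elim_list fun χ hχ => ?_)
  obtain ⟨g, -, rfl⟩ := List.mem_map.1 hχ
  by_cases hg : g ∈ good Δ φ
  · refine gtrans11 (gtaut fun v hv => ?_) (gdisj_mem (List.mem_map_of_mem hg))
    simp only [evalB, Bool.and_eq_true] at hv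
    exact hv.1
  · rw [mem_good] at hg
    by_cases hcg : ECon Δ (mecOf K g)
    · have hnp : ¬ LAEPCProv T Δ (.gi (mecOf K g) T.one φ) := fun hp => hg ⟨hp, hcg⟩
      rcases mec_dec hneg (isMecP_mecOf g) φ with hp | hp
      · exact absurd hp hnp
      · refine gtrans11 (gtrans11 ?_ (gincons hp)) (gtaut fun v hv => by
          simp only [evalB] at hv
          cases hv)
        exact gtaut fun v hv => by
          simp only [evalB, Bool.and_eq_true] at hv ⊢
          exact ⟨hv.1, hv.2⟩
    · simp only [ECon, not_not] at hcg
      refine gtrans11 (gtrans11 (gtaut fun v hv => ?_) hcg) (gtaut fun v hv => by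
        simp only [evalB] at hv
        cases hv)
      simp only [evalB, Bool.and_eq_true] at hv
      exact hv.1

theorem nfl2 (φ : PExp M N K) :
    LAEPCProv T Δ (.gi (disjListP ((good Δ φ).map (mecOf K))) T.one φ) := by
  refine gdisj_elim_list fun χ hχ => ?_
  obtain ⟨g, hg, rfl⟩ := List.mem_map.1 hχ
  exact (mem_good.1 hg).1

end LAEPCAux

namespace LAEPCAux

open PExp PFml

variable {M : ℕ} {N : Fin M → ℕ} {K : ℕ} {T : FiniteTNorm}
variable (Δ : Set (PFml M N K T.V))

/-! ### The canonical worlds of sort `i` -/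

def CW (i : Fin M) : Type := {f : Fin (N i) → Bool // ECon Δ (osMec K i f)}

instance (i : Fin M) : Finite (CW Δ i) := Subtype.finite

noncomputable def cwFintype (i : Fin M) : Fintype (CW Δ i) := Fintype.ofFinite _

theorem cw_nonempty (hcon : ¬ LAEPCProv T Δ (FF M N K T)) (i : Fin M) :
    Nonempty (CW Δ i) := by
  obtain ⟨f, hf⟩ := exists_con_osMec hcon i
  exact ⟨⟨f, hf⟩⟩

variable {Δ}

/-- The canonical order relation. -/
def cwLe {i : Fin M} (u x : CW Δ i) : Prop :=
  LAEPCProv T Δ (.gi (osMec K i u.1).dle T.one (osMec K i x.1).dle)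

theorem cwLe_refl {i : Fin M} (u : CW Δ i) : cwLe u u := grefl _

theorem cwLe_trans {i : Fin M} {u v w : CW Δ i} (h1 : cwLe u v) (h2 : cwLe v w) :
    cwLe u w := gtrans11 h1 h2

theorem cwLe_antisymm (hneg : ∀ Ψ, ¬ LAEPCProv T Δ Ψ → LAEPCProv T Δ Ψ.not)
    {i : Fin M} {u x : CW Δ i} (h1 : cwLe u x) (h2 : cwLe x u) : u = x := by
  have hge : LAEPCProv T Δ (.gi (osMec K i x.1).dge T.one (osMec K i u.1).dge) :=
    dle_to_dge hneg u.2 h1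
  exact Subtype.ext (eps_eq_of_1 x.2 (eps_to_eps_of_dlege h2 hge)).symm

theorem cwLe_total (hneg : ∀ Ψ, ¬ LAEPCProv T Δ Ψ → LAEPCProv T Δ Ψ.not)
    {i : Fin M} (u x : CW Δ i) : cwLe u x ∨ cwLe x u := dle_total hneg u.1 x.1

open Classical in
noncomputable def cwKey {i : Fin M} (u : CW Δ i) : ℕ :=
  letI := cwFintype Δ i
  (Finset.univ.filter fun x : CW Δ i => cwLe x u).card

open Classical in
theorem cwKey_le_iff (hneg : ∀ Ψ, ¬ LAEPCProv T Δ Ψ → LAEPCProv T Δ Ψ.not)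
    {i : Fin M} (u x : CW Δ i) : cwLe u x ↔ cwKey u ≤ cwKey x := by
  letI := cwFintype Δ i
  constructor
  · intro h
    refine Finset.card_le_card fun y hy => ?_
    rw [Finset.mem_filter] at hy ⊢
    exact ⟨hy.1, cwLe_trans hy.2 h⟩
  · intro h
    by_contra hc
    rcases cwLe_total hneg u x with h' | h'
    · exact hc h'
    · have hsub : (Finset.univ.filter fun y : CW Δ i => cwLe y x) ⊆
          (Finset.univ.filter fun y : CW Δ i => cwLe y u) := fun y hy => by
        rw [Finset.mem_filter] at hy ⊢
        exact ⟨hy.1, cwLe_trans hy.2 h'⟩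
      have hu : u ∈ (Finset.univ.filter fun y : CW Δ i => cwLe y u) := by
        rw [Finset.mem_filter]
        exact ⟨Finset.mem_univ _, cwLe_refl u⟩
      have hux : u ∉ (Finset.univ.filter fun y : CW Δ i => cwLe y x) := by
        rw [Finset.mem_filter]
        rintro ⟨-, hc'⟩
        exact hc hc'
      have : cwKey x < cwKey u :=
        Finset.card_lt_card ((Finset.ssubset_iff_of_subset hsub).2 ⟨u, hu, hux⟩)
      omega
  
theorem cwKey_inj (hneg : ∀ Ψ, ¬ LAEPCProv T Δ Ψ → LAEPCProv T Δ Ψ.not)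
    {i : Fin M} : Function.Injective (cwKey (Δ := Δ) (i := i)) := by
  intro u x h
  rcases cwLe_total hneg u x with h' | h'
  · refine cwLe_antisymm hneg h' ?_
    exact (cwKey_le_iff hneg x u).2 (le_of_eq h.symm)
  · refine cwLe_antisymm hneg ((cwKey_le_iff hneg u x).2 (le_of_eq h)) h'

noncomputable def cwLO (hneg : ∀ Ψ, ¬ LAEPCProv T Δ Ψ → LAEPCProv T Δ Ψ.not)
    (i : Fin M) : LinearOrder (CW Δ i) :=
  LinearOrder.lift' (cwKey (Δ := Δ) (i := i)) (cwKey_inj hneg)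

theorem cwLO_le_iff (hneg : ∀ Ψ, ¬ LAEPCProv T Δ Ψ → LAEPCProv T Δ Ψ.not)
    {i : Fin M} (u x : CW Δ i) :
    @LE.le _ (cwLO hneg i).toLE u x ↔ cwLe u x :=
  (cwKey_le_iff hneg u x).symm

/-! ### The canonical similarity -/

open Classical in
noncomputable def cwS (hneg : ∀ Ψ, ¬ LAEPCProv T Δ Ψ → LAEPCProv T Δ Ψ.not)
    {i : Fin M} (u x : CW Δ i) : T.V :=
  letI : Fintype T.V := T.finite.fintype
  (Finset.univ.filter fun c : T.V =>
    LAEPCProv T Δ (.gi (osMec K i u.1) c (osMec K i x.1))).max'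
    ⟨T.zero, by
      rw [Finset.mem_filter]
      exact ⟨Finset.mem_univ _, (hneg _ x.2).mp (.a4 _ _)⟩⟩

open Classical in
theorem le_cwS_iff (hneg : ∀ Ψ, ¬ LAEPCProv T Δ Ψ → LAEPCProv T Δ Ψ.not)
    {i : Fin M} {u x : CW Δ i} {c : T.V} :
    (c : ℝ) ≤ (cwS hneg u x : ℝ) ↔
      LAEPCProv T Δ (.gi (osMec K i u.1) c (osMec K i x.1)) := by
  letI : Fintype T.V := T.finite.fintype
  constructor
  · intro h
    have hmem := Finset.max'_mem (α := T.V)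
      (Finset.univ.filter fun c : T.V =>
        LAEPCProv T Δ (.gi (osMec K i u.1) c (osMec K i x.1)))
      ⟨T.zero, by
        rw [Finset.mem_filter]
        exact ⟨Finset.mem_univ _, (hneg _ x.2).mp (.a4 _ _)⟩⟩
    rw [Finset.mem_filter] at hmem
    exact gweak h hmem.2
  · intro h
    exact Subtype.coe_le_coe.2 (Finset.le_max' _ c (by
      rw [Finset.mem_filter]
      exact ⟨Finset.mem_univ _, h⟩))

/-! ### Splitting graded implications between m.e.c.s along the sorts (A20) -/

theorem a20iter (hcon : ¬ LAEPCProv T Δ (FF M N K T))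
    (hneg : ∀ Ψ, ¬ LAEPCProv T Δ Ψ → LAEPCProv T Δ Ψ.not)
    {g h : Patt M N} (hg : ∀ j, ECon Δ (osMec K j (gof g j)))
    (hh : ∀ j, ECon Δ (osMec K j (gof h j))) (c : T.V) :
    LAEPCProv T Δ (.gi (mecOf K g) c (mecOf K h)) ↔
      ∀ j, LAEPCProv T Δ (.gi (osMec K j (gof g j)) c (osMec K j (gof h j))) := by
  have aux : ∀ l : List (Fin M), l.Nodup →
      (LAEPCProv T Δ (.gi (sortConj g l) c (sortConj h l)) ↔
        ∀ j ∈ l, LAEPCProv T Δ (.gi (osMec K j (gof g j)) c (osMec K j (gof h j)))) := by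
    intro l
    induction l with
    | nil =>
        intro _
        simp only [sortConj, List.map_nil, conjListP]
        constructor
        · intro _ j hj
          simp at hj
        · intro _
          exact (grefl (.top : PExp M N K)).mp (.a3 _ _ (vle_one c))
    | cons j l ih =>
        intro hnd
        cases l with
        | nil =>
            simp only [sortConj, List.map_cons, List.map_nil, conjListP]
            constructor
            · intro hp j' hj'
              rcases List.mem_singleton.1 hj' with rfl
              exact hp
            · intro hp
              exact hp j (by simp)
        | cons b s =>
            have hshape : ∀ g' : Patt M N, sortConj g' (j :: b :: s) =
                (osMec K j (gof g' j)).and (sortConj g' (b :: s) : PExp M N K) := by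
              intro g'
              rw [sortConj, List.map_cons, conjListP_cons _ (by simp)]
              rfl
            have hdisj : DisjointSorted
                ((osMec K j (gof g j)).and (osMec K j (gof h j)) : PExp M N K)
                ((sortConj g (b :: s)).and (sortConj h (b :: s)) : PExp M N K) := by
              refine disjointSorted_of_SIn (SIn_and SIn_osMec SIn_osMec)
                (SIn_and (SIn_sortConj g _) (SIn_sortConj h _)) ?_
              rintro x rfl
              exact (List.nodup_cons.1 hnd).1
            have hcongl : ECon Δ
                ((osMec K j (gof g j)).and (sortConj g (b :: s))) := by
              have := econ_sortConj_list hcon hneg g (j :: b :: s) hnd fun i _ => hg i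
              rwa [hshape g] at this
            have hiff := tv_iff_elim (Φ := (PFml.gi (osMec K j (gof g j)) c
                (osMec K j (gof h j))).and
                (.gi (sortConj g (b :: s)) c (sortConj h (b :: s))))
              (Ψ := .gi ((osMec K j (gof g j)).and (sortConj g (b :: s))) c
                ((osMec K j (gof h j)).and (sortConj h (b :: s))))
              ((hneg _ hcongl).mp (.a20 c hdisj))
            rw [hshape g, hshape h]
            rw [← hiff, tv_and_iff, ih (List.nodup_cons.1 hnd).2]
            constructor
            · rintro ⟨h1, h2⟩ j' hj'
              rcases List.mem_cons.1 hj' with rfl | hj'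
              · exact h1
              · exact h2 j' hj'
            · intro hp
              exact ⟨hp j (by simp), fun j' hj' => hp j' (by simp [hj'])⟩
  constructor
  · intro hp j
    have := (aux (sortsL M) nodup_sortsL).1
      (gtrans1c (sortConj_to_mec g) (gtransc1 hp (mec_to_sortConj h)))
    exact this j (mem_sortsL j)
  · intro hp
    refine gtrans1c (mec_to_sortConj g) (gtransc1 ?_ (sortConj_to_mec h))
    exact (aux (sortsL M) nodup_sortsL).2 fun j _ => hp j

/-! ### Symmetry of the canonical similarity -/

/-- A full pattern extending `f` at sort `i` by consistent parts. -/
noncomputable def extPatt (hcon : ¬ LAEPCProv T Δ (FF M N K T)) (i : Fin M)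
    (f : Fin (N i) → Bool) : Patt M N :=
  pfun (Function.update (fun j => (exists_con_osMec hcon j).choose) i f)

lemma gof_extPatt_self (hcon : ¬ LAEPCProv T Δ (FF M N K T)) (i : Fin M)
    (f : Fin (N i) → Bool) : gof (extPatt hcon i f) i = f := by
  show Function.update (fun j => (exists_con_osMec hcon j).choose) i f i = f
  rw [Function.update_self]

lemma gof_extPatt_other (hcon : ¬ LAEPCProv T Δ (FF M N K T)) {i j : Fin M}
    (hne : j ≠ i) (f : Fin (N i) → Bool) :
    gof (extPatt hcon i f) j = (exists_con_osMec hcon j).choose := by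
  show Function.update (fun j => (exists_con_osMec hcon j).choose) i f j = _
  rw [Function.update_of_ne hne]

lemma extPatt_con (hcon : ¬ LAEPCProv T Δ (FF M N K T)) {i : Fin M}
    {f : Fin (N i) → Bool} (hf : ECon Δ (osMec K i f)) (j : Fin M) :
    ECon Δ (osMec K j (gof (extPatt hcon i f) j)) := by
  rcases eq_or_ne j i with rfl | hne
  · rwa [gof_extPatt_self]
  · rw [gof_extPatt_other hcon hne]
    exact (exists_con_osMec hcon j).choose_spec

theorem prov_eps_symm (hcon : ¬ LAEPCProv T Δ (FF M N K T))
    (hneg : ∀ Ψ, ¬ LAEPCProv T Δ Ψ → LAEPCProv T Δ Ψ.not)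
    {i : Fin M} (u x : CW Δ i) {c : T.V}
    (h : LAEPCProv T Δ (.gi (osMec K i u.1) c (osMec K i x.1))) :
    LAEPCProv T Δ (.gi (osMec K i x.1) c (osMec K i u.1)) := by
  set gU := extPatt hcon i u.1 with hgU
  set gX := extPatt hcon i x.1 with hgX
  have hgu := extPatt_con hcon u.2
  have hgx := extPatt_con hcon x.2
  have huxfull : LAEPCProv T Δ (.gi (mecOf K gU) c (mecOf K gX)) := by
    refine (a20iter hcon hneg hgu hgx c).2 fun j => ?_
    rcases eq_or_ne j i with rfl | hne
    · rw [gof_extPatt_self, gof_extPatt_self]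
      exact h
    · rw [gof_extPatt_other hcon hne, gof_extPatt_other hcon hne]
      exact (grefl _).mp (.a3 _ _ (vle_one c))
  have hsym : LAEPCProv T Δ (.gi (mecOf K gX) c (mecOf K gU)) := by
    have hconU : LAEPCProv T Δ (PFml.not (.gi (mecOf K gU) T.one .bot)) :=
      hneg _ (econ_mec_of_parts hcon hneg gU hgu)
    exact (pand hconU huxfull).mp (.a6 c (isMecP_mecOf gU) (isMecP_mecOf gX))
  have := (a20iter hcon hneg hgx hgu c).1 hsym i
  rwa [gof_extPatt_self, gof_extPatt_self] at this

end LAEPCAux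

namespace LAEPCAux

open PExp PFml

variable {M : ℕ} {N : Fin M → ℕ} {K : ℕ} {T : FiniteTNorm}
variable {Δ : Set (PFml M N K T.V)}

lemma isDC_dle (φ : PExp M N K) : IsDiamondConjP φ.dle :=
  ⟨[φ.dle], by simp, fun χ hχ => by
    rw [List.mem_singleton] at hχ
    subst hχ
    trivial, rfl⟩

lemma isDC_dge (φ : PExp M N K) : IsDiamondConjP φ.dge :=
  ⟨[φ.dge], by simp, fun χ hχ => by
    rw [List.mem_singleton] at hχ
    subst hχ
    trivial, rfl⟩

theorem cw_compat (hcon : ¬ LAEPCProv T Δ (FF M N K T))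
    (hneg : ∀ Ψ, ¬ LAEPCProv T Δ Ψ → LAEPCProv T Δ Ψ.not)
    {i : Fin M} (u v w : CW Δ i) (h1 : cwLe u v) (h2 : cwLe v w) :
    (cwS hneg u w : ℝ) ≤ min (cwS hneg u v : ℝ) (cwS hneg v w : ℝ) := by
  set c : T.V := cwS hneg u w with hcdef
  have hc : LAEPCProv T Δ (.gi (osMec K i u.1) c (osMec K i w.1)) :=
    (le_cwS_iff hneg).1 (le_refl _)
  have hsym : LAEPCProv T Δ (.gi (osMec K i w.1) c (osMec K i u.1)) :=
    prov_eps_symm hcon hneg u w hc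
  have dge1 : LAEPCProv T Δ (.gi (osMec K i v.1).dge T.one (osMec K i u.1).dge) :=
    dle_to_dge hneg u.2 h1
  -- εv ⤳c εu
  have hρ : LAEPCProv T Δ (.gi (osMec K i v.1) c (osMec K i u.1).dle) :=
    gtrans1c (gtrans11 (.a12a _) h2) (hsym.mp (.a17a _ _ c))
  have hσ : LAEPCProv T Δ (.gi (osMec K i v.1) c (osMec K i u.1).dge) :=
    gweak (vle_one c) (gtrans11 (.a12b _) dge1)
  have hconj : ECon Δ ((osMec K i u.1).dle.and (osMec K i u.1).dge) :=
    econ_mono (gconj1 (.a12a _) (.a12b _)) u.2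
  have h19 := (pand (pand (hneg _ hconj) hρ) hσ).mp
    (.a19 (osMec K i v.1) c (isDC_dle _) (isDC_dge _))
  have hvu : LAEPCProv T Δ (.gi (osMec K i v.1) c (osMec K i u.1)) :=
    gtransc1 h19 (.a16 (isOneSortedMecP_osMec i u.1))
  have part1 : (c : ℝ) ≤ (cwS hneg u v : ℝ) :=
    (le_cwS_iff hneg).2 (prov_eps_symm hcon hneg v u hvu)
  -- εv ⤳c εw
  have hρ2 : LAEPCProv T Δ (.gi (osMec K i v.1) c (osMec K i w.1).dle) :=
    gweak (vle_one c) (gtrans11 (.a12a _) h2)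
  have hσ2 : LAEPCProv T Δ (.gi (osMec K i v.1) c (osMec K i w.1).dge) :=
    gtrans1c (gtrans11 (.a12b _) dge1) (hc.mp (.a17b _ _ c))
  have hconj2 : ECon Δ ((osMec K i w.1).dle.and (osMec K i w.1).dge) :=
    econ_mono (gconj1 (.a12a _) (.a12b _)) w.2
  have h19b := (pand (pand (hneg _ hconj2) hρ2) hσ2).mp
    (.a19 (osMec K i v.1) c (isDC_dle _) (isDC_dge _))
  have hvw : LAEPCProv T Δ (.gi (osMec K i v.1) c (osMec K i w.1)) :=
    gtransc1 h19b (.a16 (isOneSortedMecP_osMec i w.1))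
  have part2 : (c : ℝ) ≤ (cwS hneg v w : ℝ) := (le_cwS_iff hneg).2 hvw
  exact le_min part1 part2

/-- The canonical totally ordered similarity space of sort `i`. -/
noncomputable def canTOS (hcon : ¬ LAEPCProv T Δ (FF M N K T))
    (hneg : ∀ Ψ, ¬ LAEPCProv T Δ Ψ → LAEPCProv T Δ Ψ.not) (i : Fin M) :
    @TOSimilaritySpace T (CW Δ i) (cwFintype Δ i) (cw_nonempty Δ hcon i)
      (cwLO hneg i) := by
  letI := cwFintype Δ i
  letI := cw_nonempty Δ hcon i
  letI := cwLO hneg i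
  refine TOSimilaritySpace.mk ⟨cwS hneg, ?_, ?_, ?_⟩ ?_
  · -- eq_one_iff
    intro u x
    constructor
    · intro h
      refine Subtype.ext (eps_eq_of_1 u.2 ((le_cwS_iff hneg).1 ?_))
      rw [h]
    · rintro rfl
      refine Subtype.ext (le_antisymm (vle_one _) ((le_cwS_iff hneg).2 (grefl _)))
  · -- symm
    intro u x
    have h1 : (cwS hneg u x : ℝ) ≤ (cwS hneg x u : ℝ) :=
      (le_cwS_iff hneg).2 (prov_eps_symm hcon hneg u x ((le_cwS_iff hneg).1 (le_refl _)))
    have h2 : (cwS hneg x u : ℝ) ≤ (cwS hneg u x : ℝ) :=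
      (le_cwS_iff hneg).2 (prov_eps_symm hcon hneg x u ((le_cwS_iff hneg).1 (le_refl _)))
    exact Subtype.ext (le_antisymm h1 h2)
  · -- triangle
    intro u v w
    have huv : LAEPCProv T Δ (.gi (osMec K i u.1) (cwS hneg u v) (osMec K i v.1)) :=
      (le_cwS_iff hneg).1 (le_refl _)
    have hvw : LAEPCProv T Δ (.gi (osMec K i v.1) (cwS hneg v w) (osMec K i w.1)) :=
      (le_cwS_iff hneg).1 (le_refl _)
    exact (le_cwS_iff hneg).2 ((pand huv hvw).mp (.a9 _ _ _ _ _))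
  · -- compat
    intro u v w h1 h2
    exact cw_compat hcon hneg u v w ((cwLO_le_iff hneg u v).1 h1)
      ((cwLO_le_iff hneg v w).1 h2)

/-! ### The canonical evaluation -/

/-- Pattern of a canonical world. -/
def cpat (w : ∀ i, CW Δ i) : Patt M N := fun p => (w p.1).1 p.2

lemma gof_cpat (w : ∀ i, CW Δ i) (i : Fin M) : gof (cpat w) i = (w i).1 := rfl

theorem con_cmec (hcon : ¬ LAEPCProv T Δ (FF M N K T))
    (hneg : ∀ Ψ, ¬ LAEPCProv T Δ Ψ → LAEPCProv T Δ Ψ.not) (w : ∀ i, CW Δ i) :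
    ECon Δ (mecOf K (cpat w)) :=
  econ_mec_of_parts hcon hneg _ fun i => (w i).2

/-- The canonical evaluation function. -/
def ce (Δ : Set (PFml M N K T.V)) (φ : PExp M N K) : Set (∀ i, CW Δ i) :=
  {w | LAEPCProv T Δ (.gi (mecOf K (cpat w)) T.one φ)}

/-- The canonical world with a given consistent pattern. -/
def wOf (g : Patt M N) (hg : ECon Δ (mecOf K g)) : ∀ i, CW Δ i :=
  fun i => ⟨gof g i, econ_parts_of_mec hg i⟩

lemma cpat_wOf (g : Patt M N) (hg : ECon Δ (mecOf K g)) : cpat (wOf g hg) = g := by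
  funext p
  cases p with
  | mk a b => rfl

theorem ce_svar (hcon : ¬ LAEPCProv T Δ (FF M N K T))
    (hneg : ∀ Ψ, ¬ LAEPCProv T Δ Ψ → LAEPCProv T Δ Ψ.not)
    {w : ∀ i, CW Δ i} {i : Fin M} {j : Fin (N i)} :
    w ∈ ce Δ (.svar i j) ↔ (w i).1 j = true := by
  constructor
  · intro h
    by_contra hb
    have hb' : cpat w ⟨i, j⟩ = false := by
      cases hx : (w i).1 j
      · exact hx
      · exact absurd hx hb
    have hnot : LAEPCProv T Δ (.gi (mecOf K (cpat w)) T.one (PExp.svar i j).not) :=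
      gtaut fun v hv => by
        have hvv := (evalB_mecOf v (cpat w)).1 hv ⟨i, j⟩
        rw [hb'] at hvv
        simp [evalB, hvv]
    refine con_cmec hcon hneg w (gtrans11 (gconj1 h hnot) (gtaut fun v hv => ?_))
    simp only [evalB, Bool.and_eq_true, Bool.not_eq_true'] at hv
    exact (Bool.false_ne_true (hv.2.symm.trans hv.1)).elim
  · intro h
    refine gtaut fun v hv => ?_
    have := (evalB_mecOf v (cpat w)).1 hv ⟨i, j⟩
    have hc : cpat w ⟨i, j⟩ = true := h
    rw [hc] at this
    exact this

theorem ce_not_of_not (hcon : ¬ LAEPCProv T Δ (FF M N K T))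
    (hneg : ∀ Ψ, ¬ LAEPCProv T Δ Ψ → LAEPCProv T Δ Ψ.not) {w : ∀ i, CW Δ i}
    {φ : PExp M N K} (h : ¬ w ∈ ce Δ φ) : w ∈ ce Δ φ.not := by
  rcases mec_dec hneg (isMecP_mecOf (cpat w)) φ with h' | h'
  · exact absurd h' h
  · exact h'

theorem ce_excl (hcon : ¬ LAEPCProv T Δ (FF M N K T))
    (hneg : ∀ Ψ, ¬ LAEPCProv T Δ Ψ → LAEPCProv T Δ Ψ.not) {w : ∀ i, CW Δ i}
    {φ : PExp M N K} (h1 : w ∈ ce Δ φ) (h2 : w ∈ ce Δ φ.not) : False := by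
  refine con_cmec hcon hneg w (gtrans11 (gconj1 h1 h2) (gtaut fun v hv => ?_))
  simp only [evalB, Bool.and_eq_true, Bool.not_eq_true'] at hv
  exact (Bool.false_ne_true (hv.2.symm.trans hv.1)).elim

end LAEPCAux

namespace LAEPCAux

open PExp PFml

variable {M : ℕ} {N : Fin M → ℕ} {K : ℕ} {T : FiniteTNorm}
variable {Δ : Set (PFml M N K T.V)}

/-- If there are no good m.e.c.s for `φ`, any world in `ce Δ φ.dle` is contradictory. -/
theorem ce_dle_empty_aux (hcon : ¬ LAEPCProv T Δ (FF M N K T))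
    (hneg : ∀ Ψ, ¬ LAEPCProv T Δ Ψ → LAEPCProv T Δ Ψ.not) {φ : PExp M N K}
    (hL : good Δ φ = []) {w : ∀ i, CW Δ i} (hw : w ∈ ce Δ φ.dle) : False := by
  have h0 := nfl1 hneg φ
  rw [hL] at h0
  have h1 : LAEPCProv T Δ (.gi φ T.one .bot) :=
    gtrans11 h0 (gtaut fun v hv => by
      rw [evalB_disjListP] at hv
      simp at hv)
  have h2 : LAEPCProv T Δ (.gi φ.dle T.one .bot) :=
    gtrans11 (h1.mp (.a17a _ _ T.one)) .a14a
  exact con_cmec hcon hneg w (gtrans11 hw h2)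

theorem ce_dle (hM : 0 < M) (hcon : ¬ LAEPCProv T Δ (FF M N K T))
    (hneg : ∀ Ψ, ¬ LAEPCProv T Δ Ψ → LAEPCProv T Δ Ψ.not) (φ : PExp M N K) :
    ce Δ φ.dle = @pDcl M (CW Δ) (fun i => cwLO hneg i) (ce Δ φ) := by
  ext w
  constructor
  · -- hard direction ⊆
    intro hw i
    by_cases hL : good Δ φ = []
    · exact absurd (ce_dle_empty_aux hcon hneg hL hw) (fun h => h)
    · have hne : ((good Δ φ).map fun g => gof g i) ≠ [] := fun h =>
        hL (List.map_eq_nil_iff.1 h)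
      obtain ⟨fm, hfm, hmax⟩ := dle_max hneg _ hne
      have t1 : LAEPCProv T Δ (.gi (disjListP ((good Δ φ).map (mecOf K))) T.one
          (osMec K i fm).dle) := by
        refine gdisj_elim_list fun χ hχ => ?_
        obtain ⟨g, hg, rfl⟩ := List.mem_map.1 hχ
        exact gtrans11 (mec_proj g i) (gtrans11 (.a12a _)
          (hmax (gof g i) (List.mem_map_of_mem hg)))
      have t2 : LAEPCProv T Δ (.gi (disjListP ((good Δ φ).map (mecOf K))).dle T.one
          (osMec K i fm).dle) :=
        gtrans11 (t1.mp (.a17a _ _ T.one)) (.a13a _)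
      have hstep : LAEPCProv T Δ (.gi (mecOf K (cpat w)) T.one (osMec K i fm).dle) :=
        gtrans11 hw (gtrans11 ((nfl1 hneg φ).mp (.a17a _ _ T.one)) t2)
      obtain ⟨g, hgL, rfl⟩ := List.mem_map.1 hfm
      have hgood := mem_good.1 hgL
      have hconpair : ECon Δ ((osMec K i (w i).1).and (osMec K i (gof g i)).dle) :=
        econ_mono (gconj1 (mec_proj (cpat w) i) hstep) (con_cmec hcon hneg w)
      have hle : cwLe (w i) (⟨gof g i, econ_parts_of_mec hgood.2 i⟩ : CW Δ i) :=
        con_to_dle hneg (w i).2 hconpair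
      refine ⟨wOf g hgood.2, ?_, ?_⟩
      · show LAEPCProv T Δ (.gi (mecOf K (cpat (wOf g hgood.2))) T.one φ)
        rw [cpat_wOf]
        exact hgood.1
      · exact (cwLO_le_iff hneg _ _).2 hle
  · -- easy direction ⊇
    intro hw
    refine mec_dec_of_con hneg (isMecP_mecOf _) ?_
    refine con_mec_dle hM hneg (cpat w) φ fun i => ?_
    obtain ⟨v, hv, hle⟩ := hw i
    have hle' : cwLe (w i) (v i) := (cwLO_le_iff hneg _ _).1 hle
    have hdge : LAEPCProv T Δ (.gi (osMec K i (v i).1).dge T.one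
        (osMec K i (w i).1).dge) := dle_to_dge hneg (w i).2 hle'
    have step1 : LAEPCProv T Δ (.gi (mecOf K (cpat v)) T.one
        ((osMec K i (w i).1).dge.and φ.dle)) := by
      refine gconj1 ?_ ?_
      · exact gtrans11 (mec_proj (cpat v) i) (gtrans11 (.a12b _) hdge)
      · exact gtrans11 (.a12a _) (hv.mp (.a17a _ _ T.one))
    exact a18a_con (econ_mono step1 (con_cmec hcon hneg v))

theorem ce_dge_empty_aux (hcon : ¬ LAEPCProv T Δ (FF M N K T))
    (hneg : ∀ Ψ, ¬ LAEPCProv T Δ Ψ → LAEPCProv T Δ Ψ.not) {φ : PExp M N K}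
    (hL : good Δ φ = []) {w : ∀ i, CW Δ i} (hw : w ∈ ce Δ φ.dge) : False := by
  have h0 := nfl1 hneg φ
  rw [hL] at h0
  have h1 : LAEPCProv T Δ (.gi φ T.one .bot) :=
    gtrans11 h0 (gtaut fun v hv => by
      rw [evalB_disjListP] at hv
      simp at hv)
  have h2 : LAEPCProv T Δ (.gi φ.dge T.one .bot) :=
    gtrans11 (h1.mp (.a17b _ _ T.one)) .a14b
  exact con_cmec hcon hneg w (gtrans11 hw h2)

theorem ce_dge (hM : 0 < M) (hcon : ¬ LAEPCProv T Δ (FF M N K T))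
    (hneg : ∀ Ψ, ¬ LAEPCProv T Δ Ψ → LAEPCProv T Δ Ψ.not) (φ : PExp M N K) :
    ce Δ φ.dge = @pUcl M (CW Δ) (fun i => cwLO hneg i) (ce Δ φ) := by
  ext w
  constructor
  · intro hw i
    by_cases hL : good Δ φ = []
    · exact absurd (ce_dge_empty_aux hcon hneg hL hw) (fun h => h)
    · have hne : ((good Δ φ).map fun g => gof g i) ≠ [] := fun h =>
        hL (List.map_eq_nil_iff.1 h)
      obtain ⟨fm, hfm, hmax⟩ := dge_max hneg _ hne
      have t1 : LAEPCProv T Δ (.gi (disjListP ((good Δ φ).map (mecOf K))) T.one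
          (osMec K i fm).dge) := by
        refine gdisj_elim_list fun χ hχ => ?_
        obtain ⟨g, hg, rfl⟩ := List.mem_map.1 hχ
        exact gtrans11 (mec_proj g i) (gtrans11 (.a12b _)
          (hmax (gof g i) (List.mem_map_of_mem hg)))
      have t2 : LAEPCProv T Δ (.gi (disjListP ((good Δ φ).map (mecOf K))).dge T.one
          (osMec K i fm).dge) :=
        gtrans11 (t1.mp (.a17b _ _ T.one)) (.a13b _)
      have hstep : LAEPCProv T Δ (.gi (mecOf K (cpat w)) T.one (osMec K i fm).dge) :=
        gtrans11 hw (gtrans11 ((nfl1 hneg φ).mp (.a17b _ _ T.one)) t2)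
      obtain ⟨g, hgL, rfl⟩ := List.mem_map.1 hfm
      have hgood := mem_good.1 hgL
      have hconpair : ECon Δ ((osMec K i (w i).1).and (osMec K i (gof g i)).dge) :=
        econ_mono (gconj1 (mec_proj (cpat w) i) hstep) (con_cmec hcon hneg w)
      have hdge : LAEPCProv T Δ (.gi (osMec K i (w i).1).dge T.one
          (osMec K i (gof g i)).dge) := con_to_dge hneg (w i).2 hconpair
      have hle : cwLe (⟨gof g i, econ_parts_of_mec hgood.2 i⟩ : CW Δ i) (w i) :=
        dge_to_dle hneg (w i).2 hdge
      refine ⟨wOf g hgood.2, ?_, ?_⟩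
      · show LAEPCProv T Δ (.gi (mecOf K (cpat (wOf g hgood.2))) T.one φ)
        rw [cpat_wOf]
        exact hgood.1
      · exact (cwLO_le_iff hneg _ _).2 hle
  · intro hw
    refine mec_dec_of_con hneg (isMecP_mecOf _) ?_
    refine con_mec_dge hM hneg (cpat w) φ fun i => ?_
    obtain ⟨v, hv, hle⟩ := hw i
    have hle' : cwLe (v i) (w i) := (cwLO_le_iff hneg _ _).1 hle
    have step1 : LAEPCProv T Δ (.gi (mecOf K (cpat v)) T.one
        ((osMec K i (w i).1).dle.and φ.dge)) := by
      refine gconj1 ?_ ?_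
      · exact gtrans11 (mec_proj (cpat v) i) (gtrans11 (.a12a _) hle')
      · exact gtrans11 (.a12b _) (hv.mp (.a17b _ _ T.one))
    exact a18b_con (econ_mono step1 (con_cmec hcon hneg v))

end LAEPCAux

namespace LAEPCAux

open PExp PFml

variable {M : ℕ} {N : Fin M → ℕ} {K : ℕ} {T : FiniteTNorm}
variable {Δ : Set (PFml M N K T.V)}

/-- The canonical evaluation. -/
noncomputable def canEval (hM : 0 < M) (hcon : ¬ LAEPCProv T Δ (FF M N K T))
    (hneg : ∀ Ψ, ¬ LAEPCProv T Δ Ψ → LAEPCProv T Δ Ψ.not) :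
    @LAEPCEval M N K (CW Δ) (fun i => cwFintype Δ i) (fun i => cw_nonempty Δ hcon i)
      (fun i => cwLO hneg i) := by
  letI : ∀ i, Fintype (CW Δ i) := fun i => cwFintype Δ i
  letI : ∀ i, Nonempty (CW Δ i) := fun i => cw_nonempty Δ hcon i
  letI : ∀ i, LinearOrder (CW Δ i) := fun i => cwLO hneg i
  refine LAEPCEval.mk (ce Δ) ?map_bot ?map_top ?map_and ?map_or ?map_not ?map_dle
    ?map_dge ?svar_cyl ?uvar_alg ?separating
  case map_bot =>
    exact Set.eq_empty_iff_forall_notMem.2 fun w h => con_cmec hcon hneg w h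
  case map_top =>
    exact Set.eq_univ_of_forall fun w => gtaut fun v _ => rfl
  case map_and =>
    intro φ ψ
    ext w
    constructor
    · intro h
      constructor
      · exact gtrans11 h (gtaut fun v hv => by
          simp only [evalB, Bool.and_eq_true] at hv
          exact hv.1)
      · exact gtrans11 h (gtaut fun v hv => by
          simp only [evalB, Bool.and_eq_true] at hv
          exact hv.2)
    · rintro ⟨h1, h2⟩
      exact gconj1 h1 h2
  case map_or =>
    intro φ ψ
    ext w
    constructor
    · intro h
      rcases (tv_or_iff hneg).1 (h.mp (.a8 φ ψ T.one (isMecP_mecOf _))) with h1 | h1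
      · exact Or.inl h1
      · exact Or.inr h1
    · rintro (h | h)
      · exact gtrans11 h (gtaut fun v hv => by simp [evalB, hv])
      · exact gtrans11 h (gtaut fun v hv => by simp [evalB, hv])
  case map_not =>
    intro φ
    ext w
    constructor
    · exact fun h h2 => ce_excl hcon hneg h2 h
    · exact fun h => ce_not_of_not hcon hneg h
  case map_dle => exact fun φ => ce_dle hM hcon hneg φ
  case map_dge => exact fun φ => ce_dge hM hcon hneg φ
  case svar_cyl =>
    intro i j
    refine ⟨{u : CW Δ i | u.1 j = true}, ?_⟩
    ext w
    exact ce_svar hcon hneg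
  case uvar_alg =>
    intro k
    refine ⟨{g | ∃ w' : ∀ i, CW Δ i, cpat w' = g ∧
      LAEPCProv T Δ (.gi (mecOf K (cpat w')) T.one (.uvar k))}, ?_⟩
    ext w
    constructor
    · intro h
      refine Set.mem_iUnion₂.2 ⟨cpat w, ⟨w, rfl, h⟩, Set.mem_iInter.2 fun p => ?_⟩
      cases hgp : cpat w p
      · simp only [hgp, Bool.false_eq_true, if_false, Set.mem_compl_iff]
        intro hmem
        have := ce_svar hcon hneg (w := w) (i := p.1) (j := p.2) |>.1 hmem
        have hgp' : (w p.1).1 p.2 = false := hgp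
        rw [hgp'] at this
        cases this
      · simp only [hgp, if_true]
        exact ce_svar hcon hneg |>.2 hgp
    · intro h
      obtain ⟨g, hG, hint⟩ := Set.mem_iUnion₂.1 h
      have hpat : cpat w = g := by
        funext p
        have hp := Set.mem_iInter.1 hint p
        cases hgp : g p
        · rw [hgp] at hp
          simp only [Bool.false_eq_true, if_false, Set.mem_compl_iff] at hp
          show (w p.1).1 p.2 = false
          cases hx : (w p.1).1 p.2
          · rfl
          · exact absurd (ce_svar hcon hneg |>.2 hx) hp
        · rw [hgp] at hp
          simp only [if_true] at hp
          exact ce_svar hcon hneg |>.1 hp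
      obtain ⟨w', hw', hprov⟩ := hG
      have hww : w' = w := by
        funext i
        refine Subtype.ext ?_
        funext j
        exact congrFun (hw'.trans hpat.symm) ⟨i, j⟩
      rw [hww] at hprov
      exact hprov
  case separating =>
    intro v w hvw
    have h1 : ∃ i, v i ≠ w i := by
      by_contra h
      push_neg at h
      exact hvw (funext h)
    obtain ⟨i, hi⟩ := h1
    have h2 : ∃ j, (v i).1 j ≠ (w i).1 j := by
      by_contra h
      push_neg at h
      exact hi (Subtype.ext (funext h))
    obtain ⟨j, hj⟩ := h2
    refine Or.inl ⟨i, j, ?_⟩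
    cases hx : (v i).1 j <;> cases hy : (w i).1 j
    · exact absurd (hx.trans hy.symm) hj
    · refine Or.inr ⟨ce_svar hcon hneg |>.2 hy, fun hm => ?_⟩
      have := ce_svar hcon hneg |>.1 hm
      rw [hx] at this
      cases this
    · refine Or.inl ⟨ce_svar hcon hneg |>.2 hx, fun hm => ?_⟩
      have := ce_svar hcon hneg |>.1 hm
      rw [hy] at this
      cases this
    · exact absurd (hx.trans hy.symm) hj

/-- Graded-implication truth lemma for the canonical model. -/
theorem can_gi_iff (hM : 0 < M) (hcon : ¬ LAEPCProv T Δ (FF M N K T))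
    (hneg : ∀ Ψ, ¬ LAEPCProv T Δ Ψ → LAEPCProv T Δ Ψ.not)
    (φ ψ : PExp M N K) (c : T.V) :
    ce Δ φ ⊆ @pNbhd T M (CW Δ) (fun i => cwFintype Δ i)
        (fun i => cw_nonempty Δ hcon i) (fun i => cwLO hneg i) hM
        (fun i => canTOS hcon hneg i) c (ce Δ ψ) ↔
      LAEPCProv T Δ (.gi φ c ψ) := by
  letI : ∀ i, Fintype (CW Δ i) := fun i => cwFintype Δ i
  letI : ∀ i, Nonempty (CW Δ i) := fun i => cw_nonempty Δ hcon i
  letI : ∀ i, LinearOrder (CW Δ i) := fun i => cwLO hneg i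
  have hS_iff : ∀ w a : ∀ i, CW Δ i,
      ((c : ℝ) ≤ (prodS hM (fun i => canTOS hcon hneg i) w a : ℝ)) ↔
      ∀ j, LAEPCProv T Δ (.gi (osMec K j (w j).1) c (osMec K j (a j).1)) := by
    intro w a
    rw [le_prodS_iff hM]
    constructor
    · intro h j
      exact (le_cwS_iff hneg).1 (h j)
    · intro h j
      exact (le_cwS_iff hneg).2 (h j)
  have full_iff : ∀ w a : ∀ i, CW Δ i,
      LAEPCProv T Δ (.gi (mecOf K (cpat w)) c (mecOf K (cpat a))) ↔
      ∀ j, LAEPCProv T Δ (.gi (osMec K j (w j).1) c (osMec K j (a j).1)) :=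
    fun w a => a20iter hcon hneg (g := cpat w) (h := cpat a)
      (fun j => (w j).2) (fun j => (a j).2) c
  constructor
  · intro hsub
    by_contra hnp
    have hnotall : ¬ ∀ g ∈ good Δ φ, LAEPCProv T Δ (.gi (mecOf K g) c ψ) := by
      intro hall
      refine hnp (gtrans1c (nfl1 hneg φ) (gdisj_elim_list fun χ hχ => ?_))
      obtain ⟨g, hg, rfl⟩ := List.mem_map.1 hχ
      exact hall g hg
    push_neg at hnotall
    obtain ⟨g, hgL, hgnp⟩ := hnotall
    have hgood := mem_good.1 hgL
    have hwmem : wOf g hgood.2 ∈ ce Δ φ := by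
      show LAEPCProv T Δ (.gi (mecOf K (cpat (wOf g hgood.2))) T.one φ)
      rw [cpat_wOf]
      exact hgood.1
    obtain ⟨a, ha, hS⟩ := hsub hwmem
    have hj := (hS_iff _ a).1 hS
    have hfull := (full_iff _ a).2 hj
    rw [cpat_wOf] at hfull
    exact hgnp (gtransc1 hfull ha)
  · intro hp w hw
    have h1 : LAEPCProv T Δ (.gi (mecOf K (cpat w)) c ψ) := gtrans1c hw hp
    have h2 : LAEPCProv T Δ (.gi (mecOf K (cpat w)) c
        (disjListP ((good Δ ψ).map (mecOf K)))) := gtransc1 h1 (nfl1 hneg ψ)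
    obtain ⟨χ, hχ, hpk⟩ := gdisj_split hneg (isMecP_mecOf _) (con_cmec hcon hneg w) h2
    obtain ⟨k, hkL, rfl⟩ := List.mem_map.1 hχ
    have hkgood := mem_good.1 hkL
    refine ⟨wOf k hkgood.2, ?_, ?_⟩
    · show LAEPCProv T Δ (.gi (mecOf K (cpat (wOf k hkgood.2))) T.one ψ)
      rw [cpat_wOf]
      exact hkgood.1
    · refine (hS_iff w _).2 ?_
      refine (full_iff w _).1 ?_
      rw [cpat_wOf]
      exact hpk

/-- Full truth lemma for the canonical model. -/
theorem canSat_iff (hM : 0 < M) (hcon : ¬ LAEPCProv T Δ (FF M N K T))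
    (hneg : ∀ Ψ, ¬ LAEPCProv T Δ Ψ → LAEPCProv T Δ Ψ.not) (Ψ : PFml M N K T.V) :
    @LAEPCSat T M N K (CW Δ) (fun i => cwFintype Δ i) (fun i => cw_nonempty Δ hcon i)
        (fun i => cwLO hneg i) hM (fun i => canTOS hcon hneg i)
        (canEval hM hcon hneg) Ψ ↔ LAEPCProv T Δ Ψ := by
  letI : ∀ i, Fintype (CW Δ i) := fun i => cwFintype Δ i
  letI : ∀ i, Nonempty (CW Δ i) := fun i => cw_nonempty Δ hcon i
  letI : ∀ i, LinearOrder (CW Δ i) := fun i => cwLO hneg i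
  induction Ψ with
  | gi φ c ψ =>
      have h := can_gi_iff hM hcon hneg φ ψ c
      have he : (canEval hM hcon hneg (Δ := Δ)).e = ce Δ := rfl
      show (canEval hM hcon hneg).e φ ⊆
        pNbhd hM (fun i => canTOS hcon hneg i) c ((canEval hM hcon hneg).e ψ) ↔ _
      rw [he]
      exact h
  | and Φ₁ Φ₂ ih1 ih2 => exact (and_congr ih1 ih2).trans tv_and_iff.symm
  | or Φ₁ Φ₂ ih1 ih2 => exact (or_congr ih1 ih2).trans (tv_or_iff hneg).symm
  | not Φ₁ ih => exact (not_congr ih).trans (tv_not_iff hcon hneg).symm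

end LAEPCAux

theorem LAEPC_soundness_and_completeness' {M : ℕ} {N : Fin M → ℕ} {K : ℕ} (hM : 0 < M)
    (T : FiniteTNorm) (Th : Set (PFml M N K T.V)) (Φ : PFml M N K T.V) :
    LAEPCProv T Th Φ ↔ LAEPCEntails hM T Th Φ := by
  classical
  constructor
  · intro h W _ _ _ sps ev hTh
    exact LAEPCAux.soundness hM sps ev h hTh
  · intro hent
    by_contra hnp
    have hcon' : ¬ LAEPCProv T (insert Φ.not Th) (LAEPCAux.FF M N K T) := by
      intro h
      have hd := LAEPCAux.deduction h
      refine hnp (LAEPCAux.pl2 (fun g p1 p2 => ?_) hd (LAEPCProv.a10 (Th := Th)))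
      rw [LAEPCAux.peval_imp] at p1
      simp only [PFml.peval, LAEPCAux.FF] at p1 p2 ⊢
      cases hx : Φ.peval g <;> cases hy : g PExp.top T.one PExp.bot <;>
        simp_all
    obtain ⟨Δ, hsubΔ, hconΔ, hnegΔ⟩ := LAEPCAux.lindenbaum hcon'
    letI : ∀ i, Fintype (LAEPCAux.CW Δ i) := fun i => LAEPCAux.cwFintype Δ i
    letI : ∀ i, Nonempty (LAEPCAux.CW Δ i) := fun i => LAEPCAux.cw_nonempty Δ hconΔ i
    letI : ∀ i, LinearOrder (LAEPCAux.CW Δ i) := fun i => LAEPCAux.cwLO hnegΔ i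
    have hsat := hent (LAEPCAux.CW Δ) (fun i => LAEPCAux.canTOS hconΔ hnegΔ i)
      (LAEPCAux.canEval hM hconΔ hnegΔ)
      (fun Ψ hΨ => (LAEPCAux.canSat_iff hM hconΔ hnegΔ Ψ).2
        (.hyp (hsubΔ (Set.mem_insert_of_mem _ hΨ))))
    have hprovΦ : LAEPCProv T Δ Φ := (LAEPCAux.canSat_iff hM hconΔ hnegΔ Φ).1 hsat
    have hprovnΦ : LAEPCProv T Δ Φ.not := .hyp (hsubΔ (Set.mem_insert _ _))
    exact (LAEPCAux.tv_not_iff hconΔ hnegΔ).1 hprovnΦ hprovΦ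

/-- Soundness and completeness of the Logic of Approximate Entailment on
Products of Chains: `T ⊢_LAEPC Φ` iff `T ⊨_LAEPC Φ`. -/
theorem LAEPC_soundness_and_completeness {M : ℕ} {N : Fin M → ℕ} {K : ℕ} (hM : 0 < M)
    (T : FiniteTNorm) (Th : Set (PFml M N K T.V)) (Φ : PFml M N K T.V) :
    LAEPCProv T Th Φ ↔ LAEPCEntails hM T Th Φ := by
  exact LAEPC_soundness_and_completeness' hM T Th Φ
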